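/- arXiv:2110.08040 — 3 statements merged into one kernel-verified Lean document; each statement's English description precedes it below -/
import Mathlib

section
/- Assume conditions (M), (O), (R), (P). Then the family ℋ of hereditary subsets of Cm is closed under the equivalence operation ↔ of the Heyting algebra of upward closed subsets of Cm: if S, T ∈ ℋ then S ↔ T = Cm \ ((S Δ T)↓) ∈ ℋ. (This is Theorem 21 of the paper.) -/
variable {A : Type*}

/-- `η` is a completely meet irreducible member of `C`, with (unique) cover `p` in `C`. -/
def IsCMI (C : Set (Setoid A)) (η p : Setoid A) : Prop :=
  η ∈ C ∧ p ∈ C ∧ η < p ∧ ∀ β ∈ C, η < β → p ≤ β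

/-- A single up or down transposition between the intervals `I[pq.1, pq.2]`
and `I[rs.1, rs.2]` of `C`. -/
def Persp (C : Set (Setoid A)) (pq rs : Setoid A × Setoid A) : Prop :=
  pq.1 ∈ C ∧ pq.2 ∈ C ∧ rs.1 ∈ C ∧ rs.2 ∈ C ∧
    ((pq.1 = pq.2 ⊓ rs.1 ∧ rs.2 = pq.2 ⊔ rs.1) ∨
      (rs.1 = rs.2 ⊓ pq.1 ∧ pq.2 = rs.2 ⊔ pq.1))

/-- Projectivity of intervals of `C`: a finite chain of up and down transpositions. -/
def Projective (C : Set (Setoid A)) : Setoid A × Setoid A → Setoid A × Setoid A → Prop :=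
  Relation.ReflTransGen (Persp C)

/-- Prime interval projectivity `φ ∼ ψ`: the prime intervals `I[φ,φ⁺]` and `I[ψ,ψ⁺]`
over completely meet irreducible members of `C` are projective. -/
def PIP (C : Set (Setoid A)) (φ ψ : Setoid A) : Prop :=
  ∃ p q, IsCMI C φ p ∧ IsCMI C ψ q ∧ Projective C (φ, p) (ψ, q)

/-- `Θ(a,b)`: the least member of `C` containing the pair `(a, b)`. -/
def theta (C : Set (Setoid A)) (a b : A) : Setoid A :=
  sInf {s | s ∈ C ∧ s.r a b}

/-- The relation `φ • ψ`: the pairs of `p = φ⁺ = ψ⁺` on which `φ` and `ψ` agree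
(the complement of the symmetric difference of `φ` and `ψ` intersected with `p`). -/
def Bul (p φ ψ : Setoid A) (x y : A) : Prop :=
  p.r x y ∧ (φ.r x y ↔ ψ.r x y)

/-- The set of completely meet irreducible members of `C`. -/
def CmSet (C : Set (Setoid A)) : Set (Setoid A) := {μ | ∃ p, IsCMI C μ p}

/-- `M(a) = {μ ∈ Cm : (1,a) ∈ μ}`. -/
def MsetA (C : Set (Setoid A)) (one a : A) : Set (Setoid A) :=
  {μ | μ ∈ CmSet C ∧ μ.r one a}

/-- The downward closure `X↓` of `X` inside the poset `Cm`. -/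
def DownCl (C : Set (Setoid A)) (X : Set (Setoid A)) : Set (Setoid A) :=
  {μ | μ ∈ CmSet C ∧ ∃ φ ∈ X, μ ≤ φ}

/-- The equivalence operation `S ↔ T := Cm \ ((S Δ T)↓)` of the Heyting algebra of
upward closed subsets of `Cm`. -/
def EqOpU (C : Set (Setoid A)) (S T : Set (Setoid A)) : Set (Setoid A) :=
  CmSet C \ DownCl C ((S \ T) ∪ (T \ S))

/-- `H` is a subgroup of the Boolean group `(Ū, •)`, where `U` is the PIP class of `η`
and `η⁺ = p`: `H` is a subset of `Ū = U ∪ {p}` containing the unit `p` and closed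
under `•`. -/
def SubgrpU (C : Set (Setoid A)) (η p : Setoid A) (H : Set (Setoid A)) : Prop :=
  H ⊆ {φ | PIP C φ η} ∪ {p} ∧ p ∈ H ∧
    ∀ φ ∈ H, ∀ ψ ∈ H, ∃ σ ∈ H, σ.r = Bul p φ ψ

/-- `H` is a hyperplane (maximal proper subgroup) of the Boolean group `(Ū, •)`. -/
def IsHyperplaneU (C : Set (Setoid A)) (η p : Setoid A) (H : Set (Setoid A)) : Prop :=
  SubgrpU C η p H ∧ H ≠ {φ | PIP C φ η} ∪ {p} ∧
    ∀ K, SubgrpU C η p K → H ⊆ K → K = H ∨ K = {φ | PIP C φ η} ∪ {p}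

/-- `Z ⊆ Cm` is hereditary: it is upward closed in `Cm`, and for every PIP class `U`
with `U⁺ ⊆ Z`, the set `(Z ∩ U) ∪ {η⁺}` is either all of `Ū` or a hyperplane of the
Boolean group `(Ū, •)`. -/
def Hered (C : Set (Setoid A)) (Z : Set (Setoid A)) : Prop :=
  (∀ μ ∈ Z, ∃ p, IsCMI C μ p) ∧
  (∀ μ ∈ Z, ∀ ν p, IsCMI C ν p → μ ≤ ν → ν ∈ Z) ∧
  ∀ η p, IsCMI C η p → {θ | (∃ q, IsCMI C θ q) ∧ η < θ} ⊆ Z →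
    (Z ∩ {φ | PIP C φ η} ∪ {p} = {φ | PIP C φ η} ∪ {p} ∨
      IsHyperplaneU C η p (Z ∩ {φ | PIP C φ η} ∪ {p}))
section Aux
variable {A : Type*}

/-- Bundle of the standing hypotheses. -/
structure Hyp (one : A) (C : Set (Setoid A)) : Prop where
  hInf : ∀ S ⊆ C, sInf S ∈ C
  hSup : ∀ S ⊆ C, sSup S ∈ C
  hDir : ∀ D ⊆ C, D.Nonempty → DirectedOn (· ≤ ·) D →
      ∀ x y : A, (sSup D).r x y ↔ ∃ s ∈ D, s.r x y
  hM : ∀ x ∈ C, ∀ y ∈ C, ∀ z ∈ C, x ≤ z → x ⊔ y ⊓ z = (x ⊔ y) ⊓ z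
  hO : ∀ α ∈ C, ∀ a b : A, α ⊔ theta C one a = α ⊔ theta C one b ↔ α.r a b
  hR : ∀ α ∈ C, ∀ β ∈ C, (∀ x : A, α.r one x ↔ β.r one x) → α = β
  hP : ∀ φ ψ p q : Setoid A, IsCMI C φ p → IsCMI C ψ q →
      Projective C (φ, p) (ψ, q) → p = q

/-- cover relation inside C -/
def CovC (C : Set (Setoid A)) (a b : Setoid A) : Prop :=
  a ∈ C ∧ b ∈ C ∧ a < b ∧ ∀ c ∈ C, a < c → c ≤ b → c = b

namespace Hyp

variable {one : A} {C : Set (Setoid A)} (h : Hyp one C)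
include h

section Basic

theorem memJoin {a b : Setoid A} (ha : a ∈ C) (hb : b ∈ C) : a ⊔ b ∈ C := by
  have := h.hSup {a, b} (by intro x hx; rcases hx with rfl | rfl <;> assumption)
  rwa [sSup_pair] at this

theorem memMeet {a b : Setoid A} (ha : a ∈ C) (hb : b ∈ C) : a ⊓ b ∈ C := by
  have := h.hInf {a, b} (by intro x hx; rcases hx with rfl | rfl <;> assumption)
  rwa [sInf_pair] at this

theorem thetaMem (a b : A) : theta C a b ∈ C :=
  h.hInf _ (fun s hs => hs.1)

theorem thetaRel (a b : A) : (theta C a b).r a b :=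
  fun s hs => hs.2

theorem thetaLe {s : Setoid A} (hs : s ∈ C) {a b : A} (hr : s.r a b) :
    theta C a b ≤ s := sInf_le ⟨hs, hr⟩

/-- `(x,y) ∈ α` implies `θy ≤ α ⊔ θx`. -/
theorem thetaLeJoin {α : Setoid A} (hα : α ∈ C) {x y : A} (hr : α.r x y) :
    theta C one y ≤ α ⊔ theta C one x := by
  have := (h.hO α hα x y).2 hr
  rw [this]; exact le_sup_right

theorem relOfJoinEq {α : Setoid A} (hα : α ∈ C) {x y : A}
    (he : α ⊔ theta C one x = α ⊔ theta C one y) : α.r x y :=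
  (h.hO α hα x y).1 he

/-- extract a witness at `one` from a strict inclusion -/
theorem exWit {α β : Setoid A} (hα : α ∈ C) (hβ : β ∈ C) (hle : α ≤ β)
    (hne : α ≠ β) : ∃ w, β.r one w ∧ ¬ α.r one w := by
  by_contra hcon
  push_neg at hcon
  exact hne (h.hR α hα β hβ (fun x => ⟨fun hx => hle hx, fun hx => by
    by_contra hbad; exact hbad (hcon x hx)⟩))

theorem covTheta {a b : Setoid A} (hc : CovC C a b) {u v : A}
    (hb : b.r u v) (hna : ¬ a.r u v) : a ⊔ theta C u v = b := by
  obtain ⟨haC, hbC, hab, hmax⟩ := hc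
  have hj : a ⊔ theta C u v ∈ C := h.memJoin haC (h.thetaMem u v)
  have h1 : a ⊔ theta C u v ≤ b := sup_le hab.le (h.thetaLe hbC hb)
  have h2 : a < a ⊔ theta C u v := by
    refine lt_of_le_of_ne le_sup_left (fun he => ?_)
    exact hna (he ▸ (le_sup_right : theta C u v ≤ a ⊔ theta C u v) (h.thetaRel u v))
  exact hmax _ hj h2 h1

/-- theta of a pair is below the join of thetas at one -/
theorem thetaPairLe (x y : A) :
    theta C x y ≤ theta C one x ⊔ theta C one y := by
  refine h.thetaLe (h.memJoin (h.thetaMem one x) (h.thetaMem one y)) ?_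
  have hx : (theta C one x ⊔ theta C one y).r one x :=
    le_sup_left (α := Setoid A) (h.thetaRel one x)
  have hy : (theta C one x ⊔ theta C one y).r one y :=
    (le_sup_right : theta C one y ≤ _) (h.thetaRel one y)
  exact Setoid.trans' _ (Setoid.symm' _ hx) hy

end Basic

section L1

/-- Lemma L1: each class of a cover has at most two subclasses. -/
theorem L1 {α β : Setoid A} (hc : CovC C α β) {x y z : A}
    (hxy : β.r x y) (hyz : β.r y z) (nxy : ¬ α.r x y) (nyz : ¬ α.r y z) :
    α.r x z := by
  classical
  by_contra nxz
  have hαC := hc.1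
  have hβC := hc.2.1
  have hαβ := hc.2.2.1
  have hxz : β.r x z := Setoid.trans' _ hxy hyz
  set tx := theta C one x with htx
  set ty := theta C one y with hty
  set tz := theta C one z with htz
  have txC : tx ∈ C := h.thetaMem one x
  have tyC : ty ∈ C := h.thetaMem one y
  have tzC : tz ∈ C := h.thetaMem one z
  -- joins with β agree
  have bxy : β ⊔ tx = β ⊔ ty := (h.hO β hβC x y).2 hxy
  have byz : β ⊔ ty = β ⊔ tz := (h.hO β hβC y z).2 hyz
  have bxz : β ⊔ tx = β ⊔ tz := bxy.trans byz
  -- covers generate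
  have gxy : α ⊔ theta C x y = β := h.covTheta hc hxy nxy
  have gyz : α ⊔ theta C y z = β := h.covTheta hc hyz nyz
  have gxz : α ⊔ theta C x z = β := h.covTheta hc hxz nxz
  have AxC : α ⊔ tx ∈ C := h.memJoin hαC txC
  have AyC : α ⊔ ty ∈ C := h.memJoin hαC tyC
  have key : ∀ u v : A, β.r u v → ¬ α.r u v →
      (α ⊔ theta C one u) ⊔ theta C one v = β ⊔ theta C one u := by
    intro u v huv nuv
    have guv : α ⊔ theta C u v = β := h.covTheta hc huv nuv
    apply le_antisymm
    · refine sup_le (sup_le (hαβ.le.trans le_sup_left) le_sup_right) ?_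
      have : theta C one v ≤ β ⊔ theta C one v := le_sup_right
      rwa [← (h.hO β hβC u v).2 huv] at this
    · refine sup_le ?_ (le_sup_right.trans le_sup_left)
      rw [← guv]
      refine sup_le (le_sup_left.trans le_sup_left) ?_
      exact (h.thetaPairLe u v).trans
        (sup_le (le_sup_right.trans le_sup_left) le_sup_right)
  -- A_x ⊔ θy = β ⊔ θx = A_x ⊔ θz
  have e1 : (α ⊔ tx) ⊔ ty = β ⊔ tx := key x y hxy nxy
  have e2 : (α ⊔ tx) ⊔ tz = β ⊔ tx := by
    have := key x z hxz nxz; exact this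
  have rAx : (α ⊔ tx).r y z := h.relOfJoinEq AxC (e1.trans e2.symm)
  have hβAx : β ≤ α ⊔ tx := by
    rw [← gyz]
    exact sup_le le_sup_left (h.thetaLe AxC rAx)
  have hxy' : α ⊔ ty ≤ α ⊔ tx := by
    refine sup_le le_sup_left ?_
    calc ty ≤ β ⊔ ty := le_sup_right
    _ = β ⊔ tx := bxy.symm
    _ ≤ α ⊔ tx := sup_le hβAx le_sup_right
  -- symmetric direction
  have e3 : (α ⊔ ty) ⊔ tx = β ⊔ ty := by
    have hyx : β.r y x := Setoid.symm' _ hxy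
    have nyx : ¬ α.r y x := fun hh => nxy (Setoid.symm' _ hh)
    exact key y x hyx nyx
  have e4 : (α ⊔ ty) ⊔ tz = β ⊔ ty := key y z hyz nyz
  have rAy : (α ⊔ ty).r x z := h.relOfJoinEq AyC (e3.trans e4.symm)
  have hβAy : β ≤ α ⊔ ty := by
    rw [← gxz]
    exact sup_le le_sup_left (h.thetaLe AyC rAy)
  have hyx' : α ⊔ tx ≤ α ⊔ ty := by
    refine sup_le le_sup_left ?_
    calc tx ≤ β ⊔ tx := le_sup_right
    _ = β ⊔ ty := bxy
    _ ≤ α ⊔ ty := sup_le hβAy le_sup_right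
  exact nxy (h.relOfJoinEq hαC (le_antisymm hyx' hxy'))

end L1

end Hyp
end Aux
section Aux2
variable {A : Type*}

/-- interval `I` transposes up to interval `J` -/
def UpTr (I J : Setoid A × Setoid A) : Prop :=
  I.1 = I.2 ⊓ J.1 ∧ J.2 = I.2 ⊔ J.1

theorem upTrTrans {I J K : Setoid A × Setoid A} (h1 : UpTr I J) (h2 : UpTr J K) :
    UpTr I K := by
  obtain ⟨e1, e2⟩ := h1
  obtain ⟨e3, e4⟩ := h2
  have hd : I.2 ≤ J.2 := by rw [e2]; exact le_sup_left
  have he : J.1 ≤ K.1 := by rw [e3]; exact inf_le_right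
  constructor
  · rw [e1, e3, ← inf_assoc, inf_eq_left.2 hd]
  · rw [e4, e2, sup_assoc, sup_eq_right.2 he]

theorem upTrSelf {a b : Setoid A} (hab : a ≤ b) : UpTr (a, b) (a, b) :=
  ⟨(inf_eq_right.2 hab).symm, (sup_eq_left.2 hab).symm⟩

namespace Hyp
variable {one : A} {C : Set (Setoid A)} (h : Hyp one C)
include h

theorem cmiCov {η p : Setoid A} (hc : IsCMI C η p) : CovC C η p :=
  ⟨hc.1, hc.2.1, hc.2.2.1, fun c hcC hlt hle => le_antisymm hle (hc.2.2.2 c hcC hlt)⟩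

/-- cover transfer along joins -/
theorem covSup {x y z : Setoid A} (hc : CovC C x y) (hz : z ∈ C) :
    x ⊔ z = y ⊔ z ∨ CovC C (x ⊔ z) (y ⊔ z) := by
  obtain ⟨hx, hy, hxy, hmax⟩ := hc
  by_cases hm : y ≤ x ⊔ z
  · left
    exact le_antisymm (sup_le_sup_right hxy.le z) (sup_le hm le_sup_right)
  · right
    refine ⟨h.memJoin hx hz, h.memJoin hy hz, ?_, ?_⟩
    · refine lt_of_le_of_ne (sup_le_sup_right hxy.le z) ?_
      intro he
      apply hm; rw [he]; exact le_sup_left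
    · intro c hcC hlt hle
      by_cases hyc : y ≤ c
      · exact le_antisymm hle (sup_le hyc (le_sup_right.trans hlt.le))
      · exfalso
        have hxc : x ≤ c := le_sup_left.trans hlt.le
        have hwx : y ⊓ c = x := by
          by_contra hne
          have hlt2 : x < y ⊓ c := lt_of_le_of_ne (le_inf hxy.le hxc) (Ne.symm hne)
          have hthis := hmax _ (h.memMeet hy hcC) hlt2 inf_le_left
          exact hyc (by rw [← hthis]; exact inf_le_right)
        have hzc : z ≤ c := le_sup_right.trans hlt.le
        have hmod := h.hM z hz y hy c hcC hzc
        rw [hwx] at hmod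
        have hc2 : c ≤ z ⊔ y := hle.trans (sup_comm y z).le
        rw [inf_eq_right.2 hc2] at hmod
        exact hlt.ne ((sup_comm x z).trans hmod)

/-- cover transfer along meets -/
theorem covInf {x y z : Setoid A} (hc : CovC C x y) (hz : z ∈ C) :
    x ⊓ z = y ⊓ z ∨ CovC C (x ⊓ z) (y ⊓ z) := by
  obtain ⟨hx, hy, hxy, hmax⟩ := hc
  by_cases hyz : y ⊓ z ≤ x
  · left
    exact le_antisymm (inf_le_inf_right z hxy.le) (le_inf hyz inf_le_right)
  · right
    refine ⟨h.memMeet hx hz, h.memMeet hy hz, ?_, ?_⟩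
    · refine lt_of_le_of_ne (inf_le_inf_right z hxy.le) ?_
      intro he
      exact hyz (by rw [← he]; exact inf_le_left)
    · intro c hcC hlt hle
      have hcx : ¬ c ≤ x := fun hcon => hlt.not_ge (le_inf hcon (hle.trans inf_le_right))
      have hw : x ⊔ c = y := by
        refine hmax _ (h.memJoin hx hcC) (lt_of_le_of_ne le_sup_left ?_)
          (sup_le hxy.le (hle.trans inf_le_left))
        intro he
        exact hcx (by rw [he]; exact le_sup_right)
      have hcz : c ≤ z := hle.trans inf_le_right
      have hmod := h.hM c hcC x hx z hz hcz
      rw [sup_eq_left.2 hlt.le, sup_comm c x, hw] at hmod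
      exact hmod

/-- Zorn: maximal elements of `C` above `b` avoiding a pair are CMI. -/
theorem exCMIabove {b : Setoid A} (hb : b ∈ C) {u v : A} (hnb : ¬ b.r u v) :
    ∃ χ, χ ∈ C ∧ b ≤ χ ∧ ¬ χ.r u v ∧ IsCMI C χ (χ ⊔ theta C u v) ∧
      (∀ β ∈ C, χ < β → β.r u v) := by
  have hz := zorn_le_nonempty₀ {c : Setoid A | c ∈ C ∧ b ≤ c ∧ ¬ c.r u v} ?_ b
      ⟨hb, le_rfl, hnb⟩
  · obtain ⟨m, hbm, hms, hmax⟩ := hz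
    have hrelmax : ∀ β ∈ C, m < β → β.r u v := by
      intro β hβ hlt
      by_contra hnrel
      exact hlt.ne (le_antisymm hlt.le (hmax ⟨hβ, hbm.trans hlt.le, hnrel⟩ hlt.le))
    have hcmi : IsCMI C m (m ⊔ theta C u v) := by
      refine ⟨hms.1, h.memJoin hms.1 (h.thetaMem u v), ?_, ?_⟩
      · refine lt_of_le_of_ne le_sup_left ?_
        intro he
        exact hms.2.2 (he ▸ (le_sup_right : theta C u v ≤ _) (h.thetaRel u v))
      · intro β hβ hlt
        exact sup_le hlt.le (h.thetaLe hβ (hrelmax β hβ hlt))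
    exact ⟨m, hms.1, hms.2.1, hms.2.2, hcmi, hrelmax⟩
  · intro c hcs hchain y hy
    refine ⟨sSup c, ⟨h.hSup c (fun t ht => (hcs ht).1), ((hcs hy).2.1).trans (le_sSup hy), ?_⟩,
      fun z hz => le_sSup hz⟩
    rw [h.hDir c (fun t ht => (hcs ht).1) ⟨y, hy⟩ hchain.directedOn u v]
    rintro ⟨s, hs, hrel⟩
    exact (hcs hs).2.2 hrel

/-- the membership fact: cover transfer along UpTr, upwards -/
theorem covUpTr {I J : Setoid A × Setoid A} (hcov : CovC C I.1 I.2)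
    (hJ1 : J.1 ∈ C) (hJ2 : J.2 ∈ C) (ht : UpTr I J) : CovC C J.1 J.2 := by
  obtain ⟨e1, e2⟩ := ht
  obtain ⟨hc1, hc2, hlt, hmax⟩ := hcov
  refine ⟨hJ1, hJ2, ?_, ?_⟩
  · refine lt_of_le_of_ne (by rw [e2]; exact le_sup_right) ?_
    intro he
    have h2le : I.2 ≤ J.1 := by rw [he, e2]; exact le_sup_left
    exact hlt.ne (by rw [e1, inf_eq_left.2 h2le])
  · intro g hgC hglt hgle
    have hgd : I.2 ⊓ g ∈ C := h.memMeet hc2 hgC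
    have hcle : I.1 ≤ I.2 ⊓ g := by rw [e1]; exact inf_le_inf_left _ hglt.le
    rcases lt_or_eq_of_le hcle with hlt2 | heq
    · have hd : I.2 ⊓ g = I.2 := hmax _ hgd hlt2 inf_le_left
      have hdg : I.2 ≤ g := by rw [← hd]; exact inf_le_right
      refine le_antisymm hgle ?_
      rw [e2]; exact sup_le hdg hglt.le
    · exfalso
      have hmod := h.hM J.1 hJ1 I.2 hc2 g hgC hglt.le
      have hI1J : I.1 ≤ J.1 := by rw [e1]; exact inf_le_right
      rw [← heq, sup_eq_left.2 hI1J, sup_comm J.1 I.2, ← e2, inf_eq_right.2 hgle] at hmod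
      exact hglt.ne hmod

end Hyp
end Aux2
section Aux3
variable {A : Type*}

theorem perspSymm {C : Set (Setoid A)} {I J : Setoid A × Setoid A}
    (hp : Persp C I J) : Persp C J I := by
  obtain ⟨h1, h2, h3, h4, h5 | h5⟩ := hp
  · exact ⟨h3, h4, h1, h2, Or.inr h5⟩
  · exact ⟨h3, h4, h1, h2, Or.inl h5⟩

theorem projSymm {C : Set (Setoid A)} {I J : Setoid A × Setoid A}
    (hp : Projective C I J) : Projective C J I := by
  induction hp with
  | refl => exact Relation.ReflTransGen.refl
  | tail _ hstep ih => exact Relation.ReflTransGen.head (perspSymm hstep) ih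

theorem pairOfLt {a b : Setoid A} (hab : a < b) :
    ∃ u v, b.r u v ∧ ¬ a.r u v := by
  by_contra hcon
  push_neg at hcon
  exact hab.ne (le_antisymm hab.le (fun u v hr => hcon u v hr))

namespace Hyp
variable {one : A} {C : Set (Setoid A)} (h : Hyp one C)
include h

theorem joinCoatom {φ p ψ : Setoid A} (hc : CovC C φ p) (hψ : ψ ∈ C)
    (hle : ψ ≤ p) (hn : ¬ ψ ≤ φ) : φ ⊔ ψ = p := by
  refine hc.2.2.2 _ (h.memJoin hc.1 hψ) ?_ (sup_le hc.2.2.1.le hle)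
  refine lt_of_le_of_ne le_sup_left fun he => hn ?_
  rw [he]; exact le_sup_right

/-- two distinct coatoms join to the top -/
theorem coatomsSup {φ ψ p : Setoid A} (hcφ : CovC C φ p) (hcψ : CovC C ψ p)
    (hne : φ ≠ ψ) : φ ⊔ ψ = p := by
  refine h.joinCoatom hcφ hcψ.1 hcψ.2.2.1.le (fun hle => ?_)
  rcases lt_or_eq_of_le hle with hlt | heq
  · exact hcφ.2.2.1.ne (hcψ.2.2.2 φ hcφ.1 hlt hcφ.2.2.1.le)
  · exact hne heq.symm

/-- two distinct atoms meet in the bottom -/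
theorem atomsInf {γ τ₁ τ₂ : Setoid A} (hc1 : CovC C γ τ₁) (hc2 : CovC C γ τ₂)
    (hne : τ₁ ≠ τ₂) : τ₁ ⊓ τ₂ = γ := by
  by_contra hcon
  have hlt : γ < τ₁ ⊓ τ₂ :=
    lt_of_le_of_ne (le_inf hc1.2.2.1.le hc2.2.2.1.le) (Ne.symm hcon)
  have h1 : τ₁ ⊓ τ₂ = τ₁ := hc1.2.2.2 _ (h.memMeet hc1.2.1 hc2.2.1) hlt inf_le_left
  have hle : τ₁ ≤ τ₂ := by rw [← h1]; exact inf_le_right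
  exact hne (hc2.2.2.2 τ₁ hc1.2.1 hc1.2.2.1 hle)

/-- cover transfer downward along a transposition -/
theorem covDownTr {I J : Setoid A × Setoid A} (hcov : CovC C J.1 J.2)
    (hI1 : I.1 ∈ C) (hI2 : I.2 ∈ C) (ht : UpTr I J) : CovC C I.1 I.2 := by
  obtain ⟨e1, e2⟩ := ht
  refine ⟨hI1, hI2, ?_, ?_⟩
  · refine lt_of_le_of_ne (by rw [e1]; exact inf_le_left) fun he => ?_
    have h2 : I.2 ≤ J.1 := by rw [← he, e1]; exact inf_le_right
    exact hcov.2.2.1.ne (by rw [e2, sup_eq_right.2 h2])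
  · intro g hgC hglt hgle
    have hgJ : J.1 < g ⊔ J.1 := by
      refine lt_of_le_of_ne le_sup_right fun he => ?_
      have : g ≤ I.1 := by rw [e1]; exact le_inf hgle (by rw [he]; exact le_sup_left)
      exact hglt.not_ge this
    have hsup : g ⊔ J.1 = J.2 := by
      refine hcov.2.2.2 _ (h.memJoin hgC hcov.1) hgJ ?_
      rw [e2]; exact sup_le (hgle.trans le_sup_left) le_sup_right
    have hI2J : I.2 ≤ J.2 := by rw [e2]; exact le_sup_left
    have hmod := h.hM g hgC J.1 hcov.1 I.2 hI2 hgle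
    rw [inf_comm J.1 I.2, ← e1, sup_eq_left.2 hglt.le, hsup, inf_eq_right.2 hI2J] at hmod
    exact hmod

/-- the meet of two distinct coatoms is covered by each -/
theorem coatomsMeetCov {φ ψ p : Setoid A} (hcφ : CovC C φ p) (hcψ : CovC C ψ p)
    (hne : φ ≠ ψ) : CovC C (φ ⊓ ψ) φ :=
  h.covDownTr (I := (φ ⊓ ψ, φ)) (J := (ψ, p)) hcψ (h.memMeet hcφ.1 hcψ.1) hcφ.1
    ⟨rfl, (h.coatomsSup hcφ hcψ hne).symm⟩

end Hyp
end Aux3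
section Aux4
variable {A : Type*}
namespace Hyp
variable {one : A} {C : Set (Setoid A)} (h : Hyp one C)
include h

/-- XNOR composition rule along a cover -/
theorem xnor {α p : Setoid A} (hc : CovC C α p) {a b c : A}
    (hab : p.r a b) (hbc : p.r b c) :
    α.r a c ↔ (α.r a b ↔ α.r b c) := by
  constructor
  · intro hac
    constructor
    · intro hab'
      exact Setoid.trans' _ (Setoid.symm' _ hab') hac
    · intro hbc'
      exact Setoid.trans' _ hac (Setoid.symm' _ hbc')
  · intro hiff
    by_cases hab' : α.r a b
    · exact Setoid.trans' _ hab' (hiff.1 hab')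
    · exact h.L1 hc hab hbc hab' (fun hh => hab' (hiff.2 hh))

/-- L3: uniqueness of the extra atom in the height-two interval `[γ, p]`. -/
theorem thirdUnique {φ ψ p τ₁ τ₂ : Setoid A} (hcφ : CovC C φ p) (hcψ : CovC C ψ p)
    (ht1 : CovC C (φ ⊓ ψ) τ₁) (ht2 : CovC C (φ ⊓ ψ) τ₂)
    (ht1p : τ₁ ≤ p) (ht2p : τ₂ ≤ p)
    (m1φ : τ₁ ⊓ φ = φ ⊓ ψ) (m1ψ : τ₁ ⊓ ψ = φ ⊓ ψ)
    (m2φ : τ₂ ⊓ φ = φ ⊓ ψ) (m2ψ : τ₂ ⊓ ψ = φ ⊓ ψ) : τ₁ = τ₂ := by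
  by_contra hne
  set γ := φ ⊓ ψ with hγ
  obtain ⟨w₁, hw1, hnw1⟩ := h.exWit ht1.1 ht1.2.1 ht1.2.2.1.le ht1.2.2.1.ne
  obtain ⟨w₂, hw2, hnw2⟩ := h.exWit ht2.1 ht2.2.1 ht2.2.2.1.le ht2.2.2.1.ne
  have hnφ1 : ¬ φ.r one w₁ := fun hf => hnw1 (by rw [← m1φ]; exact ⟨hw1, hf⟩)
  have hnψ1 : ¬ ψ.r one w₁ := fun hf => hnw1 (by rw [← m1ψ]; exact ⟨hw1, hf⟩)
  have hnφ2 : ¬ φ.r one w₂ := fun hf => hnw2 (by rw [← m2φ]; exact ⟨hw2, hf⟩)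
  have hnψ2 : ¬ ψ.r one w₂ := fun hf => hnw2 (by rw [← m2ψ]; exact ⟨hw2, hf⟩)
  have hp1 : p.r one w₁ := ht1p hw1
  have hp2 : p.r one w₂ := ht2p hw2
  have hφ12 : φ.r w₁ w₂ := h.L1 hcφ (Setoid.symm' _ hp1) hp2
    (fun hf => hnφ1 (Setoid.symm' _ hf)) hnφ2
  have hψ12 : ψ.r w₁ w₂ := h.L1 hcψ (Setoid.symm' _ hp1) hp2
    (fun hf => hnψ1 (Setoid.symm' _ hf)) hnψ2
  have hγ12 : γ.r w₁ w₂ := ⟨hφ12, hψ12⟩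
  have ht1w2 : τ₁.r one w₂ := Setoid.trans' _ hw1 (ht1.2.2.1.le hγ12)
  have : (τ₁ ⊓ τ₂).r one w₂ := ⟨ht1w2, hw2⟩
  rw [h.atomsInf ht1 ht2 hne] at this
  exact hnψ2 this.2

/-- construction of the third atom from a common lower transposed interval -/
theorem thirdAtom {χ χ' p c d : Setoid A} (hcχ : CovC C χ p) (hcχ' : CovC C χ' p)
    (hne : χ ≠ χ') (hcd : CovC C c d) (ht : UpTr (c, d) (χ, p))
    (ht' : UpTr (c, d) (χ', p)) :
    CovC C (χ ⊓ χ') (d ⊔ χ ⊓ χ') ∧ (d ⊔ χ ⊓ χ') ⊓ χ = χ ⊓ χ' ∧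
      (d ⊔ χ ⊓ χ') ⊓ χ' = χ ⊓ χ' ∧ (d ⊔ χ ⊓ χ') ⊔ χ = p ∧ (d ⊔ χ ⊓ χ') ⊔ χ' = p := by
  set γ := χ ⊓ χ' with hγdef
  set σ := d ⊔ γ with hσdef
  have e1 : c = d ⊓ χ := ht.1
  have e2 : p = d ⊔ χ := ht.2
  have e1' : c = d ⊓ χ' := ht'.1
  have e2' : p = d ⊔ χ' := ht'.2
  have hγC : γ ∈ C := h.memMeet hcχ.1 hcχ'.1
  have hdnχ : ¬ d ≤ χ := fun hle => hcd.2.2.1.ne (by rw [e1, inf_eq_left.2 hle])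
  have hdnχ' : ¬ d ≤ χ' := fun hle => hcd.2.2.1.ne (by rw [e1', inf_eq_left.2 hle])
  have hcγ : c ≤ γ := le_inf (by rw [e1]; exact inf_le_right) (by rw [e1']; exact inf_le_right)
  have hcovγχ : CovC C γ χ := h.coatomsMeetCov hcχ hcχ' hne
  have hcovγχ' : CovC C γ χ' := by
    rw [hγdef, inf_comm]
    exact h.coatomsMeetCov hcχ' hcχ (Ne.symm hne)
  have hdp : d ≤ p := by rw [e2]; exact le_sup_left
  -- σ covers γ
  have hcovσ : CovC C γ σ := by
    rcases h.covSup hcd hγC with heq | hcov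
    · exfalso
      have : d ≤ c ⊔ γ := by rw [heq]; exact le_sup_left
      rw [sup_eq_right.2 hcγ] at this
      exact hdnχ (this.trans inf_le_left)
    · rw [sup_eq_right.2 hcγ] at hcov
      exact hcov
  have hσp : σ ≤ p := sup_le hdp (inf_le_left.trans hcχ.2.2.1.le)
  have hσχ : σ ⊔ χ = p := by
    apply le_antisymm (sup_le hσp hcχ.2.2.1.le)
    rw [e2, hσdef, sup_comm d γ, sup_assoc]
    exact le_sup_right
  have hσχ' : σ ⊔ χ' = p := by
    apply le_antisymm (sup_le hσp hcχ'.2.2.1.le)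
    rw [e2', hσdef, sup_comm d γ, sup_assoc]
    exact le_sup_right
  have hmeet : ∀ χ₀ : Setoid A, CovC C γ χ₀ → χ₀ ≤ p → d ⊔ χ₀ = p → σ ⊓ χ₀ = γ := by
    intro χ₀ hcov0 h0p hdj
    by_contra hcon
    have hlt : γ < σ ⊓ χ₀ :=
      lt_of_le_of_ne (le_inf (le_sup_right) hcov0.2.2.1.le) (Ne.symm hcon)
    have heq1 : σ ⊓ χ₀ = χ₀ := hcov0.2.2.2 _ (h.memMeet hcovσ.2.1 hcov0.2.1) hlt inf_le_right
    have hχσ : χ₀ ≤ σ := by rw [← heq1]; exact inf_le_left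
    have hσtop : σ = p := by
      apply le_antisymm hσp
      rw [← hdj]; exact sup_le le_sup_left hχσ
    -- but then γ < χ < p = σ contradicts `CovC γ σ`
    have := hcovσ.2.2.2 χ hcovγχ.2.1 hcovγχ.2.2.1 (by rw [hσtop]; exact hcχ.2.2.1.le)
    exact hcχ.2.2.1.ne (by rw [this, hσtop])
  exact ⟨hcovσ, hmeet χ hcovγχ hcχ.2.2.1.le e2.symm, hmeet χ' hcovγχ' hcχ'.2.2.1.le e2'.symm,
    hσχ, hσχ'⟩

end Hyp
end Aux4
section Aux5
variable {A : Type*}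
namespace Hyp
variable {one : A} {C : Set (Setoid A)} (h : Hyp one C)
include h

/-- the relation of the third atom is the Boolean product -/
theorem bulEq {χ χ' p σ : Setoid A} (hcχ : CovC C χ p) (hcχ' : CovC C χ' p)
    (hne : χ ≠ χ') (hσC : σ ∈ C) (hσp : σ ≤ p)
    (mχ : σ ⊓ χ = χ ⊓ χ') (mχ' : σ ⊓ χ' = χ ⊓ χ') (jχ : σ ⊔ χ = p) :
    σ.r = Bul p χ χ' := by
  have hcovσ : CovC C σ p := by
    refine h.covUpTr (I := (χ ⊓ χ', χ)) (J := (σ, p))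
      (h.coatomsMeetCov hcχ hcχ' hne) hσC hcχ.2.1 ⟨?_, ?_⟩
    · rw [inf_comm χ σ, mχ]
    · rw [sup_comm χ σ, jχ]
  have fwd : ∀ a b, σ.r a b → (χ.r a b ↔ χ'.r a b) := by
    intro a b hs
    constructor
    · intro hc
      have hh : (σ ⊓ χ).r a b := ⟨hs, hc⟩
      rw [mχ] at hh; exact hh.2
    · intro hc
      have hh : (σ ⊓ χ').r a b := ⟨hs, hc⟩
      rw [mχ'] at hh; exact hh.1
  have bwd : ∀ a b, χ.r a b → χ'.r a b → σ.r a b := by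
    intro a b h1 h2
    have hh : (σ ⊓ χ).r a b := by rw [mχ]; exact ⟨h1, h2⟩
    exact hh.1
  have htr : ∀ a b c : A, (p.r a b ∧ (σ.r a b ↔ (χ.r a b ↔ χ'.r a b))) →
      (p.r b c ∧ (σ.r b c ↔ (χ.r b c ↔ χ'.r b c))) →
      (p.r a c ∧ (σ.r a c ↔ (χ.r a c ↔ χ'.r a c))) := by
    rintro a b c ⟨hp1, hi1⟩ ⟨hp2, hi2⟩
    refine ⟨Setoid.trans' _ hp1 hp2, ?_⟩
    have eσ := h.xnor hcovσ hp1 hp2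
    have eχ := h.xnor hcχ hp1 hp2
    have eχ' := h.xnor hcχ' hp1 hp2
    rw [eσ, eχ, eχ', hi1, hi2]
    by_cases b1 : χ.r a b <;> by_cases b2 : χ'.r a b <;>
      by_cases b3 : χ.r b c <;> by_cases b4 : χ'.r b c <;> simp [b1, b2, b3, b4]
  let K : Setoid A :=
    ⟨fun a b => p.r a b ∧ (σ.r a b ↔ (χ.r a b ↔ χ'.r a b)),
      ⟨fun a => ⟨Setoid.refl' p a,
          iff_of_true (Setoid.refl' σ a) (iff_of_true (Setoid.refl' χ a) (Setoid.refl' χ' a))⟩,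
        fun {a b} hab => ⟨Setoid.symm' _ hab.1, by
          have c1 := Setoid.comm' σ (x := a) (y := b)
          have c2 := Setoid.comm' χ (x := a) (y := b)
          have c3 := Setoid.comm' χ' (x := a) (y := b)
          tauto⟩,
        fun {a b c} h1 h2 => htr a b c h1 h2⟩⟩
  have hχK : χ ≤ K := by
    intro a b hab
    refine ⟨hcχ.2.2.1.le hab, ?_⟩
    constructor
    · intro hs; exact iff_of_true hab ((fwd a b hs).1 hab)
    · intro hiff; exact bwd a b hab (hiff.1 hab)
  have hσK : σ ≤ K := fun a b hs => ⟨hσp hs, ⟨fun _ => fwd a b hs, fun _ => hs⟩⟩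
  have hpK : p ≤ K := by rw [← jχ]; exact sup_le hσK hχK
  funext x y
  apply propext
  constructor
  · intro hs
    exact ⟨hσp hs, fwd x y hs⟩
  · rintro ⟨hp', hiff⟩
    exact (hpK hp').2.2 hiff

/-- an element of `C` covered by `p` whose prime interval is projective to a CMI
interval with top `p` is itself CMI with cover `p` -/
theorem atomCMI {σ p η : Setoid A} (hcov : CovC C σ p)
    (hη : IsCMI C η p) (hproj : Projective C (σ, p) (η, p)) : IsCMI C σ p := by
  obtain ⟨u, v, hpuv, hnσuv⟩ := pairOfLt hcov.2.2.1
  obtain ⟨χ, hχC, hσχ, hnχ, hcmiχ, hrelmax⟩ := h.exCMIabove hcov.1 hnσuv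
  have hχp : χ ⊓ p = σ := by
    by_contra hcon
    have hlt : σ < χ ⊓ p := lt_of_le_of_ne (le_inf hσχ hcov.2.2.1.le) (Ne.symm hcon)
    have he := hcov.2.2.2 _ (h.memMeet hχC hcov.2.1) hlt inf_le_right
    have hpχ : p ≤ χ := by rw [← he]; exact inf_le_left
    exact hnχ (hpχ hpuv)
  have hq' : χ ⊔ theta C u v = χ ⊔ p := by
    rcases h.covSup hcov hχC with heq | hcovj
    · exfalso
      rw [sup_eq_right.2 hσχ] at heq
      have hpχ : p ≤ χ := by rw [heq]; exact le_sup_left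
      exact hnχ (hpχ hpuv)
    · rw [sup_eq_right.2 hσχ] at hcovj
      have h1 : χ ⊔ theta C u v ≤ p ⊔ χ :=
        sup_le le_sup_right ((h.thetaLe hcov.2.1 hpuv).trans le_sup_left)
      have h2 := hcovj.2.2.2 _ hcmiχ.2.1 hcmiχ.2.2.1 h1
      rw [h2, sup_comm p χ]
  have hpersp : Persp C (σ, p) (χ, χ ⊔ theta C u v) := by
    refine ⟨hcov.1, hcov.2.1, hχC, hcmiχ.2.1, Or.inl ⟨?_, ?_⟩⟩
    · rw [inf_comm p χ, hχp]
    · rw [hq', sup_comm χ p]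
  have hproj2 : Projective C (χ, χ ⊔ theta C u v) (η, p) :=
    Relation.ReflTransGen.head (perspSymm hpersp) hproj
  have hqp := h.hP χ η _ p hcmiχ hη hproj2
  have hχle : χ ≤ p := by rw [← hqp]; exact le_sup_left
  have hχσ : χ = σ := by rw [← hχp, inf_eq_left.2 hχle]
  refine ⟨hcov.1, hcov.2.1, hcov.2.2.1, ?_⟩
  intro β hβ hlt
  have hrel : β.r u v := hrelmax β hβ (by rw [hχσ]; exact hlt)
  have hgen : σ ⊔ theta C u v = p := by rw [← hχσ]; exact hqp
  rw [← hgen]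
  exact sup_le hlt.le (h.thetaLe hβ hrel)

end Hyp
end Aux5
section Aux6
variable {A : Type*}

/-- existence of the Boolean product of `x` and `y` inside `Ū` -/
def PEx (C : Set (Setoid A)) (η p x y : Setoid A) : Prop :=
  ∃ σ, σ.r = Bul p x y ∧ (σ = p ∨ (IsCMI C σ p ∧ PIP C σ η))

theorem bulIff {p x y : Setoid A} {σ : Setoid A} (hrel : σ.r = Bul p x y) (a b : A) :
    σ.r a b ↔ (p.r a b ∧ (x.r a b ↔ y.r a b)) := by rw [hrel]; exact Iff.rfl

theorem bulSelfRel {p x : Setoid A} (hx : x ≤ p) : p.r = Bul p x x := by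
  funext a b
  exact propext ⟨fun hp => ⟨hp, Iff.rfl⟩, fun hb => hb.1⟩

theorem bulLeftRel {p y : Setoid A} (hy : y ≤ p) : y.r = Bul p p y := by
  funext a b
  refine propext ⟨fun hr => ⟨hy hr, iff_of_true (hy hr) hr⟩, fun hb => hb.2.1 hb.1⟩

theorem bulRightRel {p x : Setoid A} (hx : x ≤ p) : x.r = Bul p x p := by
  funext a b
  refine propext ⟨fun hr => ⟨hx hr, iff_of_true hr (hx hr)⟩, fun hb => hb.2.2 hb.1⟩

theorem setoidEqOfRel {x y p : Setoid A} (hx : x ≤ p) (hy : y ≤ p)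
    (hiff : ∀ a b, p.r a b → (x.r a b ↔ y.r a b)) : x = y := by
  refine Setoid.ext fun a b => ⟨fun hr => (hiff a b (hx hr)).1 hr,
    fun hr => (hiff a b (hy hr)).2 hr⟩

namespace Hyp
variable {one : A} {C : Set (Setoid A)} (h : Hyp one C)
include h

theorem pairOutside {x y p : Setoid A} (hcx : CovC C x p) (hcy : CovC C y p)
    (hne : x ≠ y) : ∃ a b : A, p.r a b ∧ ¬ x.r a b ∧ ¬ y.r a b := by
  have hγx : CovC C (x ⊓ y) x := h.coatomsMeetCov hcx hcy hne
  have hγy : CovC C (x ⊓ y) y := by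
    rw [inf_comm]; exact h.coatomsMeetCov hcy hcx (Ne.symm hne)
  obtain ⟨a, hxa, hna⟩ := h.exWit hγx.1 hγx.2.1 hγx.2.2.1.le hγx.2.2.1.ne
  obtain ⟨b, hyb, hnb⟩ := h.exWit hγy.1 hγy.2.1 hγy.2.2.1.le hγy.2.2.1.ne
  have hnya : ¬ y.r one a := fun hy' => hna ⟨hxa, hy'⟩
  have hnxb : ¬ x.r one b := fun hx' => hnb ⟨hx', hyb⟩
  refine ⟨a, b, Setoid.trans' _ (Setoid.symm' _ (hcx.2.2.1.le hxa)) (hcy.2.2.1.le hyb), ?_, ?_⟩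
  · intro hxab
    exact hnxb (Setoid.trans' _ hxa hxab)
  · intro hyab
    exact hnya (Setoid.trans' _ hyb (Setoid.symm' _ hyab))

theorem bulFacts {x y p σ : Setoid A} (hcx : CovC C x p) (hcy : CovC C y p)
    (hne : x ≠ y) (hσC : σ ∈ C) (hrel : σ.r = Bul p x y) :
    σ ≤ p ∧ σ ⊓ x = x ⊓ y ∧ σ ⊓ y = x ⊓ y ∧ σ ⊔ x = p ∧ σ ⊔ y = p := by
  have hσp : σ ≤ p := fun a b hs => ((bulIff hrel a b).1 hs).1
  have hmx : σ ⊓ x = x ⊓ y := by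
    refine Setoid.ext fun a b => ⟨fun hr => ?_, fun hr => ?_⟩
    · exact ⟨hr.2, ((bulIff hrel a b).1 hr.1).2.1 hr.2⟩
    · exact ⟨(bulIff hrel a b).2 ⟨hcx.2.2.1.le hr.1, iff_of_true hr.1 hr.2⟩, hr.1⟩
  have hmy : σ ⊓ y = x ⊓ y := by
    refine Setoid.ext fun a b => ⟨fun hr => ?_, fun hr => ?_⟩
    · exact ⟨((bulIff hrel a b).1 hr.1).2.2 hr.2, hr.2⟩
    · exact ⟨(bulIff hrel a b).2 ⟨hcy.2.2.1.le hr.2, iff_of_true hr.1 hr.2⟩, hr.2⟩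
  obtain ⟨a, b, hpab, hnx, hny⟩ := h.pairOutside hcx hcy hne
  have hσab : σ.r a b := (bulIff hrel a b).2 ⟨hpab, iff_of_false hnx hny⟩
  have hjx : σ ⊔ x = p := by
    rw [sup_comm]
    exact h.joinCoatom hcx hσC hσp (fun hle => hnx (hle hσab))
  have hjy : σ ⊔ y = p := by
    rw [sup_comm]
    exact h.joinCoatom hcy hσC hσp (fun hle => hny (hle hσab))
  exact ⟨hσp, hmx, hmy, hjx, hjy⟩

theorem peSelf {η p x : Setoid A} (hx : x ≤ p) : PEx C η p x x :=
  ⟨p, bulSelfRel hx, Or.inl rfl⟩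

/-- key step: two CMI coatoms with a common lower transposed interval have a product -/
theorem peOfCommonTr {η p x x' c d : Setoid A} (hη : IsCMI C η p)
    (hx : IsCMI C x p ∧ Projective C (x, p) (η, p))
    (hx' : IsCMI C x' p ∧ Projective C (x', p) (η, p))
    (hcd : CovC C c d) (ht : UpTr (c, d) (x, p)) (ht' : UpTr (c, d) (x', p)) :
    PEx C η p x x' := by
  by_cases hne : x = x'
  · subst hne; exact h.peSelf hx.1.2.2.1.le
  have hcx := h.cmiCov hx.1
  have hcx' := h.cmiCov hx'.1
  obtain ⟨hcovσ, hmx, hmx', hjx, hjx'⟩ := h.thirdAtom hcx hcx' hne hcd ht ht'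
  set σ := d ⊔ x ⊓ x' with hσdef
  have hσC : σ ∈ C := hcovσ.2.1
  have hσp : σ ≤ p := by rw [← hjx]; exact le_sup_left
  have hrel : σ.r = Bul p x x' := h.bulEq hcx hcx' hne hσC hσp hmx hmx' hjx
  have hcovσp : CovC C σ p := by
    refine h.covUpTr (I := (x ⊓ x', x)) (J := (σ, p))
      (h.coatomsMeetCov hcx hcx' hne) hσC hcx.2.1 ⟨?_, ?_⟩
    · rw [inf_comm x σ, hmx]
    · rw [sup_comm x σ, hjx]
  have hproj : Projective C (σ, p) (η, p) := by
    refine Relation.ReflTransGen.head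
      (⟨hσC, hcx.2.1, h.memMeet hcx.1 hcx'.1, hcx.1, Or.inr ⟨?_, ?_⟩⟩ :
        Persp C (σ, p) (x ⊓ x', x)) ?_
    · rw [inf_comm x σ, hmx]
    · rw [sup_comm x σ, hjx]
    · refine Relation.ReflTransGen.head
        (⟨h.memMeet hcx.1 hcx'.1, hcx.1, hcx'.1, hcx.2.1, Or.inl ⟨rfl, ?_⟩⟩ :
          Persp C (x ⊓ x', x) (x', p)) hx'.2
      exact (h.coatomsSup hcx hcx' hne).symm
  exact ⟨σ, hrel, Or.inr ⟨h.atomCMI hcovσp hη hproj, p, p, h.atomCMI hcovσp hη hproj, hη, hproj⟩⟩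

end Hyp
end Aux6
section Aux7
variable {A : Type*}
namespace Hyp
variable {one : A} {C : Set (Setoid A)} (h : Hyp one C)
include h

theorem pipProj {η p x : Setoid A} (hη : IsCMI C η p) (hx : PIP C x η) :
    IsCMI C x p ∧ Projective C (x, p) (η, p) := by
  obtain ⟨p', q', hcmix, hcmiη, hproj⟩ := hx
  have hq : q' = p :=
    le_antisymm (hcmiη.2.2.2 p hη.2.1 hη.2.2.1) (hη.2.2.2 q' hcmiη.2.1 hcmiη.2.2.1)
  subst hq
  have hp' : p' = q' := h.hP x η p' q' hcmix hcmiη hproj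
  subst hp'
  exact ⟨hcmix, hproj⟩

theorem pipOfProj {η p x : Setoid A} (hη : IsCMI C η p)
    (hx : IsCMI C x p ∧ Projective C (x, p) (η, p)) : PIP C x η :=
  ⟨p, p, hx.1, hη, hx.2⟩

/-- transitivity of product existence -/
theorem peTrans {η p x y z : Setoid A} (hη : IsCMI C η p)
    (hx : IsCMI C x p ∧ Projective C (x, p) (η, p))
    (hy : IsCMI C y p ∧ Projective C (y, p) (η, p))
    (hz : IsCMI C z p ∧ Projective C (z, p) (η, p))
    (h1 : PEx C η p x y) (h2 : PEx C η p y z) : PEx C η p x z := by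
  classical
  obtain ⟨σ₁, hr1, hd1⟩ := h1
  obtain ⟨σ₂, hr2, hd2⟩ := h2
  have hxp : x ≤ p := hx.1.2.2.1.le
  have hyp : y ≤ p := hy.1.2.2.1.le
  have hzp : z ≤ p := hz.1.2.2.1.le
  by_cases hxy : x = y
  · subst hxy; exact ⟨σ₂, hr2, hd2⟩
  by_cases hyz : y = z
  · subst hyz; exact ⟨σ₁, hr1, hd1⟩
  by_cases hxz : x = z
  · subst hxz; exact h.peSelf hxp
  have hσ1nep : σ₁ ≠ p := by
    intro he
    refine hxy (setoidEqOfRel hxp hyp fun a b hp => ?_)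
    have h' := (bulIff hr1 a b).1
    rw [he] at h'
    exact (h' hp).2
  have hσ2nep : σ₂ ≠ p := by
    intro he
    refine hyz (setoidEqOfRel hyp hzp fun a b hp => ?_)
    have h' := (bulIff hr2 a b).1
    rw [he] at h'
    exact (h' hp).2
  have hd1' := hd1.resolve_left hσ1nep
  have hd2' := hd2.resolve_left hσ2nep
  by_cases hσσ : σ₁ = σ₂
  · refine absurd (setoidEqOfRel hxp hzp fun a b hp => ?_) hxz
    have e1 := bulIff hr1 a b
    have e2 := bulIff hr2 a b
    rw [hσσ] at e1
    by_cases hy' : y.r a b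
    · constructor <;> intro <;> tauto
    · constructor <;> intro <;> tauto
  by_cases hσ1z : σ₁ = z
  · refine ⟨y, ?_, Or.inr ⟨hy.1, h.pipOfProj hη hy⟩⟩
    funext a b; apply propext
    have e1 := bulIff hr1 a b
    rw [hσ1z] at e1
    constructor
    · intro hyab
      refine ⟨hyp hyab, ?_, ?_⟩
      · intro hxab; exact e1.2 ⟨hyp hyab, iff_of_true hxab hyab⟩
      · intro hzab; exact (e1.1 hzab).2.2 hyab
    · rintro ⟨hp, hxz'⟩
      by_cases hxab : x.r a b
      · exact (e1.1 (hxz'.1 hxab)).2.1 hxab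
      · by_contra hyab
        exact (fun hz' => hxab (hxz'.2 hz')) (e1.2 ⟨hp, iff_of_false hxab hyab⟩)
  by_cases hσ2x : σ₂ = x
  · refine ⟨y, ?_, Or.inr ⟨hy.1, h.pipOfProj hη hy⟩⟩
    funext a b; apply propext
    have e2 := bulIff hr2 a b
    rw [hσ2x] at e2
    constructor
    · intro hyab
      refine ⟨hyp hyab, ?_, ?_⟩
      · intro hxab; exact (e2.1 hxab).2.1 hyab
      · intro hzab; exact e2.2 ⟨hyp hyab, iff_of_true hyab hzab⟩
    · rintro ⟨hp, hxz'⟩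
      by_cases hzab : z.r a b
      · exact (e2.1 (hxz'.2 hzab)).2.2 hzab
      · by_contra hyab
        exact (fun hx' => hzab (hxz'.1 hx')) (e2.2 ⟨hp, iff_of_false hyab hzab⟩)
  -- main case
  have hcx := h.cmiCov hx.1
  have hcy := h.cmiCov hy.1
  have hcz := h.cmiCov hz.1
  have hσ1C : σ₁ ∈ C := hd1'.1.1
  have hσ2C : σ₂ ∈ C := hd2'.1.1
  have hcσ1 := h.cmiCov hd1'.1
  have hcσ2 := h.cmiCov hd2'.1
  obtain ⟨hσ1p, m1x, m1y, j1x, j1y⟩ := h.bulFacts hcx hcy hxy hσ1C hr1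
  obtain ⟨hσ2p, m2y, m2z, j2y, j2z⟩ := h.bulFacts hcy hcz hyz hσ2C hr2
  have hγ₁σ1 : CovC C (x ⊓ y) σ₁ :=
    h.covDownTr (I := (x ⊓ y, σ₁)) (J := (x, p)) hcx (h.memMeet hcx.1 hcy.1) hσ1C
      ⟨m1x.symm, j1x.symm⟩
  have hγ₂σ2 : CovC C (y ⊓ z) σ₂ :=
    h.covDownTr (I := (y ⊓ z, σ₂)) (J := (y, p)) hcy (h.memMeet hcy.1 hcz.1) hσ2C
      ⟨m2y.symm, j2y.symm⟩
  have hγne : x ⊓ y ≠ y ⊓ z := by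
    intro he
    have hγ₁x : CovC C (x ⊓ y) x := h.coatomsMeetCov hcx hcy hxy
    have hnxσ2 : ¬ x ≤ σ₂ := by
      intro hle
      rcases lt_or_eq_of_le hle with hlt | heq
      · exact hσ2nep (hcx.2.2.2 σ₂ hσ2C hlt hσ2p)
      · exact hσ2x heq.symm
    have m2x : σ₂ ⊓ x = x ⊓ y := by
      by_contra hcon
      have hle1 : x ⊓ y ≤ σ₂ := by rw [he, ← m2y]; exact inf_le_left
      have hlt : x ⊓ y < σ₂ ⊓ x :=
        lt_of_le_of_ne (le_inf hle1 inf_le_left) (Ne.symm hcon)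
      have := hγ₁x.2.2.2 _ (h.memMeet hσ2C hcx.1) hlt inf_le_right
      exact hnxσ2 (by rw [← this]; exact inf_le_left)
    have hγ₁σ2 : CovC C (x ⊓ y) σ₂ := by rw [he]; exact hγ₂σ2
    have m2y' : σ₂ ⊓ y = x ⊓ y := by rw [m2y, he]
    exact hσσ (h.thirdUnique hcx hcy hγ₁σ1 hγ₁σ2 hσ1p hσ2p m1x m1y m2x m2y')
  have hγ₂y : CovC C (y ⊓ z) y := h.coatomsMeetCov hcy hcz hyz
  have hγ₁y : CovC C (x ⊓ y) y := by
    rw [inf_comm x y]; exact h.coatomsMeetCov hcy hcx (Ne.symm hxy)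
  have heγ₂ : x ⊓ y ⊓ (y ⊓ z) < y ⊓ z := by
    refine lt_of_le_of_ne inf_le_right fun he' => ?_
    have hle : y ⊓ z ≤ x ⊓ y := by rw [← he']; exact inf_le_left
    rcases lt_or_eq_of_le hle with hlt | heq
    · have := hγ₂y.2.2.2 _ (h.memMeet hcx.1 hcy.1) hlt hγ₁y.2.2.1.le
      have hylex : y ≤ x := by rw [← this]; exact inf_le_left
      rcases lt_or_eq_of_le hylex with hlt2 | heq2
      · exact hcx.2.2.1.ne (hcy.2.2.2 x hcx.1 hlt2 hcx.2.2.1.le)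
      · exact hxy heq2.symm
    · exact hγne heq.symm
  have hdσ2 : CovC C (σ₁ ⊓ σ₂) σ₂ := by
    rw [inf_comm σ₁ σ₂]; exact h.coatomsMeetCov hcσ2 hcσ1 (Ne.symm hσσ)
  have hde : ∀ w : Setoid A, σ₁ ⊓ σ₂ ≤ w → w ≤ x ⊓ y → w ≤ y ⊓ z → False := by
    intro w hdw h1' h2'
    have hlt : σ₁ ⊓ σ₂ < y ⊓ z := lt_of_le_of_lt
      (hdw.trans (le_inf h1' h2')) heγ₂
    exact hγ₂σ2.2.2.1.ne (hdσ2.2.2.2 _ (h.memMeet hcy.1 hcz.1) hlt hγ₂σ2.2.2.1.le)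
  have hdx : ¬ σ₁ ⊓ σ₂ ≤ x := by
    intro hle
    have h1' : σ₁ ⊓ σ₂ ≤ x ⊓ y := by rw [← m1x]; exact le_inf inf_le_left hle
    have h2' : σ₁ ⊓ σ₂ ≤ y ⊓ z := by
      rw [← m2y]; exact le_inf inf_le_right (h1'.trans inf_le_right)
    exact hde _ le_rfl h1' h2'
  have hdz : ¬ σ₁ ⊓ σ₂ ≤ z := by
    intro hle
    have h2' : σ₁ ⊓ σ₂ ≤ y ⊓ z := by rw [← m2z]; exact le_inf inf_le_right hle
    have h1' : σ₁ ⊓ σ₂ ≤ x ⊓ y := by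
      rw [← m1y]; exact le_inf inf_le_left (h2'.trans inf_le_left)
    exact hde _ le_rfl h1' h2'
  have hdC : σ₁ ⊓ σ₂ ∈ C := h.memMeet hσ1C hσ2C
  have hdp : σ₁ ⊓ σ₂ ≤ p := inf_le_left.trans hσ1p
  have hdpx : σ₁ ⊓ σ₂ ⊔ x = p := by
    rw [sup_comm]; exact h.joinCoatom hcx hdC hdp hdx
  have hdpz : σ₁ ⊓ σ₂ ⊔ z = p := by
    rw [sup_comm]; exact h.joinCoatom hcz hdC hdp hdz
  have hd1x : σ₁ ⊓ σ₂ ⊓ x ≤ x ⊓ y := by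
    rw [← m1x]; exact inf_le_inf_right x inf_le_left
  have hd2z : σ₁ ⊓ σ₂ ⊓ z ≤ y ⊓ z := by
    rw [← m2z]; exact inf_le_inf_right z inf_le_right
  have hdex : σ₁ ⊓ σ₂ ⊓ x = σ₁ ⊓ σ₂ ⊓ (x ⊓ y ⊓ (y ⊓ z)) := by
    apply le_antisymm
    · refine le_inf inf_le_left (le_inf hd1x ?_)
      rw [← m2y]
      exact le_inf (inf_le_left.trans inf_le_right) (hd1x.trans inf_le_right)
    · exact inf_le_inf_left _ (inf_le_left.trans inf_le_left)
  have hdez : σ₁ ⊓ σ₂ ⊓ z = σ₁ ⊓ σ₂ ⊓ (x ⊓ y ⊓ (y ⊓ z)) := by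
    apply le_antisymm
    · refine le_inf inf_le_left (le_inf ?_ hd2z)
      rw [← m1y]
      exact le_inf (inf_le_left.trans inf_le_left) (hd2z.trans inf_le_left)
    · exact inf_le_inf_left _ (inf_le_right.trans inf_le_right)
  have hcd : CovC C (σ₁ ⊓ σ₂ ⊓ x) (σ₁ ⊓ σ₂) :=
    h.covDownTr (I := (σ₁ ⊓ σ₂ ⊓ x, σ₁ ⊓ σ₂)) (J := (x, p)) hcx
      (h.memMeet hdC hcx.1) hdC ⟨rfl, hdpx.symm⟩
  exact h.peOfCommonTr hη hx hz hcd ⟨rfl, hdpx.symm⟩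
    ⟨by rw [hdex, ← hdez], hdpz.symm⟩

end Hyp
end Aux7
section Aux8
variable {A : Type*}
namespace Hyp
variable {one : A} {C : Set (Setoid A)} (h : Hyp one C)
include h

theorem thm10core {η p x y : Setoid A} (hη : IsCMI C η p)
    (hx : IsCMI C x p ∧ Projective C (x, p) (η, p))
    (hy : IsCMI C y p ∧ Projective C (y, p) (η, p))
    (hchain : Projective C (x, p) (y, p)) : PEx C η p x y := by
  suffices hgen : ∀ J : Setoid A × Setoid A, Projective C (x, p) J →
      (CovC C J.1 J.2 ∧ ∃ χ, (IsCMI C χ p ∧ Projective C (χ, p) (η, p)) ∧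
        UpTr J (χ, p) ∧ PEx C η p x χ) by
    obtain ⟨_, χ, hχd, hup, hpe⟩ := hgen (y, p) hchain
    have hyχ : y = χ := hup.1.trans (inf_eq_right.2 hχd.1.2.2.1.le)
    rw [hyχ]; exact hpe
  intro J hchainJ
  induction hchainJ with
  | refl => exact ⟨h.cmiCov hx.1, x, hx, upTrSelf hx.1.2.2.1.le, h.peSelf hx.1.2.2.1.le⟩
  | @tail b c hab hbc ih =>
    have hbc' := hbc
    obtain ⟨hcovJ, χ, hχd, hupJχ, hpeχ⟩ := ih
    obtain ⟨hb1, hb2, hc1, hc2, hcase | hcase⟩ := hbc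
    · -- up step
      have hupbc : UpTr b c := hcase
      have hcovc : CovC C c.1 c.2 := h.covUpTr hcovJ hc1 hc2 hupbc
      obtain ⟨u, v, hpuv, hnuv⟩ := pairOfLt hcovc.2.2.1
      obtain ⟨χ₀, hχ₀C, hlec, hnχ₀, hcmi₀, hrelmax⟩ := h.exCMIabove hc1 hnuv
      have hmeet : c.2 ⊓ χ₀ = c.1 := by
        by_contra hcon
        have hlt : c.1 < c.2 ⊓ χ₀ :=
          lt_of_le_of_ne (le_inf hcovc.2.2.1.le hlec) (Ne.symm hcon)
        have heq2 := hcovc.2.2.2 _ (h.memMeet hc2 hχ₀C) hlt inf_le_left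
        have h2le : c.2 ≤ χ₀ := by rw [← heq2]; exact inf_le_right
        exact hnχ₀ (h2le hpuv)
      have hjoin : c.2 ⊔ χ₀ = χ₀ ⊔ theta C u v := by
        rcases h.covSup hcovc hχ₀C with heq | hcovj
        · exfalso
          rw [sup_eq_right.2 hlec] at heq
          have h2le : c.2 ≤ χ₀ := by rw [heq]; exact le_sup_left
          exact hnχ₀ (h2le hpuv)
        · rw [sup_eq_right.2 hlec] at hcovj
          exact (hcovj.2.2.2 _ hcmi₀.2.1 hcmi₀.2.2.1
            (sup_le le_sup_right ((h.thetaLe hc2 hpuv).trans le_sup_left))).symm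
      have hupc : UpTr c (χ₀, χ₀ ⊔ theta C u v) := ⟨hmeet.symm, hjoin.symm⟩
      have hperspc : Persp C c (χ₀, χ₀ ⊔ theta C u v) :=
        ⟨hc1, hc2, hχ₀C, hcmi₀.2.1, Or.inl ⟨hmeet.symm, hjoin.symm⟩⟩
      have hperspJχ : Persp C b (χ, p) := ⟨hb1, hb2, hχd.1.1, hη.2.1, Or.inl hupJχ⟩
      have hproj₀ : Projective C (χ₀, χ₀ ⊔ theta C u v) (η, p) :=
        Relation.ReflTransGen.head (perspSymm hperspc)
          (Relation.ReflTransGen.head (perspSymm hbc')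
            (Relation.ReflTransGen.head hperspJχ hχd.2))
      have hq₀p : χ₀ ⊔ theta C u v = p := h.hP χ₀ η _ p hcmi₀ hη hproj₀
      rw [hq₀p] at hupc hcmi₀ hproj₀
      have hχ₀d : IsCMI C χ₀ p ∧ Projective C (χ₀, p) (η, p) := ⟨hcmi₀, hproj₀⟩
      have hupbχ₀ : UpTr b (χ₀, p) := upTrTrans hupbc hupc
      have hpecc : PEx C η p χ χ₀ := h.peOfCommonTr hη hχd hχ₀d hcovJ hupJχ hupbχ₀
      exact ⟨hcovc, χ₀, hχ₀d, hupc, h.peTrans hη hx hχd hχ₀d hpeχ hpecc⟩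
    · -- down step
      have hupcb : UpTr c b := hcase
      have hcovc : CovC C c.1 c.2 := h.covDownTr hcovJ hc1 hc2 hupcb
      exact ⟨hcovc, χ, hχd, upTrTrans hupcb hupJχ, hpeχ⟩

/-- Theorem 10: products exist in `Ū`. -/
theorem thm10 {η p : Setoid A} (hη : IsCMI C η p) {x y : Setoid A}
    (hx : PIP C x η ∨ x = p) (hy : PIP C y η ∨ y = p) : PEx C η p x y := by
  rcases hx with hx | hxp
  · rcases hy with hy | hyp
    · have hdx := h.pipProj hη hx
      have hdy := h.pipProj hη hy
      exact h.thm10core hη hdx hdy (Relation.ReflTransGen.trans hdx.2 (projSymm hdy.2))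
    · rw [hyp]
      exact ⟨x, bulRightRel (h.pipProj hη hx).1.2.2.1.le,
        Or.inr ⟨(h.pipProj hη hx).1, hx⟩⟩
  · rcases hy with hy | hyp
    · rw [hxp]
      exact ⟨y, bulLeftRel (h.pipProj hη hy).1.2.2.1.le,
        Or.inr ⟨(h.pipProj hη hy).1, hy⟩⟩
    · rw [hxp, hyp]
      exact ⟨p, bulSelfRel le_rfl, Or.inl rfl⟩

end Hyp
end Aux8
section Aux9
variable {A : Type*}

theorem prodUnique {σ τ : Setoid A} {f : A → A → Prop} (h1 : σ.r = f) (h2 : τ.r = f) :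
    σ = τ :=
  Setoid.ext fun a b => iff_of_eq (congrFun (congrFun (h1.trans h2.symm) a) b)

theorem bulComm (p x y : Setoid A) : Bul p x y = Bul p y x := by
  funext a b
  exact propext (and_congr_right fun _ => iff_comm)

theorem bulCancel {p x y σ : Setoid A} (hxp : x ≤ p) (hyp : y ≤ p)
    (hσ : σ.r = Bul p x y) : y.r = Bul p x σ := by
  funext a b
  apply propext
  have e := bulIff hσ a b
  constructor
  · intro hyab
    refine ⟨hyp hyab, ?_, ?_⟩
    · intro hxab; exact e.2 ⟨hyp hyab, iff_of_true hxab hyab⟩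
    · intro hσab; exact (e.1 hσab).2.2 hyab
  · rintro ⟨hp, hxσ⟩
    by_cases hxab : x.r a b
    · exact (e.1 (hxσ.1 hxab)).2.1 hxab
    · by_contra hyab
      exact hxab (hxσ.2 (e.2 ⟨hp, iff_of_false hxab hyab⟩))

theorem bulTwist {p x a b σb σ' : Setoid A} (hσb : σb.r = Bul p x b)
    (hσ' : σ'.r = Bul p a b) : Bul p a σb = Bul p x σ' := by
  funext c d
  apply propext
  have e1 := bulIff hσb c d
  have e2 := bulIff hσ' c d
  show (p.r c d ∧ (a.r c d ↔ σb.r c d)) ↔ (p.r c d ∧ (x.r c d ↔ σ'.r c d))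
  generalize p.r c d = P at e1 e2 ⊢
  generalize x.r c d = X at e1 ⊢
  generalize a.r c d = A' at e2 ⊢
  generalize b.r c d = B' at e1 e2
  generalize σb.r c d = Sb at e1 ⊢
  generalize σ'.r c d = S' at e2 ⊢
  tauto

theorem bulTwist' {p x a b τa σ' : Setoid A} (hτa : τa.r = Bul p x a)
    (hσ' : σ'.r = Bul p a b) : Bul p τa b = Bul p x σ' := by
  funext c d
  apply propext
  have e1 := bulIff hτa c d
  have e2 := bulIff hσ' c d
  show (p.r c d ∧ (τa.r c d ↔ b.r c d)) ↔ (p.r c d ∧ (x.r c d ↔ σ'.r c d))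
  generalize p.r c d = P at e1 e2 ⊢
  generalize x.r c d = X at e1 ⊢
  generalize a.r c d = A' at e1 e2
  generalize b.r c d = B' at e2 ⊢
  generalize τa.r c d = Ta at e1 ⊢
  generalize σ'.r c d = S' at e2 ⊢
  tauto

theorem bulTwist2 {p x a b τa τb : Setoid A} (hτa : τa.r = Bul p x a)
    (hτb : τb.r = Bul p x b) : Bul p τa τb = Bul p a b := by
  funext c d
  apply propext
  have e1 := bulIff hτa c d
  have e2 := bulIff hτb c d
  show (p.r c d ∧ (τa.r c d ↔ τb.r c d)) ↔ (p.r c d ∧ (a.r c d ↔ b.r c d))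
  generalize p.r c d = P at e1 e2 ⊢
  generalize x.r c d = X at e1 e2
  generalize a.r c d = A' at e1 ⊢
  generalize b.r c d = B' at e2 ⊢
  generalize τa.r c d = Ta at e1 ⊢
  generalize τb.r c d = Tb at e2 ⊢
  tauto

namespace Hyp
variable {one : A} {C : Set (Setoid A)} (h : Hyp one C)
include h

theorem ubarLe {η p w : Setoid A} (hη : IsCMI C η p) (hw : PIP C w η ∨ w = p) :
    w ≤ p := by
  rcases hw with hw | rfl
  · exact (h.pipProj hη hw).1.2.2.1.le
  · exact le_rfl

theorem subgrpProdMem {η p : Setoid A} {H : Set (Setoid A)} (hH : SubgrpU C η p H)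
    {x y σ : Setoid A} (hx : x ∈ H) (hy : y ∈ H) (hσ : σ.r = Bul p x y) : σ ∈ H := by
  obtain ⟨τ, hτH, hτrel⟩ := hH.2.2 x hx y hy
  exact (prodUnique hσ hτrel) ▸ hτH

theorem subgrpCancelMem {η p : Setoid A} (hη : IsCMI C η p) {H : Set (Setoid A)}
    (hH : SubgrpU C η p H) {x y σ : Setoid A} (hyU : PIP C y η ∨ y = p)
    (hx : x ∈ H) (hσH : σ ∈ H) (hσ : σ.r = Bul p x y) : y ∈ H := by
  have hxp : x ≤ p := h.ubarLe hη (by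
    rcases hH.1 hx with hx' | hx'
    · exact Or.inl hx'
    · exact Or.inr hx')
  have hyp : y ≤ p := h.ubarLe hη hyU
  obtain ⟨τ, hτH, hτrel⟩ := hH.2.2 x hx σ hσH
  have : y = τ := prodUnique (bulCancel hxp hyp hσ) hτrel
  exact this ▸ hτH

set_option maxHeartbeats 1600000 in
/-- both factors outside a hyperplane: the product lies inside -/
theorem hypBothOut {η p : Setoid A} (hη : IsCMI C η p) {H : Set (Setoid A)}
    (hHy : IsHyperplaneU C η p H) {x y σ : Setoid A}
    (hxU : PIP C x η ∨ x = p) (hyU : PIP C y η ∨ y = p)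
    (hxn : x ∉ H) (hyn : y ∉ H) (hσ : σ.r = Bul p x y) : σ ∈ H := by
  classical
  have hxp : x ≤ p := h.ubarLe hη hxU
  have hyp : y ≤ p := h.ubarLe hη hyU
  set K : Set (Setoid A) :=
    H ∪ {w | (PIP C w η ∨ w = p) ∧ ∃ τ ∈ H, τ.r = Bul p x w} with hKdef
  have memU : ∀ w ∈ H, PIP C w η ∨ w = p := by
    intro w hw
    rcases hHy.1.1 hw with hw' | hw'
    · exact Or.inl hw'
    · exact Or.inr hw'
  have hKsub : SubgrpU C η p K := by
    refine ⟨?_, Or.inl hHy.1.2.1, ?_⟩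
    · rintro w (hw | hw)
      · exact hHy.1.1 hw
      · rcases hw.1 with h1 | h1
        · exact Or.inl h1
        · exact Or.inr h1
    · rintro a (ha | ha) b (hb | hb)
      · obtain ⟨τ, hτ, hτr⟩ := hHy.1.2.2 a ha b hb
        exact ⟨τ, Or.inl hτ, hτr⟩
      · -- a ∈ H, b ∈ xH
        obtain ⟨τb, hτb, hτbr⟩ := hb.2
        obtain ⟨σ', hσ'r, hσ'U⟩ := h.thm10 hη (memU a ha) hb.1
        obtain ⟨τ', hτ', hτ'r⟩ := hHy.1.2.2 a ha τb hτb
        refine ⟨σ', Or.inr ⟨?_, τ', hτ', ?_⟩, hσ'r⟩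
        · rcases hσ'U with h1 | h1
          · exact Or.inr h1
          · exact Or.inl h1.2
        · rw [hτ'r]
          exact bulTwist hτbr hσ'r
      · -- a ∈ xH, b ∈ H
        obtain ⟨τa, hτa, hτar⟩ := ha.2
        obtain ⟨σ', hσ'r, hσ'U⟩ := h.thm10 hη ha.1 (memU b hb)
        obtain ⟨τ', hτ', hτ'r⟩ := hHy.1.2.2 τa hτa b hb
        refine ⟨σ', Or.inr ⟨?_, τ', hτ', ?_⟩, hσ'r⟩
        · rcases hσ'U with h1 | h1
          · exact Or.inr h1
          · exact Or.inl h1.2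
        · rw [hτ'r]
          exact bulTwist' hτar hσ'r
      · -- both in xH
        obtain ⟨τa, hτa, hτar⟩ := ha.2
        obtain ⟨τb, hτb, hτbr⟩ := hb.2
        obtain ⟨σ', hσ'r, hσ'U⟩ := h.thm10 hη ha.1 hb.1
        obtain ⟨τ', hτ', hτ'r⟩ := hHy.1.2.2 τa hτa τb hτb
        have heq : σ' = τ' := by
          refine prodUnique hσ'r ?_
          rw [hτ'r, bulTwist2 hτar hτbr]
        exact ⟨σ', Or.inl (heq ▸ hτ'), hσ'r⟩
  have hxK : x ∈ K := Or.inr ⟨hxU, p, hHy.1.2.1, bulSelfRel hxp⟩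
  have hKne : K ≠ H := by
    intro he
    rw [he] at hxK
    exact hxn hxK
  rcases hHy.2.2 K hKsub Set.subset_union_left with he | he
  · exact absurd he hKne
  · have hyK : y ∈ K := by
      rw [he]
      rcases hyU with h1 | h1
      · exact Or.inl h1
      · exact Or.inr h1
    rcases hyK with hyK | hyK
    · exact absurd hyK hyn
    · obtain ⟨τ, hτ, hτr⟩ := hyK.2
      exact (prodUnique hσ hτr) ▸ hτ

/-- parity of membership in a hyperplane -/
theorem hypParity {η p : Setoid A} (hη : IsCMI C η p) {H : Set (Setoid A)}
    (hHy : IsHyperplaneU C η p H) {x y σ : Setoid A}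
    (hxU : PIP C x η ∨ x = p) (hyU : PIP C y η ∨ y = p)
    (hσ : σ.r = Bul p x y) : (σ ∈ H ↔ (x ∈ H ↔ y ∈ H)) := by
  classical
  by_cases hx : x ∈ H <;> by_cases hy : y ∈ H
  · exact iff_of_true (h.subgrpProdMem hHy.1 hx hy hσ) (iff_of_true hx hy)
  · refine iff_of_false (fun hσH => hy ?_) (by tauto)
    exact h.subgrpCancelMem hη hHy.1 hyU hx hσH hσ
  · refine iff_of_false (fun hσH => hx ?_) (by tauto)
    exact h.subgrpCancelMem hη hHy.1 hxU hy hσH (by rw [hσ, bulComm])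
  · refine iff_of_true (h.hypBothOut hη hHy hxU hyU hx hy hσ) (by tauto)

end Hyp
end Aux9
theorem xnorIff {P1 P2 Q1 Q2 : Prop} (hx : ¬(P1 ↔ Q1)) (hy : ¬(P2 ↔ Q2)) :
    (P1 ↔ P2) ↔ (Q1 ↔ Q2) := by tauto

set_option maxHeartbeats 1600000 in
/-- Theorem 21: the family `ℋ` of hereditary subsets of `Cm` is closed under the
equivalence operation `S ↔ T = Cm \ ((S Δ T)↓)` of the Heyting algebra of upward
closed subsets of `Cm`. -/
theorem stmt16 (one : A) (C : Set (Setoid A))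
    (hInf : ∀ S ⊆ C, sInf S ∈ C) (hSup : ∀ S ⊆ C, sSup S ∈ C)
    (hDir : ∀ D ⊆ C, D.Nonempty → DirectedOn (· ≤ ·) D →
      ∀ x y : A, (sSup D).r x y ↔ ∃ s ∈ D, s.r x y)
    (hM : ∀ x ∈ C, ∀ y ∈ C, ∀ z ∈ C, x ≤ z → x ⊔ y ⊓ z = (x ⊔ y) ⊓ z)
    (hO : ∀ α ∈ C, ∀ a b : A, α ⊔ theta C one a = α ⊔ theta C one b ↔ α.r a b)
    (hR : ∀ α ∈ C, ∀ β ∈ C, (∀ x : A, α.r one x ↔ β.r one x) → α = β)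
    (hP : ∀ φ ψ p q : Setoid A, IsCMI C φ p → IsCMI C ψ q →
      Projective C (φ, p) (ψ, q) → p = q) :
    ∀ S T : Set (Setoid A), Hered C S → Hered C T → Hered C (EqOpU C S T) := by
  have h : Hyp one C := ⟨hInf, hSup, hDir, hM, hO, hR, hP⟩
  intro S T hS hT
  classical
  refine ⟨fun μ hμ => hμ.1, ?_, ?_⟩
  · intro μ hμ ν q hq hle
    refine ⟨⟨q, hq⟩, fun hdc => hμ.2 ?_⟩
    obtain ⟨-, ξ, hξ, hνξ⟩ := hdc
    exact ⟨hμ.1, ξ, hξ, hle.trans hνξ⟩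
  · intro η p hcmi hUp
    have hUdata : ∀ φ, PIP C φ η → IsCMI C φ p ∧ Projective C (φ, p) (η, p) :=
      fun φ hφ => h.pipProj hcmi hφ
    have hpnU : ¬ PIP C p η := by
      intro hp
      exact absurd (hUdata p hp).1.2.2.1 (lt_irrefl p)
    have hmemCm : ∀ φ, PIP C φ η → φ ∈ CmSet C := fun φ hφ => ⟨p, (hUdata φ hφ).1⟩
    have hplarger : ∀ ξ q, IsCMI C ξ q → η < ξ → ξ ∈ EqOpU C S T :=
      fun ξ q hq hlt => hUp ⟨⟨q, hq⟩, hlt⟩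
    have hZnotSD : ∀ ξ, ξ ∈ CmSet C → ξ ∈ EqOpU C S T → ξ ∉ (S \ T ∪ T \ S) := by
      intro ξ hcm hz hmem
      exact hz.2 ⟨hcm, ξ, hmem, le_rfl⟩
    have hSD_cm : ∀ ξ ∈ (S \ T ∪ T \ S), ξ ∈ CmSet C := by
      rintro ξ (⟨h1, -⟩ | ⟨h1, -⟩)
      exacts [hS.1 ξ h1, hT.1 ξ h1]
    have charZ : ∀ φ, PIP C φ η → (φ ∈ EqOpU C S T ↔ (φ ∈ S ↔ φ ∈ T)) := by
      intro φ hφ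
      constructor
      · intro hz
        by_contra hiff
        have hmem : φ ∈ (S \ T ∪ T \ S) := by
          by_cases hs : φ ∈ S
          · exact Or.inl ⟨hs, fun ht => hiff ⟨fun _ => ht, fun _ => hs⟩⟩
          · refine Or.inr ⟨?_, hs⟩
            by_contra ht
            exact hiff ⟨fun hs' => absurd hs' hs, fun ht' => absurd ht' ht⟩
        exact (hZnotSD φ (hmemCm φ hφ) hz) hmem
      · intro hiff
        refine ⟨hmemCm φ hφ, fun hdc => ?_⟩
        obtain ⟨-, ξ, hξmem, hle⟩ := hdc
        rcases lt_or_eq_of_le hle with hlt | heq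
        · obtain ⟨qξ, hqξ⟩ := hSD_cm ξ hξmem
          have hpξ : p ≤ ξ := (hUdata φ hφ).1.2.2.2 ξ hqξ.1 hlt
          have hηξ : η < ξ := lt_of_lt_of_le hcmi.2.2.1 hpξ
          exact hZnotSD ξ ⟨qξ, hqξ⟩ (hplarger ξ qξ hqξ hηξ) hξmem
        · rw [← heq] at hξmem
          rcases hξmem with ⟨h1, h2⟩ | ⟨h1, h2⟩
          · exact h2 (hiff.1 h1)
          · exact h2 (hiff.2 h1)
    by_cases hAll : ∀ θ, (∃ q, IsCMI C θ q) → η < θ → θ ∈ S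
    · -- case B : U⁺ inside S (hence inside T)
      have hAllT : ∀ θ, (∃ q, IsCMI C θ q) → η < θ → θ ∈ T := by
        intro θ hq hθ
        obtain ⟨q, hq⟩ := hq
        have hθZ := hplarger θ q hq hθ
        by_contra ht
        exact hZnotSD θ ⟨q, hq⟩ hθZ (Or.inl ⟨hAll θ ⟨q, hq⟩ hθ, ht⟩)
      have hSdisj := hS.2.2 η p hcmi (fun θ hθ => hAll θ hθ.1 hθ.2)
      have hTdisj := hT.2.2 η p hcmi (fun θ hθ => hAllT θ hθ.1 hθ.2)
      have memGen : ∀ (X : Set (Setoid A)) φ, PIP C φ η →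
          (φ ∈ X ∩ {φ | PIP C φ η} ∪ {p} ↔ φ ∈ X) := by
        intro X φ hφ
        constructor
        · rintro (⟨h1, -⟩ | h1)
          · exact h1
          · exact absurd ((h1 : φ = p) ▸ hφ) hpnU
        · intro h1; exact Or.inl ⟨h1, hφ⟩
      rcases hSdisj with hSU | hSHyp
      · have fullS : ∀ φ, PIP C φ η → φ ∈ S := by
          intro φ hφ
          refine (memGen S φ hφ).1 ?_
          rw [hSU]; exact Or.inl hφ
        rcases hTdisj with hTU | hTHyp
        · -- both full
          have fullT : ∀ φ, PIP C φ η → φ ∈ T := by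
            intro φ hφ
            refine (memGen T φ hφ).1 ?_
            rw [hTU]; exact Or.inl hφ
          left
          ext w
          constructor
          · rintro (⟨-, h2⟩ | h1)
            · exact Or.inl h2
            · exact Or.inr h1
          · rintro (h1 | h1)
            · exact Or.inl ⟨(charZ w h1).2 (iff_of_true (fullS w h1) (fullT w h1)), h1⟩
            · exact Or.inr h1
        · -- S full, T hyperplane
          right
          have hWHt : EqOpU C S T ∩ {φ | PIP C φ η} ∪ {p} = T ∩ {φ | PIP C φ η} ∪ {p} := by
            ext w
            constructor
            · rintro (⟨hwZ, hwU⟩ | hw1)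
              · exact Or.inl ⟨((charZ w hwU).1 hwZ).1 (fullS w hwU), hwU⟩
              · exact Or.inr hw1
            · rintro (⟨hwT, hwU⟩ | hw1)
              · exact Or.inl ⟨(charZ w hwU).2 (iff_of_true (fullS w hwU) hwT), hwU⟩
              · exact Or.inr hw1
          rw [hWHt]; exact hTHyp
      · rcases hTdisj with hTU | hTHyp
        · -- T full, S hyperplane
          right
          have fullT : ∀ φ, PIP C φ η → φ ∈ T := by
            intro φ hφ
            refine (memGen T φ hφ).1 ?_
            rw [hTU]; exact Or.inl hφ
          have hWHs : EqOpU C S T ∩ {φ | PIP C φ η} ∪ {p} = S ∩ {φ | PIP C φ η} ∪ {p} := by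
            ext w
            constructor
            · rintro (⟨hwZ, hwU⟩ | hw1)
              · exact Or.inl ⟨((charZ w hwU).1 hwZ).2 (fullT w hwU), hwU⟩
              · exact Or.inr hw1
            · rintro (⟨hwS, hwU⟩ | hw1)
              · exact Or.inl ⟨(charZ w hwU).2 (iff_of_true hwS (fullT w hwU)), hwU⟩
              · exact Or.inr hw1
          rw [hWHs]; exact hSHyp
        · -- both hyperplanes
          have hWiff : ∀ w, (PIP C w η ∨ w = p) →
              (w ∈ EqOpU C S T ∩ {φ | PIP C φ η} ∪ {p} ↔
                (w ∈ S ∩ {φ | PIP C φ η} ∪ {p} ↔ w ∈ T ∩ {φ | PIP C φ η} ∪ {p})) := by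
            intro w hw
            rcases hw with hw | hwp
            · rw [memGen (EqOpU C S T) w hw, memGen S w hw, memGen T w hw]
              exact charZ w hw
            · rw [hwp]
              exact iff_of_true (Or.inr rfl) (iff_of_true (Or.inr rfl) (Or.inr rfl))
          by_cases hHeq : S ∩ {φ | PIP C φ η} ∪ {p} = T ∩ {φ | PIP C φ η} ∪ {p}
          · left
            ext w
            constructor
            · rintro (⟨-, h2⟩ | h1)
              · exact Or.inl h2
              · exact Or.inr h1
            · rintro (h1 | h1)
              · refine Or.inl ⟨(charZ w h1).2 ?_, h1⟩
                rw [← memGen S w h1, hHeq, memGen T w h1]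
              · exact Or.inr h1
          · right
            have ubarOf : ∀ w, w ∈ ({φ | PIP C φ η} ∪ {p} : Set (Setoid A)) →
                (PIP C w η ∨ w = p) := by
              rintro w (hw | hw)
              · exact Or.inl hw
              · exact Or.inr hw
            have hWsub : SubgrpU C η p (EqOpU C S T ∩ {φ | PIP C φ η} ∪ {p}) := by
              refine ⟨?_, Or.inr rfl, ?_⟩
              · rintro w (⟨-, hwU⟩ | hw1)
                · exact Or.inl hwU
                · exact Or.inr hw1
              · intro a ha b hb
                have haU : PIP C a η ∨ a = p := by
                  rcases ha with ⟨-, h2⟩ | h1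
                  · exact Or.inl h2
                  · exact Or.inr h1
                have hbU : PIP C b η ∨ b = p := by
                  rcases hb with ⟨-, h2⟩ | h1
                  · exact Or.inl h2
                  · exact Or.inr h1
                obtain ⟨σ, hσr, hσU⟩ := h.thm10 hcmi haU hbU
                have hσU' : PIP C σ η ∨ σ = p := by
                  rcases hσU with h1 | h1
                  · exact Or.inr h1
                  · exact Or.inl h1.2
                refine ⟨σ, ?_, hσr⟩
                have hpar1 := h.hypParity hcmi hSHyp haU hbU hσr
                have hpar2 := h.hypParity hcmi hTHyp haU hbU hσr
                have ha' := (hWiff a haU).1 ha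
                have hb' := (hWiff b hbU).1 hb
                refine (hWiff σ hσU').2 ?_
                rw [hpar1, hpar2]
                exact iff_congr ha' hb'
            refine ⟨hWsub, ?_, ?_⟩
            · intro he
              apply hHeq
              have hall : ∀ w, PIP C w η → (w ∈ S ↔ w ∈ T) := by
                intro w hw
                have hwW : w ∈ EqOpU C S T ∩ {φ | PIP C φ η} ∪ {p} := by
                  rw [he]; exact Or.inl hw
                rcases hwW with ⟨h1, -⟩ | h1
                · exact (charZ w hw).1 h1
                · exact absurd ((h1 : w = p) ▸ hw) hpnU
              ext w
              constructor
              · rintro (⟨h1, h2⟩ | h1)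
                · exact Or.inl ⟨(hall w h2).1 h1, h2⟩
                · exact Or.inr h1
              · rintro (⟨h1, h2⟩ | h1)
                · exact Or.inl ⟨(hall w h2).2 h1, h2⟩
                · exact Or.inr h1
            · intro K hK hWK
              by_cases hKW : K ⊆ EqOpU C S T ∩ {φ | PIP C φ η} ∪ {p}
              · exact Or.inl (Set.Subset.antisymm hKW hWK)
              · right
                obtain ⟨x₀, hx₀K, hx₀W⟩ := Set.not_subset.1 hKW
                refine Set.Subset.antisymm hK.1 ?_
                intro y hyU'
                by_cases hyW : y ∈ EqOpU C S T ∩ {φ | PIP C φ η} ∪ {p}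
                · exact hWK hyW
                · have hx₀U : PIP C x₀ η ∨ x₀ = p := ubarOf x₀ (hK.1 hx₀K)
                  have hyU : PIP C y η ∨ y = p := ubarOf y hyU'
                  obtain ⟨σ, hσr, hσU⟩ := h.thm10 hcmi hx₀U hyU
                  have hσU' : PIP C σ η ∨ σ = p := by
                    rcases hσU with h1 | h1
                    · exact Or.inr h1
                    · exact Or.inl h1.2
                  have hσW : σ ∈ EqOpU C S T ∩ {φ | PIP C φ η} ∪ {p} := by
                    have hpar1 := h.hypParity hcmi hSHyp hx₀U hyU hσr
                    have hpar2 := h.hypParity hcmi hTHyp hx₀U hyU hσr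
                    have hx'' : ¬ (x₀ ∈ S ∩ {φ | PIP C φ η} ∪ {p} ↔
                        x₀ ∈ T ∩ {φ | PIP C φ η} ∪ {p}) :=
                      fun hh => hx₀W ((hWiff x₀ hx₀U).2 hh)
                    have hy'' : ¬ (y ∈ S ∩ {φ | PIP C φ η} ∪ {p} ↔
                        y ∈ T ∩ {φ | PIP C φ η} ∪ {p}) :=
                      fun hh => hyW ((hWiff y hyU).2 hh)
                    refine (hWiff σ hσU').2 ?_
                    rw [hpar1, hpar2]
                    exact xnorIff hx'' hy''
                  have hσK : σ ∈ K := hWK hσW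
                  obtain ⟨τ, hτK, hτr⟩ := hK.2.2 x₀ hx₀K σ hσK
                  have hyτ : y = τ := prodUnique
                    (bulCancel (h.ubarLe hcmi hx₀U) (h.ubarLe hcmi hyU) hσr) hτr
                  exact hyτ ▸ hτK
    · -- case A : some θ₀ above η outside S
      push_neg at hAll
      obtain ⟨θ₀, ⟨q₀, hq₀⟩, hη₀, hθ₀S⟩ := hAll
      have hθ₀Z : θ₀ ∈ EqOpU C S T := hplarger θ₀ q₀ hq₀ hη₀
      have hθ₀T : θ₀ ∉ T := by
        intro ht
        exact hZnotSD θ₀ ⟨q₀, hq₀⟩ hθ₀Z (Or.inr ⟨ht, hθ₀S⟩)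
      have hSU : ∀ φ, PIP C φ η → φ ∉ S := by
        intro φ hφ hφS
        have hφθ : φ ≤ θ₀ :=
          (hUdata φ hφ).1.2.2.1.le.trans (hcmi.2.2.2 θ₀ hq₀.1 hη₀)
        exact hθ₀S (hS.2.1 φ hφS θ₀ q₀ hq₀ hφθ)
      have hTU : ∀ φ, PIP C φ η → φ ∉ T := by
        intro φ hφ hφT
        have hφθ : φ ≤ θ₀ :=
          (hUdata φ hφ).1.2.2.1.le.trans (hcmi.2.2.2 θ₀ hq₀.1 hη₀)
        exact hθ₀T (hT.2.1 φ hφT θ₀ q₀ hq₀ hφθ)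
      left
      ext w
      constructor
      · rintro (⟨-, h2⟩ | h1)
        · exact Or.inl h2
        · exact Or.inr h1
      · rintro (h1 | h1)
        · exact Or.inl ⟨(charZ w h1).2 (iff_of_false (hSU w h1) (hTU w h1)), h1⟩
        · exact Or.inr h1
end

section
/- Assume that A is finite and that conditions (M), (O), (R), (P) hold. Let δ(C) denote the length of the lattice C, i.e., the largest n for which there is a chain c₀ < c₁ < ⋯ < cₙ in C. Then 2^{δ(C)} = ∏_{U ∈ Cm/∼} (|U| + 1); equivalently, δ(C) is the sum over all PIP equivalence classes U of the dimensions of the Boolean groups (Ū, •) regarded as vector spaces over the two-element field, each |U| + 1 = |Ū| being a power of 2. (This is Theorem 16 of the paper, a formula for the length of the congruence lattice of a finite strongly Fregean algebra.) -/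
variable {A : Type*}

/-! ### Auxiliary development -/

instance [Finite A] : Finite (Setoid A) :=
  Finite.of_injective (fun s : Setoid A => ⇑s) fun a b h => Setoid.ext fun x y => by
    simp only at h; rw [Setoid.eq_iff_rel_eq.mpr h]

namespace Frg

/-- Bundle of hypotheses for the master induction. -/
structure Fr (A : Type*) (one : A) where
  C : Set (Setoid A)
  bot : Setoid A
  botC : bot ∈ C
  botLe : ∀ γ ∈ C, bot ≤ γ
  topC : (⊤ : Setoid A) ∈ C
  infC : ∀ S ⊆ C, S.Nonempty → sInf S ∈ C
  supC : ∀ S ⊆ C, S.Nonempty → sSup S ∈ C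
  hM : ∀ x ∈ C, ∀ y ∈ C, ∀ z ∈ C, x ≤ z → x ⊔ y ⊓ z = (x ⊔ y) ⊓ z
  hO : ∀ α ∈ C, ∀ a b : A, α ⊔ theta C one a = α ⊔ theta C one b ↔ α.r a b
  hR : ∀ α ∈ C, ∀ β ∈ C, (∀ x : A, α.r one x ↔ β.r one x) → α = β
  hP : ∀ φ ψ p q : Setoid A, IsCMI C φ p → IsCMI C ψ q →
      Projective C (φ, p) (ψ, q) → p = q

lemma iff3_1 {a b c : Prop} (h : (a ↔ b) ↔ (b ↔ c)) : a ↔ c := by tauto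

lemma iff3_2 {a b c : Prop} (h : a ↔ c) : (a ↔ b) ↔ (b ↔ c) := by tauto

lemma iff3_4 {a b c : Prop} (h : (a ↔ b) ↔ (c ↔ b)) : a ↔ c := by tauto

lemma r_of_le {s t : Setoid A} (h : s ≤ t) {x y : A} (hx : s.r x y) : t.r x y := h hx

lemma inf_r {s t : Setoid A} {x y : A} : (s ⊓ t).r x y ↔ s.r x y ∧ t.r x y := Iff.rfl

/-- The class of `one` under a setoid. -/
def oc (one : A) (α : Setoid A) : Set A := {x | α.r one x}

lemma oc_mono {one : A} {α β : Setoid A} (h : α ≤ β) : oc one α ⊆ oc one β :=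
  fun _ hx => h hx

lemma oc_inf {one : A} (α β : Setoid A) : oc one (α ⊓ β) = oc one α ∩ oc one β := rfl

namespace Fr

variable {one : A} (K : Fr A one)

lemma pairInf {a b : Setoid A} (ha : a ∈ K.C) (hb : b ∈ K.C) : a ⊓ b ∈ K.C := by
  have := K.infC {a, b} (by simp [Set.insert_subset_iff, ha, hb]) ⟨a, by simp⟩
  rwa [sInf_pair] at this

lemma pairSup {a b : Setoid A} (ha : a ∈ K.C) (hb : b ∈ K.C) : a ⊔ b ∈ K.C := by
  have := K.supC {a, b} (by simp [Set.insert_subset_iff, ha, hb]) ⟨a, by simp⟩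
  rwa [sSup_pair] at this

lemma theta_mem (a b : A) : theta K.C a b ∈ K.C := by
  have hne : ({s | s ∈ K.C ∧ s.r a b} : Set (Setoid A)).Nonempty :=
    ⟨⊤, K.topC, by simp [Setoid.top_def]⟩
  exact K.infC _ (fun s hs => hs.1) hne

lemma theta_r (a b : A) : (theta K.C a b).r a b := fun s hs => hs.2

lemma theta_le {α : Setoid A} (hα : α ∈ K.C) {a b : A} (h : α.r a b) :
    theta K.C a b ≤ α := sInf_le ⟨hα, h⟩

lemma oc_eq_iff {α β : Setoid A} (hα : α ∈ K.C) (hβ : β ∈ K.C) :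
    α = β ↔ oc one α = oc one β := by
  constructor
  · rintro rfl; rfl
  · intro h
    exact K.hR α hα β hβ fun x => Set.ext_iff.mp h x

lemma gen {α : Setoid A} (hα : α ∈ K.C) :
    α = sSup ((fun a => theta K.C one a) '' oc one α) := by
  set β := sSup ((fun a => theta K.C one a) '' oc one α) with hβdef
  have hone : (one : A) ∈ oc one α := α.refl one
  have hβC : β ∈ K.C := K.supC _ (by rintro s ⟨a, _, rfl⟩; exact K.theta_mem one a)
      ⟨_, ⟨one, hone, rfl⟩⟩
  have hβα : β ≤ α := sSup_le (by rintro s ⟨a, ha, rfl⟩; exact K.theta_le hα ha)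
  refine K.hR α hα β hβC fun x => ⟨fun hx => ?_, fun hx => hβα hx⟩
  have hle : theta K.C one x ≤ β := by
    rw [hβdef]
    exact le_sSup ⟨x, hx, rfl⟩
  exact hle (K.theta_r one x)

lemma oc_le_iff {α β : Setoid A} (hα : α ∈ K.C) (hβ : β ∈ K.C) :
    oc one α ⊆ oc one β ↔ α ≤ β := by
  constructor
  · intro h
    conv_lhs => rw [K.gen hα]
    refine sSup_le ?_
    rintro s ⟨a, ha, rfl⟩
    exact K.theta_le hβ (h ha)
  · exact fun h => oc_mono h

lemma oc_ssub {α β : Setoid A} (hα : α ∈ K.C) (hβ : β ∈ K.C) (h : α < β) :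
    ∃ x, β.r one x ∧ ¬ α.r one x := by
  by_contra hc
  push_neg at hc
  have : oc one β ⊆ oc one α := fun x hx => hc x hx
  exact absurd ((K.oc_le_iff hβ hα).1 this) (not_le_of_gt h)

/-- covers within `C` -/
def Cov (a b : Setoid A) : Prop :=
  a ∈ K.C ∧ b ∈ K.C ∧ a < b ∧ ∀ γ ∈ K.C, a ≤ γ → γ ≤ b → γ = a ∨ γ = b

lemma cmi_cov {η p : Setoid A} (h : IsCMI K.C η p) : K.Cov η p := by
  obtain ⟨h1, h2, h3, h4⟩ := h
  refine ⟨h1, h2, h3, fun γ hγ hle hle' => ?_⟩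
  rcases eq_or_lt_of_le hle with he | hlt
  · exact Or.inl he.symm
  · exact Or.inr (le_antisymm hle' (h4 γ hγ hlt))

lemma exists_max_not_ge [Finite A] {a b : Setoid A} (ha : a ∈ K.C) (hb : b ∈ K.C)
    (h : ¬ b ≤ a) :
    ∃ χ, χ ∈ K.C ∧ a ≤ χ ∧ ¬ b ≤ χ ∧ IsCMI K.C χ (χ ⊔ b) ∧
      (∀ γ ∈ K.C, χ < γ → b ≤ γ) := by
  classical
  set S : Set (Setoid A) := {γ | γ ∈ K.C ∧ a ≤ γ ∧ ¬ b ≤ γ} with hS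
  have hSne : S.Nonempty := ⟨a, ha, le_refl a, h⟩
  obtain ⟨χ, hχS, hmax⟩ := Set.Finite.exists_maximalFor id S (Set.toFinite S) hSne
  have hmax' : ∀ γ ∈ K.C, χ < γ → b ≤ γ := by
    intro γ hγ hlt
    by_contra hbγ
    have : γ ∈ S := ⟨hγ, le_trans hχS.2.1 hlt.le, hbγ⟩
    exact absurd (hmax this hlt.le) (not_le_of_gt hlt)
  have hcmi : IsCMI K.C χ (χ ⊔ b) := by
    refine ⟨hχS.1, K.pairSup hχS.1 hb, lt_of_le_of_ne le_sup_left ?_, fun β hβ hlt => ?_⟩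
    · intro he
      exact hχS.2.2 (he ▸ le_sup_right)
    · exact sup_le hlt.le (hmax' β hβ hlt)
  exact ⟨χ, hχS.1, hχS.2.1, hχS.2.2, hcmi, hmax'⟩

lemma exists_min_gt [Finite A] {a : Setoid A} {b : Setoid A} (hb : b ∈ K.C)
    (h : a < b) : ∃ μ, μ ∈ K.C ∧ a < μ ∧ ∀ γ ∈ K.C, a < γ → ¬ γ < μ := by
  classical
  set S : Set (Setoid A) := {γ | γ ∈ K.C ∧ a < γ} with hS
  have hSne : S.Nonempty := ⟨b, hb, h⟩
  obtain ⟨μ, hμS, hmin⟩ := Set.Finite.exists_minimalFor id S (Set.toFinite S) hSne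
  refine ⟨μ, hμS.1, hμS.2, fun γ hγ hlt hcon => ?_⟩
  exact absurd (hmin ⟨hγ, hlt⟩ hcon.le) (not_le_of_gt hcon)

/-- up-transpose of a prime interval is prime -/
lemma cov_sup {a b c : Setoid A} (hb : b ∈ K.C) (hc : c ∈ K.C)
    (habc : a = b ⊓ c) (hcov : K.Cov a b) : K.Cov c (b ⊔ c) := by
  obtain ⟨haC, hbC, hab, hdic⟩ := hcov
  have hcb : ¬ b ≤ c := by
    intro h
    exact absurd (habc.trans (inf_eq_left.mpr h)) (ne_of_lt hab)
  refine ⟨hc, K.pairSup hb hc, lt_of_le_of_ne le_sup_right ?_, fun γ hγ hcγ hγbc => ?_⟩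
  · intro he; exact hcb (he ▸ le_sup_left)
  · have key : c ⊔ b ⊓ γ = (c ⊔ b) ⊓ γ := K.hM c hc b hb γ hγ hcγ
    have hbγ : b ⊓ γ ∈ K.C := K.pairInf hb hγ
    have h1 : a ≤ b ⊓ γ := by
      rw [habc]; exact le_inf inf_le_left (le_trans inf_le_right hcγ)
    rcases hdic (b ⊓ γ) hbγ h1 inf_le_left with h2 | h2
    · left
      have : c ⊔ b ⊓ γ = c := by rw [h2, habc, inf_comm b c, sup_inf_self]
      rw [key] at this
      rw [← this, inf_eq_right.mpr (hγbc.trans (le_of_eq (sup_comm b c)))]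
    · right
      have : c ⊔ b ⊓ γ = c ⊔ b := by rw [h2]
      rw [key] at this
      have : γ = (c ⊔ b) ⊓ γ := (inf_eq_right.mpr (hγbc.trans (le_of_eq (sup_comm b c)))).symm
      rw [this, key.symm, h2, sup_comm c b]

/-- down-transpose of a prime interval is prime -/
lemma cov_inf {a b c : Setoid A} (ha : a ∈ K.C) (hb : b ∈ K.C) (hc : c ∈ K.C)
    (habc : a = b ⊓ c) (hcov : K.Cov c (b ⊔ c)) : K.Cov a b := by
  obtain ⟨hcC, hbcC, hcbc, hdic⟩ := hcov
  have hbc : ¬ b ≤ c := fun h => absurd (sup_eq_right.mpr h) (ne_of_gt hcbc)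
  have hab : a < b := by
    rw [habc]
    exact lt_of_le_of_ne inf_le_left (fun h => hbc (inf_eq_left.mp h))
  refine ⟨ha, hb, hab, fun γ hγ haγ hγb => ?_⟩
  have key : γ ⊔ c ⊓ b = (γ ⊔ c) ⊓ b := by
    have := K.hM γ hγ c hc b hb hγb
    exact this
  have hγc : γ ⊔ c ∈ K.C := K.pairSup hγ hc
  have h1 : c ≤ γ ⊔ c := le_sup_right
  have h2 : γ ⊔ c ≤ b ⊔ c := sup_le (le_trans hγb le_sup_left) le_sup_right
  have hγeq : γ = γ ⊔ c ⊓ b := by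
    rw [inf_comm c b, ← habc]
    exact (sup_eq_left.mpr haγ).symm
  rcases hdic (γ ⊔ c) hγc h1 h2 with h3 | h3
  · left
    rw [hγeq, key, h3, inf_comm]
    exact habc.symm
  · right
    rw [hγeq, key, h3]
    exact inf_eq_right.mpr le_sup_left

/-- The splitting lemma: a prime quotient splits each upper class in at most two. -/
lemma split [Finite A] {a b : Setoid A} (hcov : K.Cov a b) {x y z : A}
    (hxy : b.r x y) (hxz : b.r x z) (haxy : ¬ a.r x y) (haxz : ¬ a.r x z) : a.r y z := by
  classical
  obtain ⟨haC, hbC, hab, hdic⟩ := hcov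
  -- pass to a CMI χ with χ ⊓ b = a
  obtain ⟨χ, hχC, haχ, hbχ, hχcmi, hχmax⟩ := K.exists_max_not_ge haC hbC (not_le_of_gt hab)
  set p := χ ⊔ b with hp
  have hχb : χ ⊓ b = a := by
    rcases hdic (χ ⊓ b) (K.pairInf hχC hbC) (le_inf haχ hab.le) inf_le_right with h | h
    · exact h
    · exact absurd (inf_eq_right.mp h) hbχ
  have hblep : b ≤ p := le_sup_right
  have hrb : ∀ u v : A, b.r u v → ¬ a.r u v → ¬ χ.r u v := by
    intro u v h1 h2 h3
    exact h2 (hχb ▸ (inf_r.mpr ⟨h3, h1⟩))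
  by_contra hyz
  have haa : ¬ a.r y z := hyz
  have hbyz : b.r y z := b.trans (b.symm hxy) hxz
  have hχxy := hrb x y hxy haxy
  have hχxz := hrb x z hxz haxz
  have hχyz := hrb y z hbyz haa
  -- three congruences
  have hdi : ∀ w : A, χ ⊔ theta K.C one w = χ ∨ χ ⊔ theta K.C one w = p ⊔ theta K.C one w := by
    intro w
    rcases eq_or_lt_of_le (le_sup_left : χ ≤ χ ⊔ theta K.C one w) with h | h
    · exact Or.inl h.symm
    · right
      have hple := hχcmi.2.2.2 _ (K.pairSup hχC (K.theta_mem one w)) h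
      have hχp : χ ≤ p := le_sup_left
      calc χ ⊔ theta K.C one w = (χ ⊔ theta K.C one w) ⊔ p := (sup_eq_left.mpr hple).symm
        _ = (χ ⊔ p) ⊔ theta K.C one w := by
            rw [sup_assoc, sup_comm (theta K.C one w) p, ← sup_assoc]
        _ = p ⊔ theta K.C one w := by rw [sup_eq_right.mpr hχp]
  have hpC : p ∈ K.C := K.pairSup hχC hbC
  have hq : ∀ u v : A, b.r u v → p ⊔ theta K.C one u = p ⊔ theta K.C one v := by
    intro u v huv
    exact (K.hO p hpC u v).mpr (hblep huv)
  have hne : ∀ u v : A, ¬ χ.r u v →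
      χ ⊔ theta K.C one u ≠ χ ⊔ theta K.C one v := by
    intro u v h1 h2
    exact h1 ((K.hO χ hχC u v).mp h2)
  have hxy' := hne x y hχxy
  have hxz' := hne x z hχxz
  have hyz' := hne y z hχyz
  have hqxy := hq x y hxy
  have hqxz := hq x z hxz
  rcases hdi x with h1 | h1 <;> rcases hdi y with h2 | h2 <;> rcases hdi z with h3 | h3
  · exact hxy' (h1.trans h2.symm)
  · exact hxy' (h1.trans h2.symm) |>.elim
  all_goals first
    | exact hxy' (h1.trans h2.symm)
    | exact hxz' (h1.trans h3.symm)
    | exact hyz' (h2.trans h3.symm)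
    | exact hxy' (h1.trans (hqxy.trans h2.symm))
    | exact hxz' (h1.trans (hqxz.trans h3.symm))
    | exact hyz' (h2.trans ((hqxy.symm.trans hqxz).trans h3.symm))

end Fr

lemma persp_symm {C : Set (Setoid A)} {x y : Setoid A × Setoid A} (h : Persp C x y) :
    Persp C y x := by
  obtain ⟨h1, h2, h3, h4, h5⟩ := h
  exact ⟨h3, h4, h1, h2, h5.symm⟩

lemma proj_symm {C : Set (Setoid A)} {x y : Setoid A × Setoid A} (h : Projective C x y) :
    Projective C y x :=
  haveI : Std.Symm (Persp C) := ⟨fun _ _ h => persp_symm h⟩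
  (Relation.ReflTransGen.symmetric (r := Persp C)).symm _ _ h

lemma proj_mono {C C' : Set (Setoid A)} (hCC : C ⊆ C') {x y : Setoid A × Setoid A}
    (h : Projective C x y) : Projective C' x y :=
  Relation.ReflTransGen.mono (p := Persp C')
    (fun _ _ ⟨h1, h2, h3, h4, h5⟩ => ⟨hCC h1, hCC h2, hCC h3, hCC h4, h5⟩) _ _ h

lemma cmi_cover_unique {C : Set (Setoid A)} {η p q : Setoid A}
    (h1 : IsCMI C η p) (h2 : IsCMI C η q) : p = q :=
  le_antisymm (h1.2.2.2 q h2.2.1 h2.2.2.1) (h2.2.2.2 p h1.2.1 h1.2.2.1)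

lemma pip_refl {C : Set (Setoid A)} {η p : Setoid A} (h : IsCMI C η p) : PIP C η η :=
  ⟨p, p, h, h, Relation.ReflTransGen.refl⟩

lemma pip_symm {C : Set (Setoid A)} {η η' : Setoid A} (h : PIP C η η') : PIP C η' η := by
  obtain ⟨p, q, h1, h2, h3⟩ := h
  exact ⟨q, p, h2, h1, proj_symm h3⟩

lemma pip_trans {C : Set (Setoid A)} {x y z : Setoid A}
    (h : PIP C x y) (h' : PIP C y z) : PIP C x z := by
  obtain ⟨p, q, h1, h2, h3⟩ := h
  obtain ⟨q', s, h4, h5, h6⟩ := h'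
  exact ⟨p, s, h1, h5, h3.trans ((cmi_cover_unique h2 h4) ▸ h6)⟩

lemma pip_cmi_left {C : Set (Setoid A)} {x y : Setoid A} (h : PIP C x y) :
    ∃ p, IsCMI C x p := ⟨h.choose, h.choose_spec.choose_spec.1⟩

namespace Fr

variable {one : A} (K : Fr A one)

/-- `δ` is a third element of the prime interval square spanned by `φ, ψ` below `p`. -/
def Third (p φ ψ δ : Setoid A) : Prop :=
  δ ∈ K.C ∧ φ ⊓ ψ < δ ∧ δ < p ∧ δ ≠ φ ∧ δ ≠ ψ

variable {p φ ψ : Setoid A}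

lemma cmi_sup_eq (hφ : IsCMI K.C φ p) (hψ : IsCMI K.C ψ p) (hne : φ ≠ ψ) :
    φ ⊔ ψ = p := by
  have h1 : ¬ ψ ≤ φ := by
    intro h
    rcases eq_or_lt_of_le h with h' | h'
    · exact hne h'.symm
    · exact absurd (hψ.2.2.2 φ hφ.1 h') (not_le_of_gt hφ.2.2.1)
  have h2 : φ < φ ⊔ ψ := lt_of_le_of_ne le_sup_left (fun h => h1 (h ▸ le_sup_right))
  exact le_antisymm (sup_le hφ.2.2.1.le hψ.2.2.1.le) (hφ.2.2.2 _ (K.pairSup hφ.1 hψ.1) h2)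

lemma cov_base (hφ : IsCMI K.C φ p) (hψ : IsCMI K.C ψ p) (hne : φ ≠ ψ) :
    K.Cov (φ ⊓ ψ) φ := by
  have := K.cmi_sup_eq hφ hψ hne
  refine K.cov_inf (K.pairInf hφ.1 hψ.1) hφ.1 hψ.1 rfl ?_
  rw [this]
  exact K.cmi_cov hψ

lemma third_inf (hφ : IsCMI K.C φ p) (hψ : IsCMI K.C ψ p) (hne : φ ≠ ψ)
    {δ : Setoid A} (h : K.Third p φ ψ δ) : δ ⊓ φ = φ ⊓ ψ ∧ δ ⊓ ψ = φ ⊓ ψ := by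
  obtain ⟨hδC, h1, h2, h3, h4⟩ := h
  have covφ := K.cov_base hφ hψ hne
  have covψ := K.cov_base hψ hφ (Ne.symm hne)
  rw [inf_comm ψ φ] at covψ
  have hmain : ∀ χ : Setoid A, IsCMI K.C χ p → K.Cov (φ ⊓ ψ) χ → δ ≠ χ → δ ⊓ χ = φ ⊓ ψ := by
    intro χ hχ covχ hδχ
    rcases covχ.2.2.2 (δ ⊓ χ) (K.pairInf hδC hχ.1) (le_inf h1.le covχ.2.2.1.le)
      inf_le_right with h5 | h5
    · exact h5
    · exfalso
      have hχδ : χ ≤ δ := inf_eq_right.mp h5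
      have : χ < δ := lt_of_le_of_ne hχδ (Ne.symm hδχ)
      exact absurd (hχ.2.2.2 δ hδC this) (not_le_of_gt h2)
  constructor
  · exact hmain φ hφ covφ h3
  · exact hmain ψ hψ covψ h4

lemma third_sup (hφ : IsCMI K.C φ p) (hψ : IsCMI K.C ψ p) (hne : φ ≠ ψ)
    {δ : Setoid A} (h : K.Third p φ ψ δ) : δ ⊔ φ = p ∧ δ ⊔ ψ = p := by
  obtain ⟨hδC, h1, h2, h3, h4⟩ := h
  have hinf := K.third_inf hφ hψ hne ⟨hδC, h1, h2, h3, h4⟩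
  have key : ∀ χ : Setoid A, IsCMI K.C χ p → δ ⊓ χ = φ ⊓ ψ → δ ⊔ χ = p := by
    intro χ hχ hinfχ
    have h5 : χ < δ ⊔ χ := by
      refine lt_of_le_of_ne le_sup_right fun he => ?_
      have : δ ≤ χ := he ▸ le_sup_left
      have : δ = δ ⊓ χ := (inf_eq_left.mpr this).symm
      rw [hinfχ] at this
      exact absurd this (ne_of_gt h1)
    exact le_antisymm (sup_le h2.le hχ.2.2.1.le)
      (hχ.2.2.2 _ (K.pairSup hδC hχ.1) h5)
  exact ⟨key φ hφ hinf.1, key ψ hψ hinf.2⟩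

lemma third_cov (hφ : IsCMI K.C φ p) (hψ : IsCMI K.C ψ p) (hne : φ ≠ ψ)
    {δ : Setoid A} (h : K.Third p φ ψ δ) : K.Cov δ p := by
  have hinf := K.third_inf hφ hψ hne h
  have hsup := K.third_sup hφ hψ hne h
  have hcov := K.cov_base hφ hψ hne
  have : K.Cov δ (φ ⊔ δ) := by
    refine K.cov_sup (a := φ ⊓ ψ) hφ.1 h.1 (by rw [← hinf.1, inf_comm]) hcov
  rwa [sup_comm, hsup.1] at this

lemma third_cmi [Finite A] (hφ : IsCMI K.C φ p) (hψ : IsCMI K.C ψ p) (hne : φ ≠ ψ)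
    {δ : Setoid A} (h : K.Third p φ ψ δ) : IsCMI K.C δ p := by
  have hinf := K.third_inf hφ hψ hne h
  have hsup := K.third_sup hφ hψ hne h
  have hcovδ := K.third_cov hφ hψ hne h
  obtain ⟨χ, hχC, hδχ, hpχ, hχcmi, hχmax⟩ := K.exists_max_not_ge h.1 hφ.2.1
    (not_le_of_gt h.2.2.1)
  have hχp : χ ⊓ p = δ := by
    rcases hcovδ.2.2.2 (χ ⊓ p) (K.pairInf hχC hφ.2.1) (le_inf hδχ h.2.2.1.le) inf_le_right
      with h5 | h5
    · exact h5
    · exact absurd (inf_eq_right.mp h5) hpχ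
  -- projectivity chain (ψ,p) ~ (φ⊓ψ,φ) ~ (δ,p) ~ (χ,χ⊔p)
  have c1 : Persp K.C (ψ, p) (φ ⊓ ψ, φ) := by
    refine ⟨hψ.1, hφ.2.1, K.pairInf hφ.1 hψ.1, hφ.1, Or.inr ⟨?_, ?_⟩⟩
    · simp [inf_comm]
    · simp [K.cmi_sup_eq hφ hψ hne]
  have c2 : Persp K.C (φ ⊓ ψ, φ) (δ, p) := by
    refine ⟨K.pairInf hφ.1 hψ.1, hφ.1, h.1, hφ.2.1, Or.inl ⟨?_, ?_⟩⟩
    · rw [inf_comm δ φ] at hinf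
      exact hinf.1.symm
    · rw [sup_comm δ φ] at hsup
      exact hsup.1.symm
  have c3 : Persp K.C (δ, p) (χ, χ ⊔ p) := by
    refine ⟨h.1, hφ.2.1, hχC, K.pairSup hχC hφ.2.1, Or.inl ⟨?_, ?_⟩⟩
    · rw [inf_comm p χ, hχp]
    · rw [sup_comm]
  have hproj : Projective K.C (ψ, p) (χ, χ ⊔ p) :=
    Relation.ReflTransGen.head c1 (Relation.ReflTransGen.head c2
      (Relation.ReflTransGen.single c3))
  have := K.hP ψ χ p (χ ⊔ p) hψ hχcmi hproj
  have hχδ' : χ = δ := by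
    have hχlep : χ ≤ p := by
      rw [this]; exact le_sup_left
    rw [← hχp, inf_eq_left.mpr hχlep]
  rw [← hχδ', this]
  exact hχcmi

/-- the one-class of the Boolean product of `φ,ψ` below `p`. -/
def Dset (one : A) (p φ ψ : Setoid A) : Set A :=
  {x | p.r one x ∧ (φ.r one x ↔ ψ.r one x)}

lemma third_oc [Finite A] (hφ : IsCMI K.C φ p) (hψ : IsCMI K.C ψ p) (hne : φ ≠ ψ)
    {δ : Setoid A} (h : K.Third p φ ψ δ) : oc one δ = Dset one p φ ψ := by
  have hinf := K.third_inf hφ hψ hne h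
  have hsub : oc one δ ⊆ Dset one p φ ψ := by
    intro x hx
    refine ⟨h.2.2.1.le hx, ?_, ?_⟩
    · intro hφx
      have : (δ ⊓ φ).r one x := ⟨hx, hφx⟩
      rw [hinf.1] at this
      exact this.2
    · intro hψx
      have : (δ ⊓ ψ).r one x := ⟨hx, hψx⟩
      rw [hinf.2] at this
      exact this.1
  refine Set.Subset.antisymm hsub ?_
  rintro x ⟨hpx, hiff⟩
  by_cases hφx : φ.r one x
  · exact h.2.1.le ⟨hφx, hiff.1 hφx⟩
  · have hψx : ¬ ψ.r one x := fun hc => hφx (hiff.2 hc)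
    obtain ⟨e, heδ, heθ⟩ := K.oc_ssub (K.pairInf hφ.1 hψ.1) h.1 h.2.1
    obtain ⟨hpe, hiffe⟩ := hsub heδ
    have hφe : ¬ φ.r one e := fun hc => heθ ⟨hc, hiffe.1 hc⟩
    have hψe : ¬ ψ.r one e := fun hc => heθ ⟨hiffe.2 hc, hc⟩
    have hφxe : φ.r x e := K.split (K.cmi_cov hφ) hpx hpe hφx hφe
    have hψxe : ψ.r x e := K.split (K.cmi_cov hψ) hpx hpe hψx hψe
    have hδxe : δ.r x e := h.2.1.le ⟨hφxe, hψxe⟩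
    exact δ.trans heδ (δ.symm hδxe)

lemma third_unique [Finite A] (hφ : IsCMI K.C φ p) (hψ : IsCMI K.C ψ p) (hne : φ ≠ ψ)
    {δ δ' : Setoid A} (h : K.Third p φ ψ δ) (h' : K.Third p φ ψ δ') : δ = δ' :=
  (K.oc_eq_iff h.1 h'.1).mpr
    ((K.third_oc hφ hψ hne h).trans (K.third_oc hφ hψ hne h').symm)

lemma third_from_witness (hφ : IsCMI K.C φ p) (hψ : IsCMI K.C ψ p) (hne : φ ≠ ψ)
    {a b : Setoid A} (hcov : K.Cov a b) (hblep : b ≤ p)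
    (hφb : φ ⊓ b = a) (hψb : ψ ⊓ b = a) : K.Third p φ ψ (φ ⊓ ψ ⊔ b) := by
  obtain ⟨haC, hbC, hab, hdic⟩ := hcov
  have covθφ := K.cov_base hφ hψ hne
  have covθψ := K.cov_base hψ hφ (Ne.symm hne)
  rw [inf_comm ψ φ] at covθψ
  set θ := φ ⊓ ψ with hθ
  have hθC : θ ∈ K.C := K.pairInf hφ.1 hψ.1
  have hδC : θ ⊔ b ∈ K.C := K.pairSup hθC hbC
  have haφ : a ≤ φ := hφb ▸ inf_le_left
  have haψ : a ≤ ψ := hψb ▸ inf_le_left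
  have tφ : (θ ⊔ b) ⊓ φ = θ ⊔ a := by
    rw [← K.hM θ hθC b hbC φ hφ.1 inf_le_left, inf_comm b φ, hφb]
  have tψ : (θ ⊔ b) ⊓ ψ = θ ⊔ a := by
    rw [← K.hM θ hθC b hbC ψ hψ.1 inf_le_right, inf_comm b ψ, hψb]
  have hta : θ ⊔ a = θ := by
    have h1 : θ ⊔ a = θ ∨ θ ⊔ a = φ :=
      covθφ.2.2.2 _ (K.pairSup hθC haC) le_sup_left (sup_le inf_le_left haφ)
    have h2 : θ ⊔ a = θ ∨ θ ⊔ a = ψ :=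
      covθψ.2.2.2 _ (K.pairSup hθC haC) le_sup_left (sup_le inf_le_right haψ)
    rcases h1 with h1 | h1
    · exact h1
    rcases h2 with h2 | h2
    · exact h2
    · exact absurd (h1.symm.trans h2) hne
  have hδφ : (θ ⊔ b) ⊓ φ = θ := tφ.trans hta
  have hδψ : (θ ⊔ b) ⊓ ψ = θ := tψ.trans hta
  have hδlep : θ ⊔ b ≤ p := sup_le (le_trans inf_le_left hφ.2.2.1.le) hblep
  have hδnep : θ ⊔ b ≠ p := by
    intro hc
    have : φ ⊓ (θ ⊔ b) = φ := inf_eq_left.mpr (hc ▸ hφ.2.2.1.le)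
    rw [inf_comm φ (θ ⊔ b), hδφ] at this
    exact absurd this (ne_of_lt covθφ.2.2.1)
  refine ⟨hδC, ?_, lt_of_le_of_ne hδlep hδnep, ?_, ?_⟩
  · refine lt_of_le_of_ne le_sup_left fun hc => ?_
    have hbθ : b ≤ φ := le_trans (le_sup_right.trans hc.symm.le) inf_le_left
    have : φ ⊓ b = b := inf_eq_right.mpr hbθ
    rw [hφb] at this
    exact absurd this (ne_of_lt hab)
  · intro hc
    have : φ ⊓ φ = θ := by rw [← hc] at hδφ ⊢; exact hδφ
    rw [inf_idem] at this
    exact absurd this.symm (ne_of_lt covθφ.2.2.1)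
  · intro hc
    have : ψ ⊓ ψ = θ := by rw [← hc] at hδψ ⊢; exact hδψ
    rw [inf_idem] at this
    exact absurd this.symm (ne_of_lt covθψ.2.2.1)

lemma cmi_le_eq {x y : Setoid A} (hx : IsCMI K.C x p) (hy : IsCMI K.C y p) (h : x ≤ y) :
    x = y := by
  rcases (K.cmi_cov hx).2.2.2 y hy.1 h hy.2.2.1.le with h' | h'
  · exact h'.symm
  · exact absurd h' (ne_of_lt hy.2.2.1)

lemma third_trans [Finite A] {χ₀ χ : Setoid A} (hφ : IsCMI K.C φ p) (hχ0 : IsCMI K.C χ₀ p)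
    (hχ : IsCMI K.C χ p) (h1 : φ ≠ χ₀) (h2 : χ₀ ≠ χ) (h3 : φ ≠ χ)
    {δ₁ δ₂ : Setoid A} (ht1 : K.Third p φ χ₀ δ₁) (ht2 : K.Third p χ₀ χ δ₂) :
    ∃ δ, K.Third p φ χ δ := by
  classical
  by_cases hcase : φ ⊓ χ ≤ χ₀
  · refine ⟨χ₀, hχ0.1, lt_of_le_of_ne hcase fun hc => ?_, hχ0.2.2.1, Ne.symm h1, h2⟩
    have : χ₀ ≤ φ := hc ▸ inf_le_left
    exact h1 (K.cmi_le_eq hχ0 hφ this).symm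
  · set b := φ ⊓ χ with hbdef
    set ρ := φ ⊓ χ ⊓ χ₀ with hρdef
    have hbC : b ∈ K.C := K.pairInf hφ.1 hχ.1
    have hρC : ρ ∈ K.C := K.pairInf hbC hχ0.1
    have hbχ0p : b ⊔ χ₀ = p := by
      have hlt : χ₀ < b ⊔ χ₀ :=
        lt_of_le_of_ne le_sup_right fun hc => hcase (hc ▸ le_sup_left)
      exact le_antisymm (sup_le (le_trans inf_le_left hφ.2.2.1.le) hχ0.2.2.1.le)
        (hχ0.2.2.2 _ (K.pairSup hbC hχ0.1) hlt)
    have covρ : K.Cov ρ b := by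
      refine K.cov_inf hρC hbC hχ0.1 rfl ?_
      rw [hbχ0p]
      exact K.cmi_cov hχ0
    have hδ1cmi := K.third_cmi hφ hχ0 h1 ht1
    have hδ2cmi := K.third_cmi hχ0 hχ h2 ht2
    have oc1 := K.third_oc hφ hχ0 h1 ht1
    have oc2 := K.third_oc hχ0 hχ h2 ht2
    -- membership characterizations
    have hoc1 : ∀ x : A, δ₁.r one x ↔ (p.r one x ∧ (φ.r one x ↔ χ₀.r one x)) := by
      intro x; exact Set.ext_iff.mp oc1 x
    have hoc2 : ∀ x : A, δ₂.r one x ↔ (p.r one x ∧ (χ₀.r one x ↔ χ.r one x)) := by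
      intro x; exact Set.ext_iff.mp oc2 x
    have hδ12 : δ₁ ≠ δ₂ := by
      intro hc
      have key : ∀ x : A, p.r one x → ((φ.r one x ↔ χ₀.r one x) ↔ (χ₀.r one x ↔ χ.r one x)) := by
        intro x hpx
        have a1 := hoc1 x
        have a2 := hoc2 x
        rw [hc] at a1
        constructor
        · intro h; exact (a2.mp (a1.mpr ⟨hpx, h⟩)).2
        · intro h; exact (a1.mp (a2.mpr ⟨hpx, h⟩)).2
      refine h3 (K.hR φ hφ.1 χ hχ.1 fun x => ?_)
      constructor
      · intro hx
        have hpx : p.r one x := hφ.2.2.1.le hx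
        exact (iff3_1 (key x hpx)).mp hx
      · intro hx
        have hpx : p.r one x := hχ.2.2.1.le hx
        exact (iff3_1 (key x hpx)).mpr hx
    have m1 : δ₁ ⊓ b = ρ := by
      refine (K.oc_eq_iff (K.pairInf ht1.1 hbC) hρC).mpr (Set.ext fun x => ?_)
      have hh := hoc1 x
      constructor
      · rintro ⟨hx1, hx2⟩
        rcases hx2 with ⟨hφx, hχx⟩
        have := (hh.mp hx1)
        exact ⟨⟨hφx, hχx⟩, this.2.mp hφx⟩
      · rintro ⟨⟨hφx, hχx⟩, hχ0x⟩
        exact ⟨hh.mpr ⟨hφ.2.2.1.le hφx, by tauto⟩, hφx, hχx⟩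
    have m2 : δ₂ ⊓ b = ρ := by
      refine (K.oc_eq_iff (K.pairInf ht2.1 hbC) hρC).mpr (Set.ext fun x => ?_)
      have hh := hoc2 x
      constructor
      · rintro ⟨hx1, hx2⟩
        rcases hx2 with ⟨hφx, hχx⟩
        have := (hh.mp hx1)
        exact ⟨⟨hφx, hχx⟩, this.2.mpr hχx⟩
      · rintro ⟨⟨hφx, hχx⟩, hχ0x⟩
        exact ⟨hh.mpr ⟨hφ.2.2.1.le hφx, by tauto⟩, hφx, hχx⟩
    have hblep : b ≤ p := le_trans inf_le_left hφ.2.2.1.le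
    have hwit := K.third_from_witness hδ1cmi hδ2cmi hδ12 covρ hblep m1 m2
    set δ₄ := δ₁ ⊓ δ₂ ⊔ b with hδ4def
    have hδ4cmi := K.third_cmi hδ1cmi hδ2cmi hδ12 hwit
    have oc4 := K.third_oc hδ1cmi hδ2cmi hδ12 hwit
    have hoc4 : ∀ x : A, δ₄.r one x ↔ (p.r one x ∧ (φ.r one x ↔ χ.r one x)) := by
      intro x
      have h0 : δ₄.r one x ↔ (p.r one x ∧ (δ₁.r one x ↔ δ₂.r one x)) := Set.ext_iff.mp oc4 x
      rw [h0]
      constructor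
      · rintro ⟨hpx, hiff⟩
        have b1 : δ₁.r one x ↔ (φ.r one x ↔ χ₀.r one x) :=
          ⟨fun h => ((hoc1 x).mp h).2, fun h => (hoc1 x).mpr ⟨hpx, h⟩⟩
        have b2 : δ₂.r one x ↔ (χ₀.r one x ↔ χ.r one x) :=
          ⟨fun h => ((hoc2 x).mp h).2, fun h => (hoc2 x).mpr ⟨hpx, h⟩⟩
        rw [b1, b2] at hiff
        exact ⟨hpx, iff3_1 hiff⟩
      · rintro ⟨hpx, hiff⟩
        have b1 : δ₁.r one x ↔ (φ.r one x ↔ χ₀.r one x) :=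
          ⟨fun h => ((hoc1 x).mp h).2, fun h => (hoc1 x).mpr ⟨hpx, h⟩⟩
        have b2 : δ₂.r one x ↔ (χ₀.r one x ↔ χ.r one x) :=
          ⟨fun h => ((hoc2 x).mp h).2, fun h => (hoc2 x).mpr ⟨hpx, h⟩⟩
        rw [b1, b2]
        exact ⟨hpx, iff3_2 hiff⟩
    refine ⟨δ₄, hwit.1, ?_, hwit.2.2.1, ?_, ?_⟩
    · refine lt_of_le_of_ne le_sup_right fun hc => ?_
      -- δ₄ = b would make b covered by p, impossible since b < φ < p
      have hcovb : K.Cov b p := by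
        rw [hbdef, hc]
        exact K.third_cov hδ1cmi hδ2cmi hδ12 hwit
      have hbφ : b ≤ φ := inf_le_left
      rcases hcovb.2.2.2 φ hφ.1 hbφ hφ.2.2.1.le with h' | h'
      · have hφχ : φ ≤ χ := le_of_eq h' |>.trans inf_le_right
        exact h3 (K.cmi_le_eq hφ hχ hφχ)
      · exact absurd h' (ne_of_lt hφ.2.2.1)
    · intro hc
      refine absurd (K.hR χ hχ.1 p hφ.2.1 fun x => ?_) (ne_of_lt hχ.2.2.1)
      constructor
      · intro hx; exact hχ.2.2.1.le hx
      · intro hx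
        have hthis := (hoc4 x)
        rw [hc] at hthis
        by_cases hφx : φ.r one x
        · exact (hthis.mp hφx).2.mp hφx
        · by_contra hχx
          exact hφx (hthis.mpr ⟨hx, ⟨fun h => absurd h hφx, fun h => absurd h hχx⟩⟩)
    · intro hc
      refine absurd (K.hR φ hφ.1 p hφ.2.1 fun x => ?_) (ne_of_lt hφ.2.2.1)
      constructor
      · intro hx; exact hφ.2.2.1.le hx
      · intro hx
        have hthis := (hoc4 x)
        rw [hc] at hthis
        by_cases hχx : χ.r one x
        · exact (hthis.mp hχx).2.mpr hχx
        · by_contra hφx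
          exact hχx (hthis.mpr ⟨hx, ⟨fun h => absurd h hφx, fun h => absurd h hχx⟩⟩)

/-- The main engine: projective CMIs with common cover admit a third element. -/
lemma third_exists [Finite A] (hφ : IsCMI K.C φ p) (hψ : IsCMI K.C ψ p)
    (hproj : Projective K.C (φ, p) (ψ, p)) (hne : φ ≠ ψ) :
    ∃ δ, K.Third p φ ψ δ := by
  classical
  have main : ∀ x : Setoid A × Setoid A, Projective K.C (φ, p) x →
      K.Cov x.1 x.2 ∧ ∀ χ : Setoid A, IsCMI K.C χ p → χ ⊓ x.2 = x.1 →
        (φ = χ ∨ ∃ δ, K.Third p φ χ δ) := by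
    intro x hx
    induction hx with
    | refl =>
        refine ⟨K.cmi_cov hφ, fun χ hχ hc => Or.inl ?_⟩
        simp only at hc
        rw [← hc, inf_eq_left.mpr hχ.2.2.1.le]
    | @tail y z h1 h2 ih =>
        obtain ⟨a, b⟩ := y
        obtain ⟨c, e⟩ := z
        obtain ⟨haC, hbC, hcC, heC, hD⟩ := h2
        simp only at *
        rcases hD with ⟨hD1, hD2⟩ | ⟨hD1, hD2⟩
        · -- (a,b) lower, (c,e) = (c, b ⊔ c) upper
          have hcov_ce : K.Cov c e := by
            rw [hD2]
            exact K.cov_sup hbC hcC hD1 ih.1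
          refine ⟨hcov_ce, fun χ hχ hce => ?_⟩
          have hble : b ≤ e := hD2 ▸ le_sup_left
          have hkey : χ ⊓ b = a := by
            have h' : χ ⊓ b = χ ⊓ e ⊓ b := by rw [inf_assoc, inf_eq_right.mpr hble]
            rw [h', hce, hD1]
            exact inf_comm c b
          exact ih.2 χ hχ hkey
        · -- (c,e) lower, (a,b) = (a, e ⊔ a) upper
          have hcov_ce : K.Cov c e := by
            refine K.cov_inf hcC heC haC hD1 ?_
            rw [← hD2]
            exact ih.1
          refine ⟨hcov_ce, fun χ hχ hce => ?_⟩
          obtain ⟨χ₀, hχ₀C, haχ₀, hbχ₀, hχ₀cmi, hχ₀max⟩ :=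
            K.exists_max_not_ge haC hbC (not_le_of_gt ih.1.2.2.1)
          have hχ₀b : χ₀ ⊓ b = a := by
            rcases ih.1.2.2.2 (χ₀ ⊓ b) (K.pairInf hχ₀C hbC) (le_inf haχ₀ ih.1.2.2.1.le)
              inf_le_right with h' | h'
            · exact h'
            · exact absurd (inf_eq_right.mp h') hbχ₀
          have perspstep : Persp K.C (a, b) (χ₀, χ₀ ⊔ b) := by
            refine ⟨haC, hbC, hχ₀C, K.pairSup hχ₀C hbC, Or.inl ⟨?_, ?_⟩⟩
            · show a = b ⊓ χ₀
              rw [inf_comm]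
              exact hχ₀b.symm
            · show χ₀ ⊔ b = b ⊔ χ₀
              exact sup_comm χ₀ b
          have proj' : Projective K.C (φ, p) (χ₀, χ₀ ⊔ b) := h1.tail perspstep
          have hcover : p = χ₀ ⊔ b := K.hP φ χ₀ p (χ₀ ⊔ b) hφ hχ₀cmi proj'
          have hχ₀cmi' : IsCMI K.C χ₀ p := by
            rw [hcover]; exact hχ₀cmi
          have hblep : b ≤ p := by rw [hcover]; exact le_sup_right
          have helee : e ≤ b := hD2 ▸ le_sup_left
          have helep : e ≤ p := le_trans helee hblep
          have hχ₀e : χ₀ ⊓ e = c := by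
            have h' : χ₀ ⊓ e = χ₀ ⊓ b ⊓ e := by rw [inf_assoc, inf_eq_right.mpr helee]
            rw [h', hχ₀b, inf_comm a e]
            exact hD1.symm
          have T0 := ih.2 χ₀ hχ₀cmi' hχ₀b
          by_cases hχχ₀ : χ = χ₀
          · rw [hχχ₀]; exact T0
          · have hchi0ne : χ₀ ≠ χ := fun h => hχχ₀ h.symm
            have Tnew : K.Third p χ₀ χ (χ₀ ⊓ χ ⊔ e) :=
              K.third_from_witness hχ₀cmi' hχ hchi0ne hcov_ce helep hχ₀e hce
            by_cases hφχ₀ : φ = χ₀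
            · right
              rw [hφχ₀]
              exact ⟨_, Tnew⟩
            · rcases T0 with h0 | ⟨δ₁, h0⟩
              · exact absurd h0 hφχ₀
              · by_cases hφχ : φ = χ
                · exact Or.inl hφχ
                · exact Or.inr (K.third_trans hφ hχ₀cmi' hχ hφχ₀ hchi0ne hφχ h0 Tnew)
  have := (main (ψ, p) hproj).2 ψ hψ (by simp [inf_eq_left.mpr hψ.2.2.1.le])
  rcases this with h | h
  · exact absurd h hne
  · exact h

end Fr

/-- the set of PIP classes -/
def clSet (C : Set (Setoid A)) : Set (Set (Setoid A)) :=
  {U | ∃ η p, IsCMI C η p ∧ U = {ψ | PIP C ψ η}}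

lemma class_eq {C : Set (Setoid A)} {a b : Setoid A} (h : PIP C a b) :
    {x | PIP C x a} = {x | PIP C x b} :=
  Set.ext fun x => ⟨fun hx => pip_trans hx h, fun hx => pip_trans hx (pip_symm h)⟩

namespace Fr

variable {one : A} (K : Fr A one)

/-- the context above an atom -/
def subCtx (μ : Setoid A) (hμC : μ ∈ K.C) : Fr A one where
  C := {γ | γ ∈ K.C ∧ μ ≤ γ}
  bot := μ
  botC := ⟨hμC, le_refl μ⟩
  botLe := fun γ hγ => hγ.2
  topC := ⟨K.topC, le_top⟩
  infC := fun S hS hne =>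
    ⟨K.infC S (fun s hs => (hS hs).1) hne, le_sInf fun s hs => (hS hs).2⟩
  supC := fun S hS hne =>
    ⟨K.supC S (fun s hs => (hS hs).1) hne,
      hne.elim fun s hs => le_trans (hS hs).2 (le_sSup hs)⟩
  hM := fun x hx y hy z hz => K.hM x hx.1 y hy.1 z hz.1
  hO := by
    intro α hα a b
    have hth : ∀ w : A, theta {γ | γ ∈ K.C ∧ μ ≤ γ} one w = μ ⊔ theta K.C one w := by
      intro w
      refine le_antisymm (sInf_le ⟨⟨K.pairSup hμC (K.theta_mem one w), le_sup_left⟩,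
        r_of_le le_sup_right (K.theta_r one w)⟩) (le_sInf ?_)
      rintro s ⟨⟨hs1, hs2⟩, hs3⟩
      exact sup_le hs2 (K.theta_le hs1 hs3)
    have hsup : ∀ w : A, α ⊔ theta {γ | γ ∈ K.C ∧ μ ≤ γ} one w = α ⊔ theta K.C one w := by
      intro w
      rw [hth w, ← sup_assoc, sup_eq_left.mpr hα.2]
    rw [hsup a, hsup b]
    exact K.hO α hα.1 a b
  hR := fun α hα β hβ h => K.hR α hα.1 β hβ.1 h
  hP := by
    intro φ ψ p q h1 h2 hpr
    refine K.hP φ ψ p q ?_ ?_ (proj_mono (fun x hx => hx.1) hpr)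
    · exact ⟨h1.1.1, h1.2.1.1, h1.2.2.1,
        fun β hβ hlt => h1.2.2.2 β ⟨hβ, le_trans (le_trans h1.1.2 hlt.le) (le_refl β)⟩ hlt⟩
    · exact ⟨h2.1.1, h2.2.1.1, h2.2.2.1,
        fun β hβ hlt => h2.2.2.2 β ⟨hβ, le_trans (le_trans h2.1.2 hlt.le) (le_refl β)⟩ hlt⟩

lemma cmi_sub_down {μ : Setoid A} (hμC : μ ∈ K.C) {η p : Setoid A}
    (h : IsCMI K.C η p) (hμη : μ ≤ η) : IsCMI (K.subCtx μ hμC).C η p :=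
  ⟨⟨h.1, hμη⟩, ⟨h.2.1, le_trans hμη h.2.2.1.le⟩, h.2.2.1,
    fun β hβ hlt => h.2.2.2 β hβ.1 hlt⟩

lemma cmi_sub_up {μ : Setoid A} (hμC : μ ∈ K.C) {η p : Setoid A}
    (h : IsCMI (K.subCtx μ hμC).C η p) : IsCMI K.C η p :=
  ⟨h.1.1, h.2.1.1, h.2.2.1,
    fun β hβ hlt => h.2.2.2 β ⟨hβ, le_trans (le_trans h.1.2 hlt.le) (le_refl β)⟩ hlt⟩

lemma cons_bot_chain {n : ℕ} {f : Fin (n + 1) → Setoid A} (hmem : ∀ i, f i ∈ K.C)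
    (hmono : StrictMono f) (hlt : K.bot < f 0) :
    ∃ g : Fin (n + 2) → Setoid A, (∀ i, g i ∈ K.C) ∧ StrictMono g := by
  refine ⟨fun i => if h : (i : ℕ) = 0 then K.bot else f ⟨(i : ℕ) - 1, by omega⟩, fun i => ?_, ?_⟩
  · by_cases h : (i : ℕ) = 0
    · simp [h, K.botC]
    · simp only [h, dif_neg, not_false_iff]
      exact hmem _
  · intro i j hij
    have hij' : (i : ℕ) < (j : ℕ) := hij
    have hj0 : ¬ (j : ℕ) = 0 := by omega
    by_cases hi0 : (i : ℕ) = 0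
    · simp only [hi0, dif_pos, hj0, dif_neg, not_false_iff]
      exact lt_of_lt_of_le hlt (hmono.monotone (by simp [Fin.le_def]))
    · simp only [hi0, hj0, dif_neg, not_false_iff]
      exact hmono (by simp only [Fin.mk_lt_mk]; omega)

lemma atom_dic {μ : Setoid A} (hμC : μ ∈ K.C) (hbμ : K.bot < μ)
    (hmin : ∀ γ ∈ K.C, K.bot < γ → ¬ γ < μ) {γ : Setoid A} (hγ : γ ∈ K.C) :
    μ ⊓ γ = K.bot ∨ μ ≤ γ := by
  by_cases h : μ ⊓ γ = K.bot
  · exact Or.inl h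
  · right
    have h1 : K.bot < μ ⊓ γ :=
      lt_of_le_of_ne (le_inf hbμ.le (K.botLe γ hγ)) (Ne.symm h)
    have h2 := hmin (μ ⊓ γ) (K.pairInf hμC hγ) h1
    have : μ ⊓ γ = μ := by
      rcases eq_or_lt_of_le (inf_le_left : μ ⊓ γ ≤ μ) with h' | h'
      · exact h'
      · exact absurd h' h2
    exact inf_eq_left.mp this

lemma max_to_sub {d : ℕ} {μ : Setoid A} (hμC : μ ∈ K.C) (hbμ : K.bot < μ)
    (hmax : ∀ c : Fin (d + 3) → Setoid A, (∀ i, c i ∈ K.C) → ¬ StrictMono c) :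
    ∀ c : Fin (d + 2) → Setoid A, (∀ i, c i ∈ (K.subCtx μ hμC).C) → ¬ StrictMono c := by
  intro c hcmem hcmono
  obtain ⟨g, hg1, hg2⟩ := K.cons_bot_chain (f := c) (fun i => (hcmem i).1) hcmono
    (lt_of_lt_of_le hbμ (hcmem 0).2)
  exact hmax g hg1 hg2

lemma chain_to_sub [Finite A] {d : ℕ} {μ : Setoid A} (hμC : μ ∈ K.C) (hbμ : K.bot < μ)
    (hmin : ∀ γ ∈ K.C, K.bot < γ → ¬ γ < μ)
    (hc : ∃ c : Fin (d + 2) → Setoid A, (∀ i, c i ∈ K.C) ∧ StrictMono c)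
    (hmax : ∀ c : Fin (d + 3) → Setoid A, (∀ i, c i ∈ K.C) → ¬ StrictMono c) :
    ∃ c : Fin (d + 1) → Setoid A, (∀ i, c i ∈ (K.subCtx μ hμC).C) ∧ StrictMono c := by
  classical
  obtain ⟨c, hmem, hmono⟩ := hc
  have s1 : ∀ i j : Fin (d + 2), i < j → ¬ μ ≤ c j → c i ⊔ μ < c j ⊔ μ := by
    intro i j hij hμj
    refine lt_of_le_of_ne (sup_le_sup_right (hmono hij).le μ) fun he => ?_
    have h1 : c j ≤ c i ⊔ μ := le_trans le_sup_left he.symm.le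
    have h2 : c i ⊔ μ ⊓ c j = (c i ⊔ μ) ⊓ c j :=
      K.hM (c i) (hmem i) μ hμC (c j) (hmem j) (hmono hij).le
    have h3 : μ ⊓ c j = K.bot := by
      rcases K.atom_dic hμC hbμ hmin (hmem j) with h | h
      · exact h
      · exact absurd h hμj
    rw [h3, sup_eq_left.mpr (K.botLe (c i) (hmem i)), inf_eq_right.mpr h1] at h2
    exact absurd h2 (ne_of_lt (hmono hij))
  by_cases hall : ∀ i : Fin (d + 2), ¬ μ ≤ c i
  · exfalso
    have hmono2 : StrictMono (fun i : Fin (d + 2) => c i ⊔ μ) :=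
      fun i j hij => s1 i j hij (hall j)
    obtain ⟨g, hg1, hg2⟩ := K.cons_bot_chain (f := fun i => c i ⊔ μ)
      (fun i => K.pairSup (hmem i) hμC) hmono2
      (lt_of_lt_of_le hbμ le_sup_right)
    exact hmax g hg1 hg2
  · push_neg at hall
    obtain ⟨i₀, hi₀⟩ := hall
    have hex : ∃ n : ℕ, ∃ h : n < d + 2, μ ≤ c ⟨n, h⟩ := ⟨(i₀ : ℕ), i₀.isLt, by
      convert hi₀ using 2⟩
    obtain ⟨hk₀lt, hk₀le⟩ := Nat.find_spec hex
    have hnot : ∀ n : ℕ, n < Nat.find hex → ∀ h : n < d + 2, ¬ μ ≤ c ⟨n, h⟩ := by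
      intro n hn h hcon
      exact Nat.find_min hex hn ⟨h, hcon⟩
    rcases Nat.eq_zero_or_pos (Nat.find hex) with hk0 | hk0
    · exfalso
      have hc0 : c ⟨Nat.find hex, hk₀lt⟩ = c 0 := by
        congr 1
        simp [Fin.ext_iff, hk0]
      obtain ⟨g, hg1, hg2⟩ := K.cons_bot_chain (f := c) hmem hmono
        (lt_of_lt_of_le hbμ (hc0 ▸ hk₀le))
      exact hmax g hg1 hg2
    · obtain ⟨m, hm⟩ : ∃ m, Nat.find hex = m + 1 := ⟨Nat.find hex - 1, by omega⟩
      have hmlt : m + 1 < d + 2 := by omega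
      have hk₀le' : μ ≤ c ⟨m + 1, hmlt⟩ := by
        have heq : c ⟨m + 1, hmlt⟩ = c ⟨Nat.find hex, hk₀lt⟩ := by
          congr 1
          simp [Fin.ext_iff, hm]
        rw [heq]
        exact hk₀le
      have hnot' : ∀ n : ℕ, n ≤ m → ∀ h : n < d + 2, ¬ μ ≤ c ⟨n, h⟩ := by
        intro n hn h
        exact hnot n (by omega) h
      refine ⟨fun i => if h : (i : ℕ) ≤ m then c ⟨(i : ℕ), by omega⟩ ⊔ μ
        else c ⟨(i : ℕ) + 1, by omega⟩, fun i => ?_, ?_⟩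
      · by_cases h : (i : ℕ) ≤ m
        · simp only [h, dif_pos]
          exact ⟨K.pairSup (hmem _) hμC, le_sup_right⟩
        · simp only [h, dif_neg, not_false_iff]
          refine ⟨hmem _, le_trans hk₀le' (hmono.monotone ?_)⟩
          · simp only [Fin.mk_le_mk]
            omega
      · intro i j hij
        have hij' : (i : ℕ) < (j : ℕ) := hij
        by_cases hi : (i : ℕ) ≤ m <;> by_cases hj : (j : ℕ) ≤ m
        · simp only [hi, hj, dif_pos]
          exact s1 _ _ (by simp only [Fin.mk_lt_mk]; omega)
            (hnot' (j : ℕ) (by omega) (by omega))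
        · simp only [hi, dif_pos, hj, dif_neg, not_false_iff]
          refine lt_of_le_of_lt (sup_le (le_trans (hmono.monotone ?_) (le_refl _)) ?_)
            (hmono (a := ⟨m + 1, hmlt⟩) ?_)
          · show ((⟨(i : ℕ), by omega⟩ : Fin (d + 2))) ≤ ⟨m + 1, hmlt⟩
            simp only [Fin.mk_le_mk]; omega
          · exact hk₀le'
          · simp only [Fin.mk_lt_mk]; omega
        · omega
        · simp only [hi, hj, dif_neg, not_false_iff]
          exact hmono (by simp only [Fin.mk_lt_mk]; omega)

/-- Lifting a projectivity chain above the atom `μ`, unless it meets the class of `η₀`. -/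
lemma lift_chain [Finite A] {μ : Setoid A} (hμC : μ ∈ K.C) (hbμ : K.bot < μ)
    (hmin : ∀ γ ∈ K.C, K.bot < γ → ¬ γ < μ)
    {η₀ p₀ : Setoid A} (hη₀ : IsCMI K.C η₀ p₀) (hμη₀ : ¬ μ ≤ η₀) (hp₀ : p₀ = η₀ ⊔ μ)
    {ψ' ψ q : Setoid A} (hψ' : IsCMI K.C ψ' q) (hψ : IsCMI K.C ψ q)
    (hμψ' : μ ≤ ψ') (hμψ : μ ≤ ψ)
    (hproj : Projective K.C (ψ', q) (ψ, q)) :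
    PIP (K.subCtx μ hμC).C ψ' ψ ∨ PIP K.C ψ' η₀ := by
  classical
  set K2 := K.subCtx μ hμC with hK2
  have hsubC : K2.C ⊆ K.C := fun x hx => hx.1
  have hcolpersp : ∀ a b : Setoid A, a ∈ K.C → b ∈ K.C → K.Cov a b → μ ≤ b → ¬ μ ≤ a →
      Persp K.C (a, b) (K.bot, μ) ∧ Persp K.C (K.bot, μ) (η₀, p₀) := by
    intro a b haC hbC hcov hμb hμa
    have hba : b = a ⊔ μ := by
      rcases hcov.2.2.2 (a ⊔ μ) (K.pairSup haC hμC) le_sup_left (sup_le hcov.2.2.1.le hμb)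
        with h | h
      · exact absurd (h ▸ le_sup_right) hμa
      · exact h.symm
    have hz1 : μ ⊓ a = K.bot := by
      rcases K.atom_dic hμC hbμ hmin haC with h | h
      · exact h
      · exact absurd h hμa
    have hz2 : μ ⊓ η₀ = K.bot := by
      rcases K.atom_dic hμC hbμ hmin hη₀.1 with h | h
      · exact h
      · exact absurd h hμη₀
    constructor
    · exact ⟨haC, hbC, K.botC, hμC, Or.inr ⟨hz1.symm, by rw [hba, sup_comm]⟩⟩
    · exact ⟨K.botC, hμC, hη₀.1, hη₀.2.1, Or.inl ⟨hz2.symm, by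
        rw [hp₀, sup_comm]⟩⟩
  have main : ∀ x : Setoid A × Setoid A, Projective K.C (ψ', q) x →
      K.Cov x.1 x.2 ∧ (PIP K.C ψ' η₀ ∨
        (¬ (μ ≤ x.2 ∧ ¬ μ ≤ x.1) ∧ Projective K2.C (ψ', q) (x.1 ⊔ μ, x.2 ⊔ μ))) := by
    intro x hx
    induction hx with
    | refl =>
        refine ⟨K.cmi_cov hψ', Or.inr ⟨fun hcon => hcon.2 hμψ', ?_⟩⟩
        have e1 : ψ' ⊔ μ = ψ' := sup_eq_left.mpr hμψ'
        have e2 : q ⊔ μ = q := sup_eq_left.mpr (le_trans hμψ' hψ'.2.2.1.le)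
        rw [e1, e2]
        exact Relation.ReflTransGen.refl
    | @tail y z h1 h2 ih =>
        obtain ⟨a, b⟩ := y
        obtain ⟨c, e⟩ := z
        have hp2 := h2
        obtain ⟨haC, hbC, hcC, heC, hD⟩ := h2
        simp only at *
        have hcov_ce : K.Cov c e := by
          rcases hD with ⟨hD1, hD2⟩ | ⟨hD1, hD2⟩
          · rw [hD2]
            exact K.cov_sup hbC hcC hD1 ih.1
          · refine K.cov_inf hcC heC haC hD1 ?_
            rw [← hD2]
            exact ih.1
        refine ⟨hcov_ce, ?_⟩
        rcases ih.2 with hpip | ⟨hncol_ab, hlift⟩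
        · exact Or.inl hpip
        by_cases hcol_ce : μ ≤ e ∧ ¬ μ ≤ c
        · left
          obtain ⟨s1, s2⟩ := hcolpersp c e hcC heC hcov_ce hcol_ce.1 hcol_ce.2
          exact ⟨q, p₀, hψ', hη₀, ((h1.tail hp2).tail s1).tail s2⟩
        · right
          refine ⟨hcol_ce, ?_⟩
          refine hlift.tail ?_
          have hmemlift : ∀ w : Setoid A, w ∈ K.C → w ⊔ μ ∈ K2.C :=
            fun w hw => ⟨K.pairSup hw hμC, le_sup_right⟩
          rcases hD with ⟨hD1, hD2⟩ | ⟨hD1, hD2⟩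
          · -- (a,b) lower
            have ht : b ⊓ (c ⊔ μ) = a := by
              have hin : a ≤ b ⊓ (c ⊔ μ) :=
                le_inf (hD1 ▸ inf_le_left) (le_trans (hD1 ▸ inf_le_right) le_sup_left)
              rcases ih.1.2.2.2 _ (K.pairInf hbC (K.pairSup hcC hμC)) hin inf_le_left
                with h' | h'
              · exact h'
              · exfalso
                have hble : b ≤ c ⊔ μ := inf_eq_left.mp h'
                by_cases hμc : μ ≤ c
                · have : c ⊔ μ = c := sup_eq_left.mpr hμc
                  rw [this] at hble
                  have : b ⊓ c = b := inf_eq_left.mpr hble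
                  rw [← hD1] at this
                  exact absurd this (ne_of_lt ih.1.2.2.1)
                · by_cases hμe : μ ≤ e
                  · exact hcol_ce ⟨hμe, hμc⟩
                  · have hz : μ ⊓ e = K.bot := by
                      rcases K.atom_dic hμC hbμ hmin heC with h'' | h''
                      · exact h''
                      · exact absurd h'' hμe
                    have hce : (c ⊔ μ) ⊓ e = c := by
                      rw [← K.hM c hcC μ hμC e heC hcov_ce.2.2.1.le, hz,
                        sup_eq_left.mpr (K.botLe c hcC)]
                    have hbc : b ≤ c :=
                      hce ▸ le_inf hble (hD2 ▸ le_sup_left)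
                    have : b ⊓ c = b := inf_eq_left.mpr hbc
                    rw [← hD1] at this
                    exact absurd this (ne_of_lt ih.1.2.2.1)
            refine ⟨hmemlift a haC, hmemlift b hbC, hmemlift c hcC, hmemlift e heC,
              Or.inl ⟨?_, ?_⟩⟩
            · show a ⊔ μ = (b ⊔ μ) ⊓ (c ⊔ μ)
              rw [sup_comm b μ,
                ← K.hM μ hμC b hbC (c ⊔ μ) (K.pairSup hcC hμC) le_sup_right, ht,
                sup_comm μ a]
            · show e ⊔ μ = (b ⊔ μ) ⊔ (c ⊔ μ)
              rw [sup_sup_sup_comm, sup_idem, hD2]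
          · -- (c,e) lower
            have ht : e ⊓ (a ⊔ μ) = c := by
              have hin : c ≤ e ⊓ (a ⊔ μ) :=
                le_inf (hD1 ▸ inf_le_left) (le_trans (hD1 ▸ inf_le_right) le_sup_left)
              rcases hcov_ce.2.2.2 _ (K.pairInf heC (K.pairSup haC hμC)) hin inf_le_left
                with h' | h'
              · exact h'
              · exfalso
                have hele : e ≤ a ⊔ μ := inf_eq_left.mp h'
                by_cases hμa : μ ≤ a
                · have : a ⊔ μ = a := sup_eq_left.mpr hμa
                  rw [this] at hele
                  have : e ⊓ a = e := inf_eq_left.mpr hele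
                  rw [← hD1] at this
                  exact absurd this (ne_of_lt hcov_ce.2.2.1)
                · by_cases hμb : μ ≤ b
                  · exact (hncol_ab ⟨hμb, hμa⟩).elim
                  · have hz : μ ⊓ b = K.bot := by
                      rcases K.atom_dic hμC hbμ hmin hbC with h'' | h''
                      · exact h''
                      · exact absurd h'' hμb
                    have hab : (a ⊔ μ) ⊓ b = a := by
                      rw [← K.hM a haC μ hμC b hbC ih.1.2.2.1.le, hz,
                        sup_eq_left.mpr (K.botLe a haC)]
                    have hea : e ≤ a :=
                      hab ▸ le_inf hele (hD2 ▸ le_sup_left)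
                    have : e ⊓ a = e := inf_eq_left.mpr hea
                    rw [← hD1] at this
                    exact absurd this (ne_of_lt hcov_ce.2.2.1)
            refine ⟨hmemlift a haC, hmemlift b hbC, hmemlift c hcC, hmemlift e heC,
              Or.inr ⟨?_, ?_⟩⟩
            · show c ⊔ μ = (e ⊔ μ) ⊓ (a ⊔ μ)
              rw [sup_comm e μ,
                ← K.hM μ hμC e heC (a ⊔ μ) (K.pairSup haC hμC) le_sup_right, ht,
                sup_comm μ c]
            · show b ⊔ μ = (e ⊔ μ) ⊔ (a ⊔ μ)
              rw [sup_sup_sup_comm, sup_idem, hD2]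
  rcases (main (ψ, q) hproj).2 with h | ⟨_, h⟩
  · exact Or.inr h
  · left
    have e1 : ψ ⊔ μ = ψ := sup_eq_left.mpr hμψ
    have e2 : q ⊔ μ = q := sup_eq_left.mpr (le_trans hμψ hψ.2.2.1.le)
    rw [e1, e2] at h
    exact ⟨q, q, K.cmi_sub_down hμC hψ' hμψ', K.cmi_sub_down hμC hψ hμψ, h⟩

lemma iff3_3 {a b c : Prop} (h : a ↔ (b ↔ c)) : c ↔ (a ↔ b) := by tauto

/-- the `V` part: CMIs not above the atom `μ`. -/
def Vset (K : Fr A one) (μ η₀ : Setoid A) : Set (Setoid A) :=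
  {γ | PIP K.C γ η₀ ∧ ¬ μ ≤ γ}

/-- the `W` part: members of the class of `η₀` above the atom `μ`. -/
def Wset (K : Fr A one) (μ η₀ : Setoid A) : Set (Setoid A) :=
  {γ | PIP K.C γ η₀ ∧ μ ≤ γ}

section Master

variable [Finite A] {μ η₀ : Setoid A}

/-- every member of the class of `η₀` is CMI with cover `p₀ = η₀ ⊔ μ`. -/
lemma Ucov (hη₀cmi : IsCMI K.C η₀ (η₀ ⊔ μ))
    {γ : Setoid A} (h : PIP K.C γ η₀) : IsCMI K.C γ (η₀ ⊔ μ) := by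
  obtain ⟨q', p', h1, h2, h3⟩ := h
  have hp' : p' = η₀ ⊔ μ := cmi_cover_unique h2 hη₀cmi
  have hq' : q' = p' := K.hP γ η₀ q' p' h1 h2 h3
  rw [← hp', ← hq']
  exact h1

lemma atom_bot (hμC : μ ∈ K.C) (hbμ : K.bot < μ)
    (hmin : ∀ γ ∈ K.C, K.bot < γ → ¬ γ < μ)
    {γ : Setoid A} (hγ : γ ∈ K.C) (h : ¬ μ ≤ γ) : μ ⊓ γ = K.bot := by
  rcases K.atom_dic hμC hbμ hmin hγ with h' | h'
  · exact h'
  · exact absurd h' h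

/-- CMIs not above `μ` belong to the class of `η₀` (with cover `p₀`). -/
lemma Vmem (hμC : μ ∈ K.C) (hbμ : K.bot < μ)
    (hmin : ∀ γ ∈ K.C, K.bot < γ → ¬ γ < μ)
    (hη₀cmi : IsCMI K.C η₀ (η₀ ⊔ μ)) (hμη₀ : ¬ μ ≤ η₀)
    {γ q : Setoid A} (hγ : IsCMI K.C γ q) (h : ¬ μ ≤ γ) : PIP K.C γ η₀ := by
  have hz : μ ⊓ γ = K.bot := K.atom_bot hμC hbμ hmin hγ.1 h
  have hz₀ : μ ⊓ η₀ = K.bot := K.atom_bot hμC hbμ hmin hη₀cmi.1 hμη₀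

  have hcovb : K.Cov K.bot μ := by
    refine ⟨K.botC, hμC, hbμ, fun γ' hγ' h1 h2 => ?_⟩
    rcases eq_or_lt_of_le h1 with h3 | h3
    · exact Or.inl h3.symm
    · right
      rcases eq_or_lt_of_le h2 with h4 | h4
      · exact h4
      · exact absurd h4 (hmin γ' hγ' h3)
  have hcovγ : K.Cov γ (μ ⊔ γ) := K.cov_sup hμC hγ.1 hz.symm hcovb
  have hq : q = γ ⊔ μ := by
    rcases hcovγ.2.2.2 q hγ.2.1 hγ.2.2.1.le
      (le_trans (hγ.2.2.2 (γ ⊔ μ) (K.pairSup hγ.1 hμC)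
        (lt_of_le_of_ne le_sup_left fun hc => h (hc ▸ le_sup_right))) (le_of_eq (sup_comm γ μ)))
      with h' | h'
    · exact absurd h'.symm (ne_of_lt hγ.2.2.1)
    · rw [h', sup_comm]
  have c1 : Persp K.C (γ, q) (K.bot, μ) :=
    ⟨hγ.1, hγ.2.1, K.botC, hμC, Or.inr ⟨hz.symm, by rw [hq, sup_comm]⟩⟩
  have c2 : Persp K.C (K.bot, μ) (η₀, η₀ ⊔ μ) :=
    ⟨K.botC, hμC, hη₀cmi.1, hη₀cmi.2.1, Or.inl ⟨hz₀.symm, sup_comm η₀ μ⟩⟩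
  exact ⟨q, η₀ ⊔ μ, hγ, hη₀cmi, Relation.ReflTransGen.head c1
    (Relation.ReflTransGen.single c2)⟩

/-- third elements exist inside the class of `η₀`. -/
lemma Uthird (hη₀cmi : IsCMI K.C η₀ (η₀ ⊔ μ))
    {x y : Setoid A} (hx : PIP K.C x η₀) (hy : PIP K.C y η₀) (hne : x ≠ y) :
    ∃ δ, K.Third (η₀ ⊔ μ) x y δ := by
  have hxc := K.Ucov hη₀cmi hx
  have hyc := K.Ucov hη₀cmi hy
  have hxy : PIP K.C x y := pip_trans hx (pip_symm hy)
  obtain ⟨q1, q2, h1, h2, h3⟩ := hxy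
  have e1 : q1 = η₀ ⊔ μ := cmi_cover_unique h1 hxc
  have e2 : q2 = η₀ ⊔ μ := cmi_cover_unique h2 hyc
  rw [e1, e2] at h3
  exact K.third_exists hxc hyc h3 hne

/-- third elements within the class are again in the class. -/
lemma third_pip (hη₀cmi : IsCMI K.C η₀ (η₀ ⊔ μ))
    {x y δ : Setoid A} (hx : PIP K.C x η₀) (hy : PIP K.C y η₀) (hne : x ≠ y)
    (ht : K.Third (η₀ ⊔ μ) x y δ) : PIP K.C δ η₀ := by
  have hxc := K.Ucov hη₀cmi hx
  have hyc := K.Ucov hη₀cmi hy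
  have hinf := K.third_inf hxc hyc hne ht
  have hsup := K.third_sup hxc hyc hne ht
  have hδcmi := K.third_cmi hxc hyc hne ht
  have c1 : Persp K.C (δ, η₀ ⊔ μ) (x ⊓ y, y) :=
    ⟨ht.1, hxc.2.1, K.pairInf hxc.1 hyc.1, hyc.1,
      Or.inr ⟨by rw [inf_comm y δ, hinf.2], by rw [sup_comm y δ, hsup.2]⟩⟩
  have c2 : Persp K.C (x ⊓ y, y) (x, η₀ ⊔ μ) :=
    ⟨K.pairInf hxc.1 hyc.1, hyc.1, hxc.1, hxc.2.1,
      Or.inl ⟨inf_comm x y, (K.cmi_sup_eq hyc hxc (Ne.symm hne)).symm⟩⟩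
  exact pip_trans (⟨η₀ ⊔ μ, η₀ ⊔ μ, hδcmi, hxc,
    Relation.ReflTransGen.head c1 (Relation.ReflTransGen.single c2)⟩ : PIP K.C δ x) hx

/-- The key counting fact: `|V| = |W| + 1` via the Boolean group bijection. -/
lemma countVW (hμC : μ ∈ K.C) (hbμ : K.bot < μ)
    (hmin : ∀ γ ∈ K.C, K.bot < γ → ¬ γ < μ)
    (hη₀cmi : IsCMI K.C η₀ (η₀ ⊔ μ)) (hμη₀ : ¬ μ ≤ η₀) :
    (Vset K μ η₀).ncard = (Wset K μ η₀).ncard + 1 := by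
  classical
  have hμp₀ : μ ≤ η₀ ⊔ μ := le_sup_right
  have hη₀V : η₀ ∈ Vset K μ η₀ := ⟨pip_refl hη₀cmi, hμη₀⟩
  have hcovη₀ := K.cmi_cov hη₀cmi
  have hnothη : ¬ ∃ δ, K.Third (η₀ ⊔ μ) η₀ η₀ δ := by
    rintro ⟨δ, hδC, h1, h2, h3, h4⟩
    rw [inf_idem] at h1
    rcases hcovη₀.2.2.2 δ hδC h1.le h2.le with h | h
    · exact h3 h
    · exact (ne_of_lt h2) h
  set f : Setoid A → Setoid A :=
    fun v => if h : ∃ δ, K.Third (η₀ ⊔ μ) v η₀ δ then h.choose else η₀ ⊔ μ with hfdef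
  have hfη₀ : f η₀ = η₀ ⊔ μ := dif_neg hnothη
  have hfspec : ∀ v, v ∈ Vset K μ η₀ → v ≠ η₀ → K.Third (η₀ ⊔ μ) v η₀ (f v) := by
    intro v hv hvne
    have hex : ∃ δ, K.Third (η₀ ⊔ μ) v η₀ δ :=
      K.Uthird hη₀cmi hv.1 (pip_refl hη₀cmi) hvne
    show K.Third (η₀ ⊔ μ) v η₀ (if h : ∃ δ, K.Third (η₀ ⊔ μ) v η₀ δ
      then h.choose else η₀ ⊔ μ)
    rw [dif_pos hex]
    exact hex.choose_spec
  have hVcmi : ∀ v ∈ Vset K μ η₀, IsCMI K.C v (η₀ ⊔ μ) := fun v hv => K.Ucov hη₀cmi hv.1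
  have hWcmi : ∀ w ∈ Wset K μ η₀, IsCMI K.C w (η₀ ⊔ μ) := fun w hw => K.Ucov hη₀cmi hw.1
  have hμbotoc : ∀ v ∈ K.C, ¬ μ ≤ v → ∀ x : A, μ.r one x →
      (v.r one x ↔ K.bot.r one x) := by
    intro v hvC hμv x hμx
    have hz := K.atom_bot hμC hbμ hmin hvC hμv
    constructor
    · intro h
      have h2 : (μ ⊓ v).r one x := ⟨hμx, h⟩
      rw [hz] at h2
      exact h2
    · intro h
      exact r_of_le (K.botLe v hvC) h
  have hmaps : ∀ v ∈ Vset K μ η₀, f v ∈ insert (η₀ ⊔ μ) (Wset K μ η₀) := by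
    intro v hv
    by_cases hvne : v = η₀
    · rw [hvne, hfη₀]; exact Set.mem_insert _ _
    · have ht := hfspec v hv hvne
      have hvcmi := hVcmi v hv
      have hocδ := K.third_oc hvcmi hη₀cmi hvne ht
      right
      refine ⟨K.third_pip hη₀cmi hv.1 (pip_refl hη₀cmi) hvne ht, ?_⟩
      rw [← K.oc_le_iff hμC ht.1, hocδ]
      intro x hμx
      refine ⟨r_of_le hμp₀ hμx, ?_⟩
      rw [hμbotoc v hvcmi.1 hv.2 x hμx, hμbotoc η₀ hη₀cmi.1 hμη₀ x hμx]
  have hinj : Set.InjOn f (Vset K μ η₀) := by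
    intro u hu v hv heq
    by_cases hu0 : u = η₀ <;> by_cases hv0 : v = η₀
    · rw [hu0, hv0]
    · exfalso
      rw [hu0, hfη₀] at heq
      have := (hfspec v hv hv0).2.2.1
      rw [← heq] at this
      exact lt_irrefl _ this
    · exfalso
      rw [hv0, hfη₀] at heq
      have := (hfspec u hu hu0).2.2.1
      rw [heq] at this
      exact lt_irrefl _ this
    · have tu := hfspec u hu hu0
      have tv := hfspec v hv hv0
      have hucmi := hVcmi u hu
      have hvcmi := hVcmi v hv
      have hDeq : Dset one (η₀ ⊔ μ) u η₀ = Dset one (η₀ ⊔ μ) v η₀ := by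
        rw [← K.third_oc hucmi hη₀cmi hu0 tu, ← K.third_oc hvcmi hη₀cmi hv0 tv, heq]
      refine K.hR u hucmi.1 v hvcmi.1 fun x => ?_
      by_cases hpx : (η₀ ⊔ μ).r one x
      · have hx := Set.ext_iff.mp hDeq x
        have g1 : (u.r one x ↔ η₀.r one x) ↔ (v.r one x ↔ η₀.r one x) :=
          ⟨fun h => (hx.mp ⟨hpx, h⟩).2, fun h => (hx.mpr ⟨hpx, h⟩).2⟩
        exact iff3_4 g1
      · constructor
        · intro h; exact (hpx (r_of_le hucmi.2.2.1.le h)).elim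
        · intro h; exact (hpx (r_of_le hvcmi.2.2.1.le h)).elim
  have hsurj : Set.SurjOn f (Vset K μ η₀) (insert (η₀ ⊔ μ) (Wset K μ η₀)) := by
    intro w hw
    rcases hw with hw | hw
    · exact ⟨η₀, hη₀V, by rw [hfη₀, hw]⟩
    · have hwcmi := hWcmi w hw
      have hwη₀ : w ≠ η₀ := fun hc => hμη₀ (hc ▸ hw.2)
      have hex : ∃ δ, K.Third (η₀ ⊔ μ) η₀ w δ :=
        K.Uthird hη₀cmi (pip_refl hη₀cmi) hw.1 (Ne.symm hwη₀)
      obtain ⟨v, hv⟩ := hex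
      have hocv := K.third_oc hη₀cmi hwcmi (Ne.symm hwη₀) hv
      have hvcmi := K.third_cmi hη₀cmi hwcmi (Ne.symm hwη₀) hv
      have hμv : ¬ μ ≤ v := by
        intro hc
        obtain ⟨x₀, hμx₀, hbx₀⟩ := K.oc_ssub K.botC hμC hbμ
        have hx₀v : v.r one x₀ := r_of_le hc hμx₀
        have hx₀D := Set.ext_iff.mp hocv x₀ |>.mp hx₀v
        have hwx₀ : w.r one x₀ := r_of_le hw.2 hμx₀
        have hηx₀ : η₀.r one x₀ := hx₀D.2.mpr hwx₀
        exact hbx₀ ((hμbotoc η₀ hη₀cmi.1 hμη₀ x₀ hμx₀).mp hηx₀)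
      have hvV : v ∈ Vset K μ η₀ :=
        ⟨K.Vmem hμC hbμ hmin hη₀cmi hμη₀ hvcmi hμv, hμv⟩
      have hvne : v ≠ η₀ := hv.2.2.2.1
      refine ⟨v, hvV, ?_⟩
      have tv := hfspec v hvV hvne
      refine (K.oc_eq_iff tv.1 hwcmi.1).mpr ?_
      rw [K.third_oc hvcmi hη₀cmi hvne tv]
      refine Set.ext fun x => ?_
      by_cases hpx : (η₀ ⊔ μ).r one x
      · have hxv : v.r one x ↔ (η₀.r one x ↔ w.r one x) := by
          have hx := Set.ext_iff.mp hocv x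
          exact ⟨fun h => (hx.mp h).2, fun h => hx.mpr ⟨hpx, h⟩⟩
        constructor
        · rintro ⟨-, h⟩
          exact (iff3_3 hxv).mpr h
        · intro h
          exact ⟨hpx, (iff3_3 hxv).mp h⟩
      · constructor
        · rintro ⟨h, -⟩
          exact (hpx h).elim
        · intro h
          exact (hpx (r_of_le hwcmi.2.2.1.le h)).elim
  have hbij : Set.BijOn f (Vset K μ η₀) (insert (η₀ ⊔ μ) (Wset K μ η₀)) :=
    ⟨hmaps, hinj, hsurj⟩
  have hp₀W : (η₀ ⊔ μ) ∉ Wset K μ η₀ := by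
    intro hc
    exact lt_irrefl _ (hWcmi _ hc).2.2.1
  calc (Vset K μ η₀).ncard = (f '' Vset K μ η₀).ncard :=
        (Set.ncard_image_of_injOn hbij.injOn).symm
    _ = (insert (η₀ ⊔ μ) (Wset K μ η₀)).ncard := by rw [hbij.image_eq]
    _ = (Wset K μ η₀).ncard + 1 := Set.ncard_insert_of_notMem hp₀W (Set.toFinite _)

end Master

end Fr

/-- Master induction: the product formula for the length. -/
theorem master {one : A} [Finite A] :
    ∀ (d : ℕ) (K : Fr A one),
    (∃ c : Fin (d + 1) → Setoid A, (∀ i, c i ∈ K.C) ∧ StrictMono c) →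
    (∀ c : Fin (d + 2) → Setoid A, (∀ i, c i ∈ K.C) → ¬ StrictMono c) →
    ∃ F : Finset (Set (Setoid A)), ↑F = clSet K.C ∧
      2 ^ d = ∏ U ∈ F, (U.ncard + 1) := by
  classical
  intro d
  induction d with
  | zero =>
      intro K hch hmax
      have hempty : clSet K.C = ∅ := by
        ext U
        simp only [Set.mem_empty_iff_false, iff_false]
        rintro ⟨η, p, hcmi, -⟩
        refine hmax (fun i => if (i : ℕ) = 0 then η else p) (fun i => ?_) ?_
        · by_cases h : (i : ℕ) = 0 <;> simp [h, hcmi.1, hcmi.2.1]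
        · intro i j hij
          have hij' : (i : ℕ) < (j : ℕ) := hij
          have h2 : (i : ℕ) = 0 ∧ (j : ℕ) = 1 := by omega
          simp only [h2.1, h2.2, if_pos, if_neg, one_ne_zero]
          exact hcmi.2.2.1
      exact ⟨∅, by simp [hempty], by simp⟩
  | succ d ih =>
      intro K hch hmax
      obtain ⟨c, hcm, hcs⟩ := hch
      have h01 : c ⟨0, by omega⟩ < c ⟨1, by omega⟩ := hcs (by simp [Fin.mk_lt_mk])
      have hbc1 : K.bot < c ⟨1, by omega⟩ :=
        lt_of_le_of_lt (K.botLe _ (hcm ⟨0, by omega⟩)) h01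
      obtain ⟨μ, hμC, hbμ, hmin⟩ := K.exists_min_gt (hcm ⟨1, by omega⟩) hbc1
      set K2 := K.subCtx μ hμC with hK2def
      obtain ⟨F₂, hF₂, hprod₂⟩ := ih K2
        (K.chain_to_sub hμC hbμ hmin ⟨c, hcm, hcs⟩ hmax)
        (K.max_to_sub hμC hbμ hmax)
      obtain ⟨η₀, hη₀C, -, hμη₀, hη₀cmi, -⟩ :=
        K.exists_max_not_ge K.botC hμC (not_le_of_gt hbμ)
      set U₀ : Set (Setoid A) := {x | PIP K.C x η₀} with hU₀def
      set W := Fr.Wset K μ η₀ with hWdef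
      set V := Fr.Vset K μ η₀ with hVdef
      have hVW : V.ncard = W.ncard + 1 := by
        rw [hVdef, hWdef]
        exact K.countVW hμC hbμ hmin hη₀cmi hμη₀
      have hU₀VW : U₀ = V ∪ W := by
        ext x
        constructor
        · intro hx
          by_cases h : μ ≤ x
          · exact Or.inr ⟨hx, h⟩
          · exact Or.inl ⟨hx, h⟩
        · rintro (hx | hx) <;> exact hx.1
      have hU₀card : U₀.ncard = V.ncard + W.ncard := by
        rw [hU₀VW]
        exact Set.ncard_union_eq (Set.disjoint_left.mpr fun x hx hx' => hx.2 hx'.2)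
          (Set.toFinite _) (Set.toFinite _)
      have hU₀mem : U₀ ∈ clSet K.C := ⟨η₀, η₀ ⊔ μ, hη₀cmi, rfl⟩
      have htrans : ∀ ψ q, IsCMI K.C ψ q → μ ≤ ψ → ¬ PIP K.C ψ η₀ →
          {x | PIP K.C x ψ} = {x | PIP K2.C x ψ} := by
        intro ψ q hψ hμψ hnp
        ext x
        constructor
        · intro hx
          have hxpip : PIP K.C x ψ := hx
          obtain ⟨qx, qψ, h1, h2, h3⟩ := hx
          have hqq : qx = qψ := K.hP x ψ qx qψ h1 h2 h3
          have hμx : μ ≤ x := by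
            by_contra hc
            exact hnp (pip_trans (pip_symm hxpip)
              (K.Vmem hμC hbμ hmin hη₀cmi hμη₀ h1 hc))
          have hqψ' : IsCMI K.C ψ qx := by rw [hqq]; exact h2
          have h3' : Projective K.C (x, qx) (ψ, qx) := by
            have h3'' := h3
            rw [← hqq] at h3''
            exact h3''
          rcases K.lift_chain hμC hbμ hmin hη₀cmi hμη₀ rfl h1 hqψ' hμx hμψ h3' with h | h
          · exact h
          · exact absurd (pip_trans (pip_symm hxpip) h) hnp
        · rintro ⟨px, qx, h1, h2, h3⟩
          exact ⟨px, qx, K.cmi_sub_up hμC h1, K.cmi_sub_up hμC h2,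
            proj_mono (fun y hy => hy.1) h3⟩
      have hWclass : ∀ ψw ∈ W, W = {x | PIP K2.C x ψw} := by
        intro ψw hψw
        have hψwcmi := K.Ucov hη₀cmi hψw.1
        ext ψ'
        constructor
        · intro hψ'
          by_cases he : ψ' = ψw
          · rw [he]
            exact pip_refl (K.cmi_sub_down hμC hψwcmi hψw.2)
          · obtain ⟨δ, hδ⟩ := K.Uthird hη₀cmi hψ'.1 hψw.1 he
            have hc1 := K.Ucov hη₀cmi hψ'.1
            have hinf := K.third_inf hc1 hψwcmi he hδ
            have hsup := K.third_sup hc1 hψwcmi he hδ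
            have hμδ : μ ≤ δ := by
              rw [← K.oc_le_iff hμC hδ.1, K.third_oc hc1 hψwcmi he hδ]
              intro x hμx
              exact ⟨r_of_le le_sup_right hμx,
                iff_of_true (r_of_le hψ'.2 hμx) (r_of_le hψw.2 hμx)⟩
            have hp₀2 : (η₀ ⊔ μ) ∈ K2.C := ⟨hη₀cmi.2.1, le_sup_right⟩
            have hθ2 : ψ' ⊓ ψw ∈ K2.C :=
              ⟨K.pairInf hc1.1 hψwcmi.1, le_inf hψ'.2 hψw.2⟩
            have persp1 : Persp K2.C (ψ', η₀ ⊔ μ) (ψ' ⊓ ψw, δ) :=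
              ⟨⟨hc1.1, hψ'.2⟩, hp₀2, hθ2, ⟨hδ.1, hμδ⟩,
                Or.inr ⟨hinf.1.symm, hsup.1.symm⟩⟩
            have persp2 : Persp K2.C (ψ' ⊓ ψw, δ) (ψw, η₀ ⊔ μ) :=
              ⟨hθ2, ⟨hδ.1, hμδ⟩, ⟨hψwcmi.1, hψw.2⟩, hp₀2,
                Or.inl ⟨hinf.2.symm, hsup.2.symm⟩⟩
            exact ⟨η₀ ⊔ μ, η₀ ⊔ μ, K.cmi_sub_down hμC hc1 hψ'.2,
              K.cmi_sub_down hμC hψwcmi hψw.2,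
              Relation.ReflTransGen.head persp1 (Relation.ReflTransGen.single persp2)⟩
        · intro hx
          have hxpip : PIP K2.C ψ' ψw := hx
          obtain ⟨px, qx, h1, h2, h3⟩ := hx
          have hK : PIP K.C ψ' ψw := ⟨px, qx, K.cmi_sub_up hμC h1, K.cmi_sub_up hμC h2,
            proj_mono (fun y hy => hy.1) h3⟩
          exact ⟨pip_trans hK hψw.1, h1.1.2⟩
      have hset : clSet K.C = insert U₀ (clSet K2.C \ {W}) := by
        ext U
        constructor
        · rintro ⟨η, q, hη, rfl⟩
          rw [Set.mem_insert_iff]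
          by_cases hp : PIP K.C η η₀
          · exact Or.inl (class_eq hp)
          · right
            have hμη : μ ≤ η := by
              by_contra hc
              exact hp (K.Vmem hμC hbμ hmin hη₀cmi hμη₀ hη hc)
            have he := htrans η q hη hμη hp
            refine ⟨?_, ?_⟩
            · rw [he]
              exact ⟨η, q, K.cmi_sub_down hμC hη hμη, rfl⟩
            · intro hc
              rw [Set.mem_singleton_iff] at hc
              have hηU : η ∈ {x | PIP K.C x η} := pip_refl hη
              rw [hc] at hηU
              exact hp hηU.1
        · intro hU
          rcases Set.mem_insert_iff.mp hU with h | ⟨hmem2, hnW⟩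
          · rw [h]; exact hU₀mem
          · obtain ⟨ψ, q, hψ2, rfl⟩ := hmem2
            have hψK := K.cmi_sub_up hμC hψ2
            have hμψ : μ ≤ ψ := hψ2.1.2
            by_cases hp : PIP K.C ψ η₀
            · exfalso
              exact hnW (Set.mem_singleton_iff.mpr (hWclass ψ ⟨hp, hμψ⟩).symm)
            · rw [← htrans ψ q hψK hμψ hp]
              exact ⟨ψ, q, hψK, rfl⟩
      have hU₀2 : U₀ ∉ clSet K2.C := by
        rintro ⟨ψ, q, hcmi2, heq⟩
        have hη₀U : η₀ ∈ U₀ := pip_refl hη₀cmi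
        rw [heq] at hη₀U
        obtain ⟨px, qx, h1, -, -⟩ := hη₀U
        exact hμη₀ h1.1.2
      have hU₀notin : U₀ ∉ F₂.erase W := by
        intro hc
        have := Finset.mem_of_mem_erase hc
        rw [← Finset.mem_coe, hF₂] at this
        exact hU₀2 this
      refine ⟨insert U₀ (F₂.erase W), ?_, ?_⟩
      · rw [Finset.coe_insert, Finset.coe_erase, hF₂, ← hset]
      · rw [Finset.prod_insert hU₀notin]
        by_cases hW : W.Nonempty
        · obtain ⟨ψw, hψw⟩ := hW
          have hWF₂ : W ∈ F₂ := by
            rw [← Finset.mem_coe, hF₂]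
            exact ⟨ψw, η₀ ⊔ μ, K.cmi_sub_down hμC (K.Ucov hη₀cmi hψw.1) hψw.2,
              hWclass ψw hψw⟩
          have hsplit := Finset.mul_prod_erase F₂ (fun U => U.ncard + 1) hWF₂
          calc 2 ^ (d + 1) = 2 * 2 ^ d := by ring
            _ = 2 * ((W.ncard + 1) * ∏ U ∈ F₂.erase W, (U.ncard + 1)) := by
                rw [hsplit, ← hprod₂]
            _ = (U₀.ncard + 1) * ∏ U ∈ F₂.erase W, (U.ncard + 1) := by
                rw [hU₀card, hVW]
                ring
        · have hWempty : W = ∅ := Set.not_nonempty_iff_eq_empty.mp hW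
          have hWnotin : W ∉ F₂ := by
            intro hc
            rw [← Finset.mem_coe, hF₂] at hc
            obtain ⟨ψ, q, hcmi2, heq⟩ := hc
            have : ψ ∈ W := by
              rw [heq]
              exact pip_refl hcmi2
            rw [hWempty] at this
            exact this
          rw [Finset.erase_eq_of_notMem hWnotin]
          have hW0 : W.ncard = 0 := by
            rw [hWempty]
            simp
          have hU1 : U₀.ncard = 1 := by omega
          rw [hU1, ← hprod₂]
          ring
end Frg

/-- Theorem 16: for a finite strongly Fregean algebra,
`2 ^ δ(Con A) = ∏_{U ∈ Cm/∼} (|U| + 1)`, where `δ` is the length of the congruence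
lattice and each `|U| + 1 = |Ū|` is the order of the Boolean group `(Ū, •)`. -/
theorem stmt17 [Finite A] (one : A) (C : Set (Setoid A))
    (hInf : ∀ S ⊆ C, sInf S ∈ C) (hSup : ∀ S ⊆ C, sSup S ∈ C)
    (hDir : ∀ D ⊆ C, D.Nonempty → DirectedOn (· ≤ ·) D →
      ∀ x y : A, (sSup D).r x y ↔ ∃ s ∈ D, s.r x y)
    (hM : ∀ x ∈ C, ∀ y ∈ C, ∀ z ∈ C, x ≤ z → x ⊔ y ⊓ z = (x ⊔ y) ⊓ z)
    (hO : ∀ α ∈ C, ∀ a b : A, α ⊔ theta C one a = α ⊔ theta C one b ↔ α.r a b)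
    (hR : ∀ α ∈ C, ∀ β ∈ C, (∀ x : A, α.r one x ↔ β.r one x) → α = β)
    (hP : ∀ φ ψ p q : Setoid A, IsCMI C φ p → IsCMI C ψ q →
      Projective C (φ, p) (ψ, q) → p = q)
    (d : ℕ)
    (hchain : ∃ c : Fin (d + 1) → Setoid A, (∀ i, c i ∈ C) ∧ StrictMono c)
    (hmax : ∀ c : Fin (d + 2) → Setoid A, (∀ i, c i ∈ C) → ¬ StrictMono c) :
    ∃ F : Finset (Set (Setoid A)),
      (↑F = {U : Set (Setoid A) | ∃ η p, IsCMI C η p ∧ U = {ψ | PIP C ψ η}}) ∧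
      2 ^ d = ∏ U ∈ F, (U.ncard + 1) := by
  have hbot : (⊥ : Setoid A) ∈ C := by
    have := hSup ∅ (Set.empty_subset C)
    rwa [sSup_empty] at this
  have htop : (⊤ : Setoid A) ∈ C := by
    have := hInf ∅ (Set.empty_subset C)
    rwa [sInf_empty] at this
  set K : Frg.Fr A one :=
    { C := C
      bot := ⊥
      botC := hbot
      botLe := fun γ _ => bot_le
      topC := htop
      infC := fun S hS _ => hInf S hS
      supC := fun S hS _ => hSup S hS
      hM := hM
      hO := hO
      hR := hR
      hP := hP } with hKdef
  obtain ⟨F, hF, hprod⟩ := Frg.master d K hchain hmax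
  exact ⟨F, hF, hprod⟩
end

section
/- Assume condition (O), and suppose there is a binary operation e : A × A → A which is a principal congruence term, i.e., Θ(a,b) = Θ(1, e(a,b)) for all a, b ∈ A. Then M(e(a,b)) = M(a) ↔ M(b) for all a, b ∈ A, that is, {μ ∈ Cm : (1, e(a,b)) ∈ μ} = Cm \ ((M(a) Δ M(b))↓). (This is Corollary 23 of the paper: the map M preserves the equivalence operation.) -/
variable {A : Type*}

/-- Corollary 23: under (O), if `e` is a principal congruence term
(`Θ(a,b) = Θ(1, e(a,b))`), then `M(e(a,b)) = M(a) ↔ M(b)`, i.e.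
`{μ ∈ Cm : (1, e(a,b)) ∈ μ} = Cm \ ((M(a) Δ M(b))↓)`. -/
theorem stmt18 (one : A) (C : Set (Setoid A))
    (hInf : ∀ S ⊆ C, sInf S ∈ C) (hSup : ∀ S ⊆ C, sSup S ∈ C)
    (hDir : ∀ D ⊆ C, D.Nonempty → DirectedOn (· ≤ ·) D →
      ∀ x y : A, (sSup D).r x y ↔ ∃ s ∈ D, s.r x y)
    (hO : ∀ α ∈ C, ∀ a b : A, α ⊔ theta C one a = α ⊔ theta C one b ↔ α.r a b)
    (e : A → A → A) (he : ∀ a b : A, theta C a b = theta C one (e a b)) :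
    ∀ a b : A, MsetA C one (e a b) = EqOpU C (MsetA C one a) (MsetA C one b) := by
  intro a b
  -- basic facts about theta
  have thetaC : ∀ x y : A, theta C x y ∈ C := fun x y => hInf _ fun s hs => hs.1
  have threl : ∀ x y : A, (theta C x y).r x y := fun x y s hs => hs.2
  have rel_iff : ∀ s ∈ C, ∀ x y : A, (theta C x y ≤ s ↔ s.r x y) := by
    intro s hs x y
    constructor
    · intro h; exact h (threl x y)
    · intro h; exact sInf_le ⟨hs, h⟩
  have supC : ∀ s ∈ C, ∀ t ∈ C, s ⊔ t ∈ C := by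
    intro s hs t ht
    have : s ⊔ t = sSup {s, t} := sSup_pair.symm
    rw [this]
    exact hSup _ (by intro z hz; rcases hz with rfl | rfl <;> assumption)
  have mono : ∀ {s t : Setoid A}, s ≤ t → ∀ {x y : A}, s.r x y → t.r x y :=
    fun h _ _ hxy => h hxy
  have key : ∀ μ ∈ C, ((μ : Setoid A).r one (e a b) ↔ μ.r a b) := by
    intro μ hμ
    constructor
    · intro h
      exact (rel_iff μ hμ a b).mp (by rw [he]; exact (rel_iff μ hμ one (e a b)).mpr h)
    · intro h
      exact (rel_iff μ hμ one (e a b)).mp (by rw [← he]; exact (rel_iff μ hμ a b).mpr h)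
  ext μ
  simp only [MsetA, EqOpU, DownCl, Set.mem_setOf_eq, Set.mem_diff, Set.mem_union]
  constructor
  · rintro ⟨hcm, hrel⟩
    refine ⟨hcm, ?_⟩
    rintro ⟨-, φ, hφmem, hle⟩
    have hφCm : φ ∈ CmSet C := by
      rcases hφmem with ⟨⟨h1, _⟩, _⟩ | ⟨⟨h1, _⟩, _⟩ <;> exact h1
    obtain ⟨p, hp⟩ := id hφCm
    have hφC : φ ∈ C := hp.1
    obtain ⟨q, hq⟩ := id hcm
    have hμC : μ ∈ C := hq.1
    have hab : μ.r a b := (key μ hμC).mp hrel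
    have hφab : φ.r a b := hle hab
    have hiff : φ.r one a ↔ φ.r one b :=
      ⟨fun h => φ.trans' h hφab, fun h => φ.trans' h (φ.symm' hφab)⟩
    rcases hφmem with ⟨⟨_, h1a⟩, hnb⟩ | ⟨⟨_, h1b⟩, hna⟩
    · exact hnb ⟨hφCm, hiff.mp h1a⟩
    · exact hna ⟨hφCm, hiff.mpr h1b⟩
  · rintro ⟨hcm, hnot⟩
    refine ⟨hcm, ?_⟩
    by_contra hrel
    obtain ⟨q, hq⟩ := id hcm
    have hμC : μ ∈ C := hq.1
    -- Zorn: extend μ to a maximal member of C not containing (1, e a b)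
    set P : Set (Setoid A) := {s | s ∈ C ∧ μ ≤ s ∧ ¬ s.r one (e a b)} with hP
    have hμP : μ ∈ P := ⟨hμC, le_refl μ, hrel⟩
    obtain ⟨m, hμm, hmax⟩ := zorn_le_nonempty₀ P (by
      intro c hcP hchain y hyc
      refine ⟨sSup c, ⟨hSup c (fun z hz => (hcP hz).1), ?_, ?_⟩, fun z hz => le_sSup hz⟩
      · exact le_trans (hcP hyc).2.1 (le_sSup hyc)
      · intro hbad
        rw [hDir c (fun z hz => (hcP hz).1) ⟨y, hyc⟩ hchain.directedOn] at hbad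
        obtain ⟨s, hsc, hs⟩ := hbad
        exact (hcP hsc).2.2 hs) μ hμP
    obtain ⟨hmC, hμlem, hmrel⟩ := hmax.prop
    -- m is completely meet irreducible with cover m ⊔ θ(1, e a b) = m ⊔ θ(a,b)
    set p : Setoid A := m ⊔ theta C one (e a b) with hpdef
    have hpC : p ∈ C := supC m hmC _ (thetaC one (e a b))
    have hprel : p.r one (e a b) := mono le_sup_right (threl one (e a b))
    have hmp : m < p := lt_of_le_of_ne le_sup_left (by
      intro h; exact hmrel (h ▸ hprel))
    have hcov : ∀ β ∈ C, m < β → p ≤ β := by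
      intro β hβC hmβ
      have hβrel : β.r one (e a b) := by
        by_contra hβbad
        have : β ∈ P := ⟨hβC, le_trans hμlem hmβ.le, hβbad⟩
        exact absurd (hmax.le_of_ge this hmβ.le) (not_le_of_gt hmβ)
      exact sup_le hmβ.le ((rel_iff β hβC one (e a b)).mpr hβrel)
    have hmCm : m ∈ CmSet C := ⟨p, hmC, hpC, hmp, hcov⟩
    have hmab : ¬ m.r a b := fun h => hmrel ((key m hmC).mpr h)
    -- p contains (a,b)
    have hpab : p.r a b := by
      have : theta C a b ≤ p := by rw [he]; exact le_sup_right
      exact this (threl a b)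
    -- condition (O): m ⊔ θ(1,a) ≠ m ⊔ θ(1,b)
    have hne : m ⊔ theta C one a ≠ m ⊔ theta C one b := fun h => hmab ((hO m hmC a b).mp h)
    have hαC : ∀ x : A, m ⊔ theta C one x ∈ C := fun x => supC m hmC _ (thetaC one x)
    have hlt : ∀ x : A, ¬ theta C one x ≤ m → m < m ⊔ theta C one x := by
      intro x hx
      refine lt_of_le_of_ne le_sup_left (fun h => hx ?_)
      rw [h]; exact le_sup_right
    -- not both θ(1,a) ≤ m and θ(1,b) ≤ m, and not both fail
    by_cases h1a : theta C one a ≤ m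
    · by_cases h1b : theta C one b ≤ m
      · exact hne (by rw [sup_eq_left.mpr h1a, sup_eq_left.mpr h1b])
      · -- m ∈ M(a) \ M(b)
        refine hnot ⟨hcm, m, Or.inl ⟨⟨hmCm, h1a (threl one a)⟩, ?_⟩, hμlem⟩
        rintro ⟨-, hmb⟩
        exact h1b ((rel_iff m hmC one b).mpr hmb)
    · by_cases h1b : theta C one b ≤ m
      · -- m ∈ M(b) \ M(a)
        refine hnot ⟨hcm, m, Or.inr ⟨⟨hmCm, h1b (threl one b)⟩, ?_⟩, hμlem⟩
        rintro ⟨-, hma⟩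
        exact h1a ((rel_iff m hmC one a).mpr hma)
      · -- both strictly above m: both contain p, hence (a,b), hence equal — contradiction
        have ha : p ≤ m ⊔ theta C one a := hcov _ (hαC a) (hlt a h1a)
        have hb : p ≤ m ⊔ theta C one b := hcov _ (hαC b) (hlt b h1b)
        apply hne
        have hab1 : (m ⊔ theta C one a).r a b := ha hpab
        have hab2 : (m ⊔ theta C one b).r a b := hb hpab
        have h1a' : (m ⊔ theta C one a).r one a := mono le_sup_right (threl one a)
        have h1b' : (m ⊔ theta C one b).r one b := mono le_sup_right (threl one b)
        apply le_antisymm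
        · refine sup_le le_sup_left ((rel_iff _ (hαC b) one a).mpr ?_)
          exact (m ⊔ theta C one b).trans' h1b' ((m ⊔ theta C one b).symm' hab2)
        · refine sup_le le_sup_left ((rel_iff _ (hαC a) one b).mpr ?_)
          exact (m ⊔ theta C one a).trans' h1a' hab1
end
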